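/- arXiv:1511.07396 — 4 statements merged into one kernel-verified Lean document; each statement's English description precedes it below -/
import Mathlib

section
/- Assume a, b, c, d > 0, τ̄ = max(τ₁,τ₂) ≥ 0, and let β ∈ (0,1) with β ≠ 1/2 and q_β = 4ab(1+β)² + 4(β²−1)cd > 0. Then there exist an integer N ≥ 1, reals γ₁, …, γ_N > 0 and open convex cones C₁, …, C_N ⊆ (0,∞)² such that C₁ ∪ … ∪ C_N = (0,∞)² and, for each i = 1,…,N, ψ_{β,γᵢ} is τ̄ non-expansive on F_{β,γᵢ}(Cᵢ), i.e. (ψ_{β,γᵢ}(y) − ψ_{β,γᵢ}(y'))·(y − y') ≤ τ̄ ‖y − y'‖₂² for all y, y' ∈ F_{β,γᵢ}(Cᵢ). -/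
open Real Set

/-- The competitive Lotka–Volterra push-forward vector field
`ψ_{β,γ} = (J_{F_{β,γ}} b) ∘ F_{β,γ}⁻¹` on `(0,∞)²`. -/
noncomputable def psiLV (τ₁ τ₂ a b c d β γ : ℝ) (y : ℝ × ℝ) : ℝ × ℝ :=
  (β * y.1 * (τ₁ - a * y.1 ^ (1 / β) - c * γ ^ (-(1 / β)) * y.2 ^ (1 / β)),
   β * y.2 * (τ₂ - b * γ ^ (-(1 / β)) * y.2 ^ (1 / β) - d * y.1 ^ (1 / β)))

/-- The transformation `F_{β,γ}(x₁,x₂) = (x₁^β, γ x₂^β)`. -/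
noncomputable def FLV (β γ : ℝ) (x : ℝ × ℝ) : ℝ × ℝ := (x.1 ^ β, γ * x.2 ^ β)

/-- Euclidean scalar product on `ℝ²`. -/
def dot2 (u v : ℝ × ℝ) : ℝ := u.1 * v.1 + u.2 * v.2

/-- Euclidean norm on `ℝ²`. -/
noncomputable def nrm2 (u : ℝ × ℝ) : ℝ := Real.sqrt (u.1 ^ 2 + u.2 ^ 2)

/-- nonnegativity of a quadratic form with nonnegative discriminant condition -/
lemma quadform_nonneg (X W E u v : ℝ) (hX : 0 ≤ X) (hW : 0 ≤ W) (hE : E ^ 2 ≤ 4 * X * W) :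
    0 ≤ X * u ^ 2 + E * (u * v) + W * v ^ 2 := by
  rcases eq_or_lt_of_le hX with hX0 | hX0
  · have hE2 : E ^ 2 ≤ 0 := by rw [← hX0] at hE; linarith
    have hE0 : E = 0 := by nlinarith [sq_nonneg E]
    rw [← hX0, hE0]
    have : 0 ≤ W * v ^ 2 := by positivity
    nlinarith
  · nlinarith [sq_nonneg (2 * X * u + E * v), sq_nonneg v, mul_pos hX0 hX0]

set_option maxHeartbeats 1000000 in
lemma core_mono (τ₁ τ₂ a b c d β γ : ℝ) (ha : 0 ≤ a) (hb : 0 ≤ b) (hc : 0 ≤ c) (hd : 0 ≤ d)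
    (hτ : 0 ≤ max τ₁ τ₂) (hβ0 : 0 < β) (hβ1 : β < 1) (hγ : 0 < γ)
    (U : Set (ℝ × ℝ)) (hUconv : Convex ℝ U) (hUpos : U ⊆ {y : ℝ × ℝ | 0 < y.1 ∧ 0 < y.2})
    (hdisc : ∀ z ∈ U,
      (c * γ ^ (-(1/β)) * z.1 * z.2 ^ (1/β - 1) + d * z.2 * z.1 ^ (1/β - 1)) ^ 2
        ≤ 4 * (a * (1 + β) * z.1 ^ (1/β) + β * c * γ ^ (-(1/β)) * z.2 ^ (1/β))
            * (b * (1 + β) * γ ^ (-(1/β)) * z.2 ^ (1/β) + β * d * z.1 ^ (1/β))) :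
    ∀ y ∈ U, ∀ y' ∈ U,
      dot2 (psiLV τ₁ τ₂ a b c d β γ y - psiLV τ₁ τ₂ a b c d β γ y') (y - y')
        ≤ max τ₁ τ₂ * nrm2 (y - y') ^ 2 := by
  intro y hy y' hy'
  set p : ℝ := 1 / β with hp_def
  have hp1 : (1:ℝ) ≤ p := by rw [hp_def, le_div_iff₀ hβ0]; linarith
  have hβp : β * p = 1 := by rw [hp_def]; field_simp
  set g : ℝ := γ ^ (-(1/β)) with hg_def
  set Δ₁ : ℝ := y.1 - y'.1 with hΔ₁
  set Δ₂ : ℝ := y.2 - y'.2 with hΔ₂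
  set τ : ℝ := max τ₁ τ₂ with hτdef
  set z1 : ℝ → ℝ := fun t => y'.1 + t * Δ₁ with hz1def
  set z2 : ℝ → ℝ := fun t => y'.2 + t * Δ₂ with hz2def
  have hmem : ∀ t ∈ Icc (0:ℝ) 1, (z1 t, z2 t) ∈ U := by
    intro t ht
    have h := hUconv hy' hy (by linarith [ht.2] : (0:ℝ) ≤ 1 - t) ht.1 (by ring)
    convert h using 1
    simp only [Prod.smul_mk, smul_eq_mul, Prod.ext_iff, Prod.fst_add, Prod.snd_add,
      Prod.smul_fst, Prod.smul_snd]
    constructor <;> simp [hz1def, hz2def, hΔ₁, hΔ₂, smul_eq_mul] <;> ring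
  set φ : ℝ → ℝ := fun t =>
    β * z1 t * (τ₁ - a * z1 t ^ p - c * g * z2 t ^ p) * Δ₁
    + β * z2 t * (τ₂ - b * g * z2 t ^ p - d * z1 t ^ p) * Δ₂
    - t * τ * (Δ₁ ^ 2 + Δ₂ ^ 2) with hφdef
  set D : ℝ → ℝ := fun t =>
    β * τ₁ * Δ₁ ^ 2 + β * τ₂ * Δ₂ ^ 2 - τ * (Δ₁ ^ 2 + Δ₂ ^ 2)
    - ((a * (1 + β) * z1 t ^ p + β * c * g * z2 t ^ p) * Δ₁ ^ 2
       + (c * g * z1 t * z2 t ^ (p - 1) + d * z2 t * z1 t ^ (p - 1)) * (Δ₁ * Δ₂)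
       + (b * (1 + β) * g * z2 t ^ p + β * d * z1 t ^ p) * Δ₂ ^ 2) with hDdef
  have hderiv : ∀ t ∈ Icc (0:ℝ) 1, HasDerivAt φ (D t) t := by
    intro t ht
    have hz1pos : 0 < z1 t := (hUpos (hmem t ht)).1
    have hz2pos : 0 < z2 t := (hUpos (hmem t ht)).2
    have h1 : HasDerivAt z1 Δ₁ t := by
      have := ((hasDerivAt_id t).mul_const Δ₁).const_add y'.1
      rw [one_mul] at this; exact this
    have h2 : HasDerivAt z2 Δ₂ t := by
      have := ((hasDerivAt_id t).mul_const Δ₂).const_add y'.2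
      rw [one_mul] at this; exact this
    have h1p : HasDerivAt (fun t => z1 t ^ p) (Δ₁ * p * z1 t ^ (p - 1)) t :=
      h1.rpow_const (Or.inr hp1)
    have h2p : HasDerivAt (fun t => z2 t ^ p) (Δ₂ * p * z2 t ^ (p - 1)) t :=
      h2.rpow_const (Or.inr hp1)
    have e1 : z1 t ^ p = z1 t * z1 t ^ (p - 1) := by
      nth_rewrite 1 [show p = 1 + (p - 1) by ring]
      rw [Real.rpow_add hz1pos, Real.rpow_one]
    have e2 : z2 t ^ p = z2 t * z2 t ^ (p - 1) := by
      nth_rewrite 1 [show p = 1 + (p - 1) by ring]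
      rw [Real.rpow_add hz2pos, Real.rpow_one]
    have hA1 : HasDerivAt (fun t => τ₁ - a * z1 t ^ p - c * g * z2 t ^ p)
        (0 - a * (Δ₁ * p * z1 t ^ (p - 1)) - c * g * (Δ₂ * p * z2 t ^ (p - 1))) t :=
      ((hasDerivAt_const t τ₁).sub (h1p.const_mul a)).sub (h2p.const_mul (c * g))
    have hA2 : HasDerivAt (fun t => τ₂ - b * g * z2 t ^ p - d * z1 t ^ p)
        (0 - b * g * (Δ₂ * p * z2 t ^ (p - 1)) - d * (Δ₁ * p * z1 t ^ (p - 1))) t :=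
      ((hasDerivAt_const t τ₂).sub (h2p.const_mul (b * g))).sub (h1p.const_mul d)
    have hB1 : HasDerivAt (fun t => β * z1 t) (β * Δ₁) t := h1.const_mul β
    have hB2 : HasDerivAt (fun t => β * z2 t) (β * Δ₂) t := h2.const_mul β
    have hP1 := (hB1.mul hA1).mul_const Δ₁
    have hP2 := (hB2.mul hA2).mul_const Δ₂
    have hL : HasDerivAt (fun t : ℝ => t * τ * (Δ₁ ^ 2 + Δ₂ ^ 2))
        (1 * τ * (Δ₁ ^ 2 + Δ₂ ^ 2)) t :=
      ((hasDerivAt_id t).mul_const τ).mul_const (Δ₁ ^ 2 + Δ₂ ^ 2)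
    have htot := (hP1.add hP2).sub hL
    have : HasDerivAt φ (D t) t := by
      refine htot.congr_deriv ?_
      symm
      simp only [hDdef]
      rw [e1, e2]
      linear_combination (a * z1 t * z1 t ^ (p-1) * Δ₁^2
        + c * g * z1 t * z2 t ^ (p-1) * (Δ₁*Δ₂)
        + d * z2 t * z1 t ^ (p-1) * (Δ₁*Δ₂)
        + b * g * z2 t * z2 t ^ (p-1) * Δ₂^2) * hβp
    exact this
  have hDle : ∀ t ∈ Icc (0:ℝ) 1, D t ≤ 0 := by
    intro t ht
    have hz : (z1 t, z2 t) ∈ U := hmem t ht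
    have hz1pos : 0 < z1 t := (hUpos hz).1
    have hz2pos : 0 < z2 t := (hUpos hz).2
    have hgpos : 0 < g := Real.rpow_pos_of_pos hγ _
    have hz1p : (0:ℝ) < z1 t ^ p := Real.rpow_pos_of_pos hz1pos p
    have hz2p : (0:ℝ) < z2 t ^ p := Real.rpow_pos_of_pos hz2pos p
    have hd2 := hdisc (z1 t, z2 t) hz
    simp only at hd2
    have hX : 0 ≤ a * (1 + β) * z1 t ^ p + β * c * g * z2 t ^ p := by
      have h1 : 0 ≤ a * (1 + β) * z1 t ^ p :=
        mul_nonneg (mul_nonneg ha (by linarith)) hz1p.le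
      have h2 : 0 ≤ β * c * g * z2 t ^ p :=
        mul_nonneg (mul_nonneg (mul_nonneg hβ0.le hc) hgpos.le) hz2p.le
      linarith
    have hW : 0 ≤ b * (1 + β) * g * z2 t ^ p + β * d * z1 t ^ p := by
      have h1 : 0 ≤ b * (1 + β) * g * z2 t ^ p :=
        mul_nonneg (mul_nonneg (mul_nonneg hb (by linarith)) hgpos.le) hz2p.le
      have h2 : 0 ≤ β * d * z1 t ^ p :=
        mul_nonneg (mul_nonneg hβ0.le hd) hz1p.le
      linarith
    have hq := quadform_nonneg _ _ _ Δ₁ Δ₂ hX hW (by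
      calc (c * g * z1 t * z2 t ^ (p - 1) + d * z2 t * z1 t ^ (p - 1)) ^ 2
          ≤ 4 * (a * (1 + β) * z1 t ^ p + β * c * g * z2 t ^ p)
            * (b * (1 + β) * g * z2 t ^ p + β * d * z1 t ^ p) := hd2)
    have hτ1 : β * τ₁ ≤ τ := by
      rcases le_total τ₁ 0 with h | h
      · nlinarith
      · have : β * τ₁ ≤ τ₁ := by nlinarith
        exact this.trans (le_max_left _ _)
    have hτ2 : β * τ₂ ≤ τ := by
      rcases le_total τ₂ 0 with h | h
      · nlinarith
      · have : β * τ₂ ≤ τ₂ := by nlinarith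
        exact this.trans (le_max_right _ _)
    simp only [hDdef]
    have e1 : β * τ₁ * Δ₁ ^ 2 ≤ τ * Δ₁ ^ 2 := mul_le_mul_of_nonneg_right hτ1 (sq_nonneg _)
    have e2 : β * τ₂ * Δ₂ ^ 2 ≤ τ * Δ₂ ^ 2 := mul_le_mul_of_nonneg_right hτ2 (sq_nonneg _)
    nlinarith [hq, e1, e2]
  have hcont : ContinuousOn φ (Icc 0 1) := fun t ht =>
    (hderiv t ht).continuousAt.continuousWithinAt
  have hdiff : DifferentiableOn ℝ φ (interior (Icc (0:ℝ) 1)) := by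
    rw [interior_Icc]
    exact fun t ht =>
      ((hderiv t (Ioo_subset_Icc_self ht)).differentiableAt).differentiableWithinAt
  have hanti : AntitoneOn φ (Icc 0 1) :=
    antitoneOn_of_deriv_nonpos (convex_Icc 0 1) hcont hdiff (by
      rw [interior_Icc]
      intro t ht
      rw [(hderiv t (Ioo_subset_Icc_self ht)).deriv]
      exact hDle t (Ioo_subset_Icc_self ht))
  have h01 : φ 1 ≤ φ 0 :=
    hanti (by constructor <;> norm_num) (by constructor <;> norm_num) zero_le_one
  have ez11 : z1 1 = y.1 := by simp only [hz1def, hΔ₁]; ring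
  have ez21 : z2 1 = y.2 := by simp only [hz2def, hΔ₂]; ring
  have ez10 : z1 0 = y'.1 := by simp only [hz1def]; ring
  have ez20 : z2 0 = y'.2 := by simp only [hz2def]; ring
  simp only [hφdef, ez11, ez21, ez10, ez20] at h01
  have hnrm : nrm2 (y - y') ^ 2 = Δ₁ ^ 2 + Δ₂ ^ 2 := by
    rw [nrm2, Real.sq_sqrt (by positivity)]
    simp [hΔ₁, hΔ₂]
  rw [hnrm]
  simp only [psiLV, dot2, Prod.fst_sub, Prod.snd_sub]
  rw [← hg_def, ← hp_def, ← hΔ₁, ← hΔ₂]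
  linarith [h01]

/-- scalar condition -/
def SC (a b c d β γ u : ℝ) : Prop :=
  (c / γ * u ^ (1 - β) + d * γ * u ^ β) ^ 2
    ≤ 4 * (a * (1 + β) + β * c * u) * (b * (1 + β) * u + β * d)

lemma disc_of_ratio (a b c d β γ : ℝ) (hβ0 : 0 < β) (hβ1 : β < 1) (hγ : 0 < γ)
    (P : ℝ → Prop)
    (hcond : ∀ u : ℝ, 0 < u → P u → SC a b c d β γ u)
    (z : ℝ × ℝ) (hz1 : 0 < z.1) (hz2 : 0 < z.2)
    (hPz : P ((z.2 / (γ * z.1)) ^ (1/β))) :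
    (c * γ ^ (-(1/β)) * z.1 * z.2 ^ (1/β - 1) + d * z.2 * z.1 ^ (1/β - 1)) ^ 2
      ≤ 4 * (a * (1 + β) * z.1 ^ (1/β) + β * c * γ ^ (-(1/β)) * z.2 ^ (1/β))
          * (b * (1 + β) * γ ^ (-(1/β)) * z.2 ^ (1/β) + β * d * z.1 ^ (1/β)) := by
  have hβne : β ≠ 0 := ne_of_gt hβ0
  set p : ℝ := 1 / β with hp_def
  have hβp : β * p = 1 := by rw [hp_def]; field_simp
  set w : ℝ := z.2 / (γ * z.1) with hw_def
  have hw : 0 < w := by positivity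
  set u : ℝ := w ^ p with hu_def
  have hu : 0 < u := Real.rpow_pos_of_pos hw p
  have key := hcond u hu hPz
  rw [SC] at key
  have hu1 : u ^ (1 - β) = w ^ (p - 1) := by
    rw [hu_def, ← Real.rpow_mul hw.le]
    congr 1
    linear_combination -hβp
  have hu2 : u ^ β = w := by
    rw [hu_def, ← Real.rpow_mul hw.le]
    rw [show p * β = 1 by rw [hp_def]; field_simp]
    exact Real.rpow_one w
  rw [hu1, hu2, hu_def] at key
  -- rewrite z.2 = γ * w * z.1
  have hz2eq : z.2 = γ * w * z.1 := by
    rw [hw_def]; field_simp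
  rw [hz2eq]
  have hexp : ∀ q : ℝ, (γ * w * z.1) ^ q = γ ^ q * w ^ q * z.1 ^ q := by
    intro q
    rw [Real.mul_rpow (by positivity) hz1.le, Real.mul_rpow hγ.le hw.le]
  rw [hexp (p - 1), hexp p]
  have A1 : z.1 * z.1 ^ (p - 1) = z.1 ^ p := by
    nth_rewrite 2 [show p = 1 + (p - 1) by ring]
    rw [Real.rpow_add hz1, Real.rpow_one]
  have A2 : γ ^ (-p) * γ ^ (p - 1) = 1 / γ := by
    rw [← Real.rpow_add hγ, show -p + (p - 1) = (-1 : ℝ) by ring, Real.rpow_neg_one,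
      inv_eq_one_div]
  have A3 : γ ^ (-p) * γ ^ p = 1 := by
    rw [← Real.rpow_add hγ, show -p + p = (0 : ℝ) by ring, Real.rpow_zero]
  have hL : c * γ ^ (-p) * z.1 * (γ ^ (p-1) * w ^ (p-1) * z.1 ^ (p-1))
      + d * (γ * w * z.1) * z.1 ^ (p-1)
      = (c / γ * w ^ (p-1) + d * γ * w) * z.1 ^ p := by
    rw [← A1]
    linear_combination (c * w ^ (p-1) * z.1 * z.1 ^ (p-1)) * A2
  have hX : a * (1 + β) * z.1 ^ p + β * c * γ ^ (-p) * (γ ^ p * w ^ p * z.1 ^ p)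
      = (a * (1 + β) + β * c * w ^ p) * z.1 ^ p := by
    linear_combination (β * c * w ^ p * z.1 ^ p) * A3
  have hW : b * (1 + β) * γ ^ (-p) * (γ ^ p * w ^ p * z.1 ^ p) + β * d * z.1 ^ p
      = (b * (1 + β) * w ^ p + β * d) * z.1 ^ p := by
    linear_combination (b * (1 + β) * w ^ p * z.1 ^ p) * A3
  rw [hL, hX, hW]
  have hkey2 := mul_le_mul_of_nonneg_right key (sq_nonneg (z.1 ^ p))
  calc ((c / γ * w ^ (p-1) + d * γ * w) * z.1 ^ p) ^ 2
      = (c / γ * w ^ (p-1) + d * γ * w) ^ 2 * (z.1 ^ p) ^ 2 := by ring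
    _ ≤ 4 * (a * (1 + β) + β * c * w ^ p) * (b * (1 + β) * w ^ p + β * d) * (z.1 ^ p) ^ 2 :=
        hkey2
    _ = 4 * ((a * (1 + β) + β * c * w ^ p) * z.1 ^ p)
        * ((b * (1 + β) * w ^ p + β * d) * z.1 ^ p) := by ring


lemma sc_low (a b c d β : ℝ) (ha : 0 < a) (hb : 0 < b) (hc : 0 < c) (hd : 0 < d)
    (hβ0 : 0 < β) (hβ1 : β < 1) :
    ∃ ε : ℝ, 0 < ε ∧ ∀ u : ℝ, 0 < u → u < ε → SC a b c d β 1 u := by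
  set s : ℝ := Real.sqrt (β * (1 + β) * a * d) with hs_def
  have hspos : 0 < s := Real.sqrt_pos.2 (by positivity)
  have hssq : s ^ 2 = β * (1 + β) * a * d := Real.sq_sqrt (by positivity)
  refine ⟨min ((s/c) ^ (1/(1-β))) ((s/d) ^ (1/β)), by positivity, ?_⟩
  intro u hu hue
  have h1 : c * u ^ (1 - β) ≤ s := by
    have e1 : u ^ (1-β) ≤ ((s/c) ^ (1/(1-β))) ^ (1-β) := by
      apply Real.rpow_le_rpow hu.le (hue.le.trans (min_le_left _ _)) (by linarith)
    have e2 : ((s/c) ^ (1/(1-β))) ^ (1-β) = s / c := by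
      rw [← Real.rpow_mul (by positivity), one_div_mul_cancel (by linarith), Real.rpow_one]
    rw [e2] at e1
    calc c * u ^ (1-β) ≤ c * (s/c) := by nlinarith
      _ = s := by field_simp
  have h2 : d * u ^ β ≤ s := by
    have e1 : u ^ β ≤ ((s/d) ^ (1/β)) ^ β := by
      apply Real.rpow_le_rpow hu.le (hue.le.trans (min_le_right _ _)) hβ0.le
    have e2 : ((s/d) ^ (1/β)) ^ β = s / d := by
      rw [← Real.rpow_mul (by positivity), one_div_mul_cancel (ne_of_gt hβ0), Real.rpow_one]
    rw [e2] at e1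
    calc d * u ^ β ≤ d * (s/d) := by nlinarith
      _ = s := by field_simp
  rw [SC]
  have hup : 0 < u ^ (1-β) := Real.rpow_pos_of_pos hu _
  have hup2 : 0 < u ^ β := Real.rpow_pos_of_pos hu _
  have hL : (c / 1 * u ^ (1-β) + d * 1 * u ^ β) ^ 2 ≤ 4 * s ^ 2 := by
    have : c / 1 * u ^ (1-β) + d * 1 * u ^ β ≤ 2 * s := by
      rw [div_one, mul_one]; linarith
    nlinarith [hup, hup2, mul_pos hc hup, mul_pos hd hup2]
  have hR : 4 * s ^ 2 ≤ 4 * (a * (1 + β) + β * c * u) * (b * (1 + β) * u + β * d) := by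
    rw [hssq]
    have e : 4 * (a * (1 + β) + β * c * u) * (b * (1 + β) * u + β * d)
        = 4 * (β * (1 + β) * a * d) + 4 * (a * (1 + β) * (b * (1 + β) * u))
          + 4 * (β * c * u * (b * (1 + β) * u)) + 4 * (β * c * u * (β * d)) := by ring
    have p1 : 0 < a * (1 + β) * (b * (1 + β) * u) := by positivity
    have p2 : 0 < β * c * u * (b * (1 + β) * u) := by positivity
    have p3 : 0 < β * c * u * (β * d) := by positivity
    linarith
  linarith

lemma sc_high (a b c d β : ℝ) (ha : 0 < a) (hb : 0 < b) (hc : 0 < c) (hd : 0 < d)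
    (hβ0 : 0 < β) (hβ1 : β < 1) :
    ∃ M : ℝ, 0 < M ∧ ∀ u : ℝ, M < u → SC a b c d β 1 u := by
  set s : ℝ := Real.sqrt (β * (1 + β) * b * c) with hs_def
  have hspos : 0 < s := Real.sqrt_pos.2 (by positivity)
  have hssq : s ^ 2 = β * (1 + β) * b * c := Real.sq_sqrt (by positivity)
  refine ⟨max ((c/s) ^ (1/β)) ((d/s) ^ (1/(1-β))), by positivity, ?_⟩
  intro u hM
  have hu : 0 < u := lt_trans (by positivity) hM
  have husplit : u ^ (1-β) * u ^ β = u := by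
    rw [← Real.rpow_add hu, show (1-β) + β = (1:ℝ) by ring, Real.rpow_one]
  have h1 : c * u ^ (1-β) ≤ s * u := by
    have e1 : ((c/s) ^ (1/β)) ^ β ≤ u ^ β := by
      apply Real.rpow_le_rpow (by positivity) (le_of_lt (lt_of_le_of_lt (le_max_left _ _) hM)) hβ0.le
    have e2 : ((c/s) ^ (1/β)) ^ β = c / s := by
      rw [← Real.rpow_mul (by positivity), one_div_mul_cancel (ne_of_gt hβ0), Real.rpow_one]
    rw [e2] at e1
    have : c ≤ s * u ^ β := by
      rw [div_le_iff₀ hspos] at e1; linarith [e1]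
    calc c * u ^ (1-β) ≤ (s * u ^ β) * u ^ (1-β) := by
          nlinarith [Real.rpow_pos_of_pos hu (1-β)]
      _ = s * u := by rw [mul_assoc, mul_comm (u ^ β), husplit]
  have h2 : d * u ^ β ≤ s * u := by
    have e1 : ((d/s) ^ (1/(1-β))) ^ (1-β) ≤ u ^ (1-β) := by
      apply Real.rpow_le_rpow (by positivity) (le_of_lt (lt_of_le_of_lt (le_max_right _ _) hM)) (by linarith)
    have e2 : ((d/s) ^ (1/(1-β))) ^ (1-β) = d / s := by
      rw [← Real.rpow_mul (by positivity), one_div_mul_cancel (by linarith), Real.rpow_one]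
    rw [e2] at e1
    have : d ≤ s * u ^ (1-β) := by
      rw [div_le_iff₀ hspos] at e1; linarith [e1]
    calc d * u ^ β ≤ (s * u ^ (1-β)) * u ^ β := by
          nlinarith [Real.rpow_pos_of_pos hu β]
      _ = s * u := by rw [mul_assoc, husplit]
  rw [SC]
  have hL : (c / 1 * u ^ (1-β) + d * 1 * u ^ β) ^ 2 ≤ 4 * s ^ 2 * u ^ 2 := by
    have h3 : c / 1 * u ^ (1-β) + d * 1 * u ^ β ≤ 2 * s * u := by
      rw [div_one, mul_one]; linarith
    nlinarith [Real.rpow_pos_of_pos hu (1-β), Real.rpow_pos_of_pos hu β,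
      mul_pos hc (Real.rpow_pos_of_pos hu (1-β)), mul_pos hd (Real.rpow_pos_of_pos hu β)]
  have hR : 4 * s ^ 2 * u ^ 2 ≤ 4 * (a * (1 + β) + β * c * u) * (b * (1 + β) * u + β * d) := by
    rw [hssq]
    have e : 4 * (a * (1 + β) + β * c * u) * (b * (1 + β) * u + β * d)
        = 4 * (β * (1 + β) * b * c) * u ^ 2 + 4 * (a * (1 + β) * (b * (1 + β) * u))
          + 4 * (a * (1 + β) * (β * d)) + 4 * (β * c * u * (β * d)) := by ring
    have p1 : 0 < a * (1 + β) * (b * (1 + β) * u) := by positivity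
    have p2 : 0 < a * (1 + β) * (β * d) := by positivity
    have p3 : 0 < β * c * u * (β * d) := by positivity
    linarith
  linarith


set_option maxHeartbeats 1600000 in
lemma sc_mid (a b c d β : ℝ) (ha : 0 < a) (hb : 0 < b) (hc : 0 < c) (hd : 0 < d)
    (hβ0 : 0 < β) (hβ1 : β < 1)
    (hq : 0 < 4 * a * b * (1 + β) ^ 2 + 4 * (β ^ 2 - 1) * c * d) :
    ∃ ρ : ℝ, 1 < ρ ∧ ∀ u₀ : ℝ, 0 < u₀ → ∀ u : ℝ, u₀ / ρ < u → u < u₀ * ρ →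
      SC a b c d β (Real.sqrt (c * u₀ ^ (1 - 2*β) / d)) u := by
  set ζ : ℝ := (1 + β) * Real.sqrt (a*b) + β * Real.sqrt (c*d) with hζdef
  have sab : Real.sqrt (a*b) ^ 2 = a*b := Real.sq_sqrt (by positivity)
  have scd : Real.sqrt (c*d) ^ 2 = c*d := Real.sq_sqrt (by positivity)
  have hζ : 0 < ζ := by
    have : 0 < Real.sqrt (a*b) := Real.sqrt_pos.2 (by positivity)
    have : 0 < Real.sqrt (c*d) := Real.sqrt_pos.2 (by positivity)
    positivity
  have hζsq : ζ ^ 2 = (1+β)^2 * (a*b) + 2*β*(1+β)*Real.sqrt (a*b)*Real.sqrt (c*d)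
      + β^2 * (c*d) := by
    rw [hζdef]
    linear_combination ((1+β)^2) * sab + (β^2) * scd
  have hcdζ : c*d < ζ^2 := by
    have hS : 0 ≤ 2*β*(1+β)*Real.sqrt (a*b)*Real.sqrt (c*d) := by positivity
    nlinarith [hζsq, hS]
  have hx : (0:ℝ) < ζ^2/(c*d) := by positivity
  have hx1 : (1:ℝ) < ζ^2/(c*d) := by rw [lt_div_iff₀ (by positivity)]; linarith
  set ρ : ℝ := (ζ^2/(c*d)) ^ ((1:ℝ)/3) with hρdef
  have hρ : 1 < ρ := by
    rw [hρdef]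
    rw [show (1:ℝ) = (ζ^2/(c*d)) ^ (0:ℝ) by rw [Real.rpow_zero]]
    exact Real.rpow_lt_rpow_of_exponent_lt hx1 (by norm_num)
  have hρ0 : 0 < ρ := lt_trans one_pos hρ
  have hρcube : c*d*(ρ*ρ*ρ) = ζ^2 := by
    have e : ρ*ρ*ρ = (ζ^2/(c*d)) ^ ((1:ℝ)/3 + 1/3 + 1/3) := by
      rw [Real.rpow_add hx, Real.rpow_add hx]
    rw [e, show (1:ℝ)/3 + 1/3 + 1/3 = 1 by norm_num, Real.rpow_one]
    field_simp
  clear_value ζ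
  clear_value ρ
  refine ⟨ρ, hρ, ?_⟩
  intro u₀ hu₀ u h1 h2
  have hu : 0 < u := lt_trans (by positivity) h1
  set γm : ℝ := Real.sqrt (c * u₀ ^ (1 - 2*β) / d) with hγmdef
  have hu₀p : 0 < u₀ ^ (1 - 2*β) := Real.rpow_pos_of_pos hu₀ _
  have hγm : 0 < γm := Real.sqrt_pos.2 (by positivity)
  have hγmsq : γm ^ 2 = c * u₀ ^ (1 - 2*β) / d := Real.sq_sqrt (by positivity)
  clear_value γm
  rw [SC]
  set T1 : ℝ := c / γm * u ^ (1 - β) with hT1def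
  set T2 : ℝ := d * γm * u ^ β with hT2def
  have hT1 : 0 < T1 := by
    have := Real.rpow_pos_of_pos hu (1 - β); positivity
  have hT2 : 0 < T2 := by
    have := Real.rpow_pos_of_pos hu β; positivity
  clear_value T1 T2
  -- H1
  have hsq1 : (u ^ (1-β)) ^ 2 = u ^ (2 - 2*β) := by
    rw [← Real.rpow_natCast (u ^ (1-β)) 2, ← Real.rpow_mul hu.le]
    norm_num
    rw [show (1-β) * 2 = 2 - 2*β by ring]
  have hsq0 : (u₀ ^ (1-β)) ^ 2 = u₀ ^ (2 - 2*β) := by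
    rw [← Real.rpow_natCast (u₀ ^ (1-β)) 2, ← Real.rpow_mul hu₀.le]
    norm_num
    rw [show (1-β) * 2 = 2 - 2*β by ring]
  have hm : u₀ * u₀ ^ (1 - 2*β) = u₀ ^ (2 - 2*β) := by
    nth_rewrite 1 [← Real.rpow_one u₀]
    rw [← Real.rpow_add hu₀]
    norm_num
    rw [show 1 + (1 - 2*β) = 2 - 2*β by ring]
  have e4 : u ^ (2 - 2*β) ≤ (u₀*ρ) ^ (2 - 2*β) :=
    Real.rpow_le_rpow hu.le h2.le (by linarith)
  have e5 : (u₀*ρ) ^ (2 - 2*β) = u₀ ^ (2 - 2*β) * ρ ^ (2 - 2*β) :=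
    Real.mul_rpow hu₀.le hρ0.le
  have e6 : ρ ^ (2 - 2*β) ≤ ρ ^ (2:ℝ) :=
    Real.rpow_le_rpow_of_exponent_le hρ.le (by linarith)
  have e7 : ρ ^ (2:ℝ) = ρ * ρ := by
    rw [show (2:ℝ) = ((2:ℕ):ℝ) by norm_num, Real.rpow_natCast]; ring
  have H1 : T1 ^ 2 ≤ c*d*u₀*(ρ*ρ) := by
    rw [← mul_le_mul_iff_of_pos_right (show (0:ℝ) < γm^2 by positivity)]
    have eL : T1^2 * γm^2 = c^2 * (u ^ (1-β))^2 := by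
      rw [hT1def]; field_simp
    have eR : (c*d*u₀*(ρ*ρ)) * γm^2 = c^2 * (u₀ ^ (2-2*β)) * (ρ*ρ) := by
      rw [hγmsq]; field_simp; rw [hm, show (2:ℝ) * (1 - β) = 2 - 2*β by ring]
    rw [eL, eR, hsq1]
    calc c^2 * u ^ (2-2*β) ≤ c^2 * (u₀ ^ (2-2*β) * (ρ*ρ)) := by
          apply mul_le_mul_of_nonneg_left _ (sq_nonneg c)
          calc u ^ (2-2*β) ≤ u₀ ^ (2-2*β) * ρ ^ (2-2*β) := by rw [← e5]; exact e4
            _ ≤ u₀ ^ (2-2*β) * (ρ*ρ) := by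
                rw [← e7]; exact mul_le_mul_of_nonneg_left e6 (by positivity)
      _ = c^2 * u₀ ^ (2-2*β) * (ρ*ρ) := by ring
  -- H2
  have hsq2 : (u ^ β) ^ 2 = u ^ (2*β) := by
    rw [← Real.rpow_natCast (u ^ β) 2, ← Real.rpow_mul hu.le]
    norm_num
    rw [show β * 2 = 2*β by ring]
  have hm2 : u₀ ^ (1 - 2*β) * u₀ ^ (2*β) = u₀ := by
    rw [← Real.rpow_add hu₀]
    norm_num
  have f4 : u ^ (2*β) ≤ (u₀*ρ) ^ (2*β) := Real.rpow_le_rpow hu.le h2.le (by positivity)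
  have f5 : (u₀*ρ) ^ (2*β) = u₀ ^ (2*β) * ρ ^ (2*β) := Real.mul_rpow hu₀.le hρ0.le
  have f6 : ρ ^ (2*β) ≤ ρ ^ (2:ℝ) :=
    Real.rpow_le_rpow_of_exponent_le hρ.le (by linarith)
  have H2 : T2 ^ 2 ≤ c*d*u₀*(ρ*ρ) := by
    have eL : T2^2 = c*d*u₀^(1-2*β) * u ^ (2*β) := by
      rw [hT2def, mul_pow, mul_pow, hγmsq, hsq2]; field_simp
    rw [eL]
    calc c*d*u₀^(1-2*β) * u ^ (2*β) ≤ c*d*u₀^(1-2*β) * (u₀ ^ (2*β) * (ρ*ρ)) := by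
          apply mul_le_mul_of_nonneg_left _ (by positivity)
          calc u ^ (2*β) ≤ u₀ ^ (2*β) * ρ ^ (2*β) := by rw [← f5]; exact f4
            _ ≤ u₀ ^ (2*β) * (ρ*ρ) := by
                rw [← e7]
                exact mul_le_mul_of_nonneg_left f6 (by positivity)
      _ = c*d*(u₀^(1-2*β) * u₀ ^ (2*β))*(ρ*ρ) := by ring
      _ = c*d*u₀*(ρ*ρ) := by rw [hm2]
  clear hsq1 hsq0 hm e4 e5 e6 hsq2 hm2 f4 f5 f6 hγmsq hγm hu₀p
  have hL : (T1 + T2) ^ 2 ≤ 4 * (c*d*u₀*(ρ*ρ)) := by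
    have hee : (T1+T2)^2 + (T1-T2)^2 = 2*T1^2 + 2*T2^2 := by ring
    linarith [sq_nonneg (T1-T2), H1, H2]
  have hstep : 4 * (c*d*u₀*(ρ*ρ)) ≤ 4*(c*d)*u*(ρ*ρ*ρ) := by
    have hu₀u : u₀ < u * ρ := by
      rw [div_lt_iff₀ hρ0] at h1; linarith
    have hstep2 := mul_lt_mul_of_pos_left hu₀u (show (0:ℝ) < 4*(c*d)*(ρ*ρ) by positivity)
    have e1' : 4*(c*d)*(ρ*ρ)*(u*ρ) = 4*(c*d)*u*(ρ*ρ*ρ) := by ring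
    have e2' : 4*(c*d)*(ρ*ρ)*u₀ = 4*(c*d*u₀*(ρ*ρ)) := by ring
    linarith
  have hcube : 4*(c*d)*u*(ρ*ρ*ρ) = 4*u*ζ^2 := by
    rw [← hρcube]; ring
  have hid : Real.sqrt (a*b) * Real.sqrt (c*d) = Real.sqrt (a*d) * Real.sqrt (b*c) := by
    rw [← Real.sqrt_mul (by positivity), ← Real.sqrt_mul (by positivity)]
    ring_nf
  have sad : Real.sqrt (a*d) ^ 2 = a*d := Real.sq_sqrt (by positivity)
  have sbc : Real.sqrt (b*c) ^ 2 = b*c := Real.sq_sqrt (by positivity)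
  have amgm : 2*Real.sqrt (a*b)*Real.sqrt (c*d)*u ≤ a*d + b*c*u^2 := by
    have h0 := sq_nonneg (Real.sqrt (a*d) - Real.sqrt (b*c)*u)
    have hexp : (Real.sqrt (a*d) - Real.sqrt (b*c)*u)^2
        = a*d - 2*(Real.sqrt (a*d)*Real.sqrt (b*c))*u + b*c*u^2 := by
      linear_combination sad + u^2 * sbc
    have h1 : 0 ≤ a*d - 2*(Real.sqrt (a*b)*Real.sqrt (c*d))*u + b*c*u^2 := by
      rw [hid]; linarith
    linarith
  have hR : 4*u*ζ^2 ≤ 4 * (a * (1 + β) + β * c * u) * (b * (1 + β) * u + β * d) := by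
    have eR : 4 * (a * (1 + β) + β * c * u) * (b * (1 + β) * u + β * d)
        = 4*u*((1+β)^2*(a*b) + β^2*(c*d)) + 4*β*(1+β)*(a*d + b*c*u^2) := by ring
    have eζ : 4*u*ζ^2 = 4*u*((1+β)^2*(a*b) + β^2*(c*d))
        + 4*β*(1+β)*(2*Real.sqrt (a*b)*Real.sqrt (c*d)*u) := by
      rw [hζsq]; ring
    have hmulamgm := mul_le_mul_of_nonneg_left amgm
      (show (0:ℝ) ≤ 4*β*(1+β) by positivity)
    rw [eR, eζ]
    linarith
  calc (T1 + T2) ^ 2 ≤ 4 * (c*d*u₀*(ρ*ρ)) := hL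
    _ ≤ 4*(c*d)*u*(ρ*ρ*ρ) := hstep
    _ = 4*u*ζ^2 := hcube
    _ ≤ _ := hR


def secIoo (l r : ℝ) : Set (ℝ × ℝ) := {x | 0 < x.1 ∧ 0 < x.2 ∧ l * x.1 < x.2 ∧ x.2 < r * x.1}
def secIio (r : ℝ) : Set (ℝ × ℝ) := {x | 0 < x.1 ∧ 0 < x.2 ∧ x.2 < r * x.1}
def secIoi (l : ℝ) : Set (ℝ × ℝ) := {x | 0 < x.1 ∧ 0 < x.2 ∧ l * x.1 < x.2}

lemma comb_pos {P Q s t : ℝ} (hP : 0 < P) (hQ : 0 < Q) (hs : 0 ≤ s) (ht : 0 ≤ t)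
    (hst : s + t = 1) : 0 < s * P + t * Q := by
  rcases eq_or_lt_of_le hs with rfl | h
  · have ht1 : t = 1 := by linarith
    rw [ht1]; simp [hQ]
  · have h1 : 0 < s * P := mul_pos h hP
    have h2 : 0 ≤ t * Q := mul_nonneg ht hQ.le
    linarith

lemma isOpen_secIoo (l r : ℝ) : IsOpen (secIoo l r) := by
  have : secIoo l r = {x : ℝ × ℝ | 0 < x.1} ∩ {x : ℝ × ℝ | 0 < x.2}
      ∩ {x : ℝ × ℝ | l * x.1 < x.2} ∩ {x : ℝ × ℝ | x.2 < r * x.1} := by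
    ext x; simp [secIoo]; tauto
  rw [this]
  exact (((isOpen_lt continuous_const continuous_fst).inter
    (isOpen_lt continuous_const continuous_snd)).inter
    (isOpen_lt (continuous_const.mul continuous_fst) continuous_snd)).inter
    (isOpen_lt continuous_snd (continuous_const.mul continuous_fst))

lemma isOpen_secIio (r : ℝ) : IsOpen (secIio r) := by
  have : secIio r = {x : ℝ × ℝ | 0 < x.1} ∩ {x : ℝ × ℝ | 0 < x.2}
      ∩ {x : ℝ × ℝ | x.2 < r * x.1} := by
    ext x; simp [secIio]; tauto
  rw [this]
  exact ((isOpen_lt continuous_const continuous_fst).inter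
    (isOpen_lt continuous_const continuous_snd)).inter
    (isOpen_lt continuous_snd (continuous_const.mul continuous_fst))

lemma isOpen_secIoi (l : ℝ) : IsOpen (secIoi l) := by
  have : secIoi l = {x : ℝ × ℝ | 0 < x.1} ∩ {x : ℝ × ℝ | 0 < x.2}
      ∩ {x : ℝ × ℝ | l * x.1 < x.2} := by
    ext x; simp [secIoi]; tauto
  rw [this]
  exact ((isOpen_lt continuous_const continuous_fst).inter
    (isOpen_lt continuous_const continuous_snd)).inter
    (isOpen_lt (continuous_const.mul continuous_fst) continuous_snd)

lemma convex_secIoo (l r : ℝ) : Convex ℝ (secIoo l r) := by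
  intro x hx y hy s t hs ht hst
  obtain ⟨hx1, hx2, hx3, hx4⟩ := hx
  obtain ⟨hy1, hy2, hy3, hy4⟩ := hy
  refine ⟨?_, ?_, ?_, ?_⟩ <;>
    simp only [Prod.fst_add, Prod.snd_add, Prod.smul_fst, Prod.smul_snd, smul_eq_mul]
  · exact comb_pos hx1 hy1 hs ht hst
  · exact comb_pos hx2 hy2 hs ht hst
  · have := comb_pos (show 0 < x.2 - l * x.1 by linarith) (show 0 < y.2 - l * y.1 by linarith)
      hs ht hst
    nlinarith [this]
  · have := comb_pos (show 0 < r * x.1 - x.2 by linarith) (show 0 < r * y.1 - y.2 by linarith)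
      hs ht hst
    nlinarith [this]

lemma convex_secIio (r : ℝ) : Convex ℝ (secIio r) := by
  intro x hx y hy s t hs ht hst
  obtain ⟨hx1, hx2, hx4⟩ := hx
  obtain ⟨hy1, hy2, hy4⟩ := hy
  refine ⟨?_, ?_, ?_⟩ <;>
    simp only [Prod.fst_add, Prod.snd_add, Prod.smul_fst, Prod.smul_snd, smul_eq_mul]
  · exact comb_pos hx1 hy1 hs ht hst
  · exact comb_pos hx2 hy2 hs ht hst
  · have := comb_pos (show 0 < r * x.1 - x.2 by linarith) (show 0 < r * y.1 - y.2 by linarith)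
      hs ht hst
    nlinarith [this]

lemma convex_secIoi (l : ℝ) : Convex ℝ (secIoi l) := by
  intro x hx y hy s t hs ht hst
  obtain ⟨hx1, hx2, hx3⟩ := hx
  obtain ⟨hy1, hy2, hy3⟩ := hy
  refine ⟨?_, ?_, ?_⟩ <;>
    simp only [Prod.fst_add, Prod.snd_add, Prod.smul_fst, Prod.smul_snd, smul_eq_mul]
  · exact comb_pos hx1 hy1 hs ht hst
  · exact comb_pos hx2 hy2 hs ht hst
  · have := comb_pos (show 0 < x.2 - l * x.1 by linarith) (show 0 < y.2 - l * y.1 by linarith)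
      hs ht hst
    nlinarith [this]

lemma cone_secIoo (l r : ℝ) : ∀ x ∈ secIoo l r, ∀ k : ℝ, 0 < k → k • x ∈ secIoo l r := by
  intro x ⟨h1, h2, h3, h4⟩ k hk
  refine ⟨?_, ?_, ?_, ?_⟩ <;>
    simp only [Prod.smul_fst, Prod.smul_snd, smul_eq_mul]
  · exact mul_pos hk h1
  · exact mul_pos hk h2
  · calc l * (k * x.1) = k * (l * x.1) := by ring
      _ < k * x.2 := by exact mul_lt_mul_of_pos_left h3 hk
  · calc k * x.2 < k * (r * x.1) := mul_lt_mul_of_pos_left h4 hk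
      _ = r * (k * x.1) := by ring

lemma cone_secIio (r : ℝ) : ∀ x ∈ secIio r, ∀ k : ℝ, 0 < k → k • x ∈ secIio r := by
  intro x ⟨h1, h2, h4⟩ k hk
  refine ⟨?_, ?_, ?_⟩ <;> simp only [Prod.smul_fst, Prod.smul_snd, smul_eq_mul]
  · exact mul_pos hk h1
  · exact mul_pos hk h2
  · calc k * x.2 < k * (r * x.1) := mul_lt_mul_of_pos_left h4 hk
      _ = r * (k * x.1) := by ring

lemma cone_secIoi (l : ℝ) : ∀ x ∈ secIoi l, ∀ k : ℝ, 0 < k → k • x ∈ secIoi l := by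
  intro x ⟨h1, h2, h3⟩ k hk
  refine ⟨?_, ?_, ?_⟩ <;> simp only [Prod.smul_fst, Prod.smul_snd, smul_eq_mul]
  · exact mul_pos hk h1
  · exact mul_pos hk h2
  · calc l * (k * x.1) = k * (l * x.1) := by ring
      _ < k * x.2 := mul_lt_mul_of_pos_left h3 hk

/-- ratio strict monotonicity under rpow -/
lemma rat_rpow_lt (β : ℝ) (hβ0 : 0 < β) {k x1 x2 : ℝ} (hk : 0 ≤ k) (hx1 : 0 < x1)
    (h : k * x1 < x2) : k ^ β * x1 ^ β < x2 ^ β := by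
  calc k ^ β * x1 ^ β = (k * x1) ^ β := (Real.mul_rpow hk hx1.le).symm
    _ < x2 ^ β := Real.rpow_lt_rpow (by positivity) h hβ0

/-- image of sector under FLV: upper bound -/
lemma FLV_ratio_lt (β γ : ℝ) (hβ0 : 0 < β) (hγ : 0 < γ) {r : ℝ} (hr : 0 ≤ r)
    {x : ℝ × ℝ} (hx1 : 0 < x.1) (hx2 : 0 < x.2) (h : x.2 < r * x.1) :
    γ * x.2 ^ β < γ * r ^ β * x.1 ^ β := by
  have h2 : x.2 ^ β < r ^ β * x.1 ^ β := by
    calc x.2 ^ β < (r * x.1) ^ β := Real.rpow_lt_rpow hx2.le h hβ0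
      _ = r ^ β * x.1 ^ β := Real.mul_rpow hr hx1.le
  calc γ * x.2 ^ β < γ * (r ^ β * x.1 ^ β) := mul_lt_mul_of_pos_left h2 hγ
    _ = γ * r ^ β * x.1 ^ β := by ring

lemma FLV_ratio_gt (β γ : ℝ) (hβ0 : 0 < β) (hγ : 0 < γ) {l : ℝ} (hl : 0 ≤ l)
    {x : ℝ × ℝ} (hx1 : 0 < x.1) (h : l * x.1 < x.2) :
    γ * l ^ β * x.1 ^ β < γ * x.2 ^ β := by
  have h2 := rat_rpow_lt β hβ0 hl hx1 h
  calc γ * l ^ β * x.1 ^ β = γ * (l ^ β * x.1 ^ β) := by ring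
    _ < γ * x.2 ^ β := mul_lt_mul_of_pos_left h2 hγ

/-- from y-sector bound to u-bound (upper) -/
lemma u_lt_of_sec (β γ : ℝ) (hβ0 : 0 < β) (hγ : 0 < γ) {r : ℝ} (hr : 0 ≤ r)
    {z : ℝ × ℝ} (hz1 : 0 < z.1) (hz2 : 0 < z.2) (h : z.2 < γ * r ^ β * z.1) :
    (z.2 / (γ * z.1)) ^ (1/β) < r := by
  have hw : z.2 / (γ * z.1) < r ^ β := by
    rw [div_lt_iff₀ (by positivity)]
    calc z.2 < γ * r ^ β * z.1 := h
      _ = r ^ β * (γ * z.1) := by ring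
  have h2 : (z.2 / (γ * z.1)) ^ (1/β) < (r ^ β) ^ (1/β) :=
    Real.rpow_lt_rpow (by positivity) hw (by positivity)
  calc (z.2 / (γ * z.1)) ^ (1/β) < (r ^ β) ^ (1/β) := h2
    _ = r := by
      rw [← Real.rpow_mul hr, mul_one_div, div_self (ne_of_gt hβ0), Real.rpow_one]

lemma u_gt_of_sec (β γ : ℝ) (hβ0 : 0 < β) (hγ : 0 < γ) {l : ℝ} (hl : 0 ≤ l)
    {z : ℝ × ℝ} (hz1 : 0 < z.1) (hz2 : 0 < z.2) (h : γ * l ^ β * z.1 < z.2) :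
    l < (z.2 / (γ * z.1)) ^ (1/β) := by
  have hw : l ^ β < z.2 / (γ * z.1) := by
    rw [lt_div_iff₀ (by positivity)]
    calc l ^ β * (γ * z.1) = γ * l ^ β * z.1 := by ring
      _ < z.2 := h
  have h2 : (l ^ β) ^ (1/β) < (z.2 / (γ * z.1)) ^ (1/β) :=
    Real.rpow_lt_rpow (by positivity) hw (by positivity)
  have e : (l ^ β) ^ (1/β) = l := by
    rw [← Real.rpow_mul hl, mul_one_div, div_self (ne_of_gt hβ0), Real.rpow_one]
  rw [← e]
  exact h2
-- per-cone non-expansiveness lemmas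
lemma nonexp_low (τ₁ τ₂ a b c d β ε : ℝ) (ha : 0 < a) (hb : 0 < b) (hc : 0 < c) (hd : 0 < d)
    (hτ : 0 ≤ max τ₁ τ₂) (hβ0 : 0 < β) (hβ1 : β < 1) (hε : 0 < ε)
    (hcond : ∀ u : ℝ, 0 < u → u < ε → SC a b c d β 1 u) :
    ∀ y ∈ FLV β 1 '' secIio ε, ∀ y' ∈ FLV β 1 '' secIio ε,
      dot2 (psiLV τ₁ τ₂ a b c d β 1 y - psiLV τ₁ τ₂ a b c d β 1 y') (y - y')
        ≤ max τ₁ τ₂ * nrm2 (y - y') ^ 2 := by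
  have himg : FLV β 1 '' secIio ε ⊆ secIio (1 * ε ^ β) := by
    rintro _ ⟨x, hx, rfl⟩
    refine ⟨?_, ?_, ?_⟩ <;> simp only [FLV]
    · exact Real.rpow_pos_of_pos hx.1 β
    · have := Real.rpow_pos_of_pos hx.2.1 β; linarith
    · exact FLV_ratio_lt β 1 hβ0 one_pos hε.le hx.1 hx.2.1 hx.2.2
  have hU := core_mono τ₁ τ₂ a b c d β 1 ha.le hb.le hc.le hd.le hτ hβ0 hβ1 one_pos
    (secIio (1 * ε ^ β)) (convex_secIio _)
    (fun z hz => ⟨hz.1, hz.2.1⟩)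
    (by
      intro z hz
      exact disc_of_ratio a b c d β 1 hβ0 hβ1 one_pos (fun u => u < ε)
        (fun u hu hP => hcond u hu hP) z hz.1 hz.2.1
        (u_lt_of_sec β 1 hβ0 one_pos hε.le hz.1 hz.2.1 hz.2.2))
  intro y hy y' hy'
  exact hU y (himg hy) y' (himg hy')

lemma nonexp_high (τ₁ τ₂ a b c d β M : ℝ) (ha : 0 < a) (hb : 0 < b) (hc : 0 < c) (hd : 0 < d)
    (hτ : 0 ≤ max τ₁ τ₂) (hβ0 : 0 < β) (hβ1 : β < 1) (hM : 0 < M)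
    (hcond : ∀ u : ℝ, M < u → SC a b c d β 1 u) :
    ∀ y ∈ FLV β 1 '' secIoi M, ∀ y' ∈ FLV β 1 '' secIoi M,
      dot2 (psiLV τ₁ τ₂ a b c d β 1 y - psiLV τ₁ τ₂ a b c d β 1 y') (y - y')
        ≤ max τ₁ τ₂ * nrm2 (y - y') ^ 2 := by
  have himg : FLV β 1 '' secIoi M ⊆ secIoi (1 * M ^ β) := by
    rintro _ ⟨x, hx, rfl⟩
    refine ⟨?_, ?_, ?_⟩ <;> simp only [FLV]
    · exact Real.rpow_pos_of_pos hx.1 β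
    · have := Real.rpow_pos_of_pos hx.2.1 β; linarith
    · exact FLV_ratio_gt β 1 hβ0 one_pos hM.le hx.1 hx.2.2
  have hU := core_mono τ₁ τ₂ a b c d β 1 ha.le hb.le hc.le hd.le hτ hβ0 hβ1 one_pos
    (secIoi (1 * M ^ β)) (convex_secIoi _)
    (fun z hz => ⟨hz.1, hz.2.1⟩)
    (by
      intro z hz
      exact disc_of_ratio a b c d β 1 hβ0 hβ1 one_pos (fun u => M < u)
        (fun u hu hP => hcond u hP) z hz.1 hz.2.1
        (u_gt_of_sec β 1 hβ0 one_pos hM.le hz.1 hz.2.1 hz.2.2))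
  intro y hy y' hy'
  exact hU y (himg hy) y' (himg hy')

lemma nonexp_mid (τ₁ τ₂ a b c d β ρ u₀ : ℝ) (ha : 0 < a) (hb : 0 < b) (hc : 0 < c) (hd : 0 < d)
    (hτ : 0 ≤ max τ₁ τ₂) (hβ0 : 0 < β) (hβ1 : β < 1) (hρ : 1 < ρ) (hu₀ : 0 < u₀)
    (hcond : ∀ u : ℝ, u₀ / ρ < u → u < u₀ * ρ →
      SC a b c d β (Real.sqrt (c * u₀ ^ (1 - 2*β) / d)) u) :
    ∀ y ∈ FLV β (Real.sqrt (c * u₀ ^ (1 - 2*β) / d)) '' secIoo (u₀/ρ) (u₀*ρ),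
    ∀ y' ∈ FLV β (Real.sqrt (c * u₀ ^ (1 - 2*β) / d)) '' secIoo (u₀/ρ) (u₀*ρ),
      dot2 (psiLV τ₁ τ₂ a b c d β (Real.sqrt (c * u₀ ^ (1 - 2*β) / d)) y
          - psiLV τ₁ τ₂ a b c d β (Real.sqrt (c * u₀ ^ (1 - 2*β) / d)) y') (y - y')
        ≤ max τ₁ τ₂ * nrm2 (y - y') ^ 2 := by
  set γm : ℝ := Real.sqrt (c * u₀ ^ (1 - 2*β) / d) with hγmdef
  have hρ0 : 0 < ρ := lt_trans one_pos hρ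
  have hγm : 0 < γm := Real.sqrt_pos.2 (by
    have : 0 < u₀ ^ (1 - 2*β) := Real.rpow_pos_of_pos hu₀ _
    positivity)
  have hl0 : 0 < u₀ / ρ := by positivity
  have hr0 : 0 < u₀ * ρ := by positivity
  have himg : FLV β γm '' secIoo (u₀/ρ) (u₀*ρ)
      ⊆ secIoo (γm * (u₀/ρ) ^ β) (γm * (u₀*ρ) ^ β) := by
    rintro _ ⟨x, hx, rfl⟩
    refine ⟨?_, ?_, ?_, ?_⟩ <;> simp only [FLV]
    · exact Real.rpow_pos_of_pos hx.1 β
    · have := Real.rpow_pos_of_pos hx.2.1 β; positivity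
    · exact FLV_ratio_gt β γm hβ0 hγm hl0.le hx.1 hx.2.2.1
    · exact FLV_ratio_lt β γm hβ0 hγm hr0.le hx.1 hx.2.1 hx.2.2.2
  have hU := core_mono τ₁ τ₂ a b c d β γm ha.le hb.le hc.le hd.le hτ hβ0 hβ1 hγm
    (secIoo (γm * (u₀/ρ) ^ β) (γm * (u₀*ρ) ^ β)) (convex_secIoo _ _)
    (fun z hz => ⟨hz.1, hz.2.1⟩)
    (by
      intro z hz
      exact disc_of_ratio a b c d β γm hβ0 hβ1 hγm
        (fun u => u₀/ρ < u ∧ u < u₀*ρ)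
        (fun u hu hP => hcond u hP.1 hP.2) z hz.1 hz.2.1
        ⟨u_gt_of_sec β γm hβ0 hγm hl0.le hz.1 hz.2.1 hz.2.2.1,
         u_lt_of_sec β γm hβ0 hγm hr0.le hz.1 hz.2.1 hz.2.2.2⟩)
  intro y hy y' hy'
  exact hU y (himg hy) y' (himg hy')
set_option maxHeartbeats 1000000 in
/-- Covering of `(0,∞)²` by finitely many open convex cones `Cᵢ` on which the
transformed fields `ψ_{β,γᵢ}` are `max(τ₁,τ₂)` non-expansive. -/
theorem stmt14 (τ₁ τ₂ a b c d : ℝ) (ha : 0 < a) (hb : 0 < b) (hc : 0 < c) (hd : 0 < d)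
    (hτ : 0 ≤ max τ₁ τ₂) (β : ℝ) (hβ : β ∈ Set.Ioo (0 : ℝ) 1) (hβ' : β ≠ 1 / 2)
    (hq : 0 < 4 * a * b * (1 + β) ^ 2 + 4 * (β ^ 2 - 1) * c * d) :
    ∃ N : ℕ, 1 ≤ N ∧ ∃ γ : Fin N → ℝ, ∃ C : Fin N → Set (ℝ × ℝ),
      (∀ i, 0 < γ i) ∧
      (∀ i, IsOpen (C i)) ∧
      (∀ i, Convex ℝ (C i)) ∧
      (∀ i, ∀ x ∈ C i, ∀ l : ℝ, 0 < l → l • x ∈ C i) ∧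
      (∀ i, C i ⊆ {x : ℝ × ℝ | 0 < x.1 ∧ 0 < x.2}) ∧
      (⋃ i, C i) = {x : ℝ × ℝ | 0 < x.1 ∧ 0 < x.2} ∧
      (∀ i, ∀ y ∈ FLV β (γ i) '' C i, ∀ y' ∈ FLV β (γ i) '' C i,
        dot2 (psiLV τ₁ τ₂ a b c d β (γ i) y - psiLV τ₁ τ₂ a b c d β (γ i) y')
            (y - y') ≤ max τ₁ τ₂ * nrm2 (y - y') ^ 2) := by
  classical
  obtain ⟨hβ0, hβ1⟩ := hβ
  obtain ⟨ε, hε, hlow⟩ := sc_low a b c d β ha hb hc hd hβ0 hβ1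
  obtain ⟨M, hM, hhigh⟩ := sc_high a b c d β ha hb hc hd hβ0 hβ1
  obtain ⟨ρ, hρ, hmid⟩ := sc_mid a b c d β ha hb hc hd hβ0 hβ1 hq
  have hρ0 : (0:ℝ) < ρ := lt_trans one_pos hρ
  obtain ⟨n, hn⟩ : ∃ n : ℕ, M / ε < ρ ^ n := pow_unbounded_of_one_lt _ hρ
  have hn' : M < ε * ρ ^ n := by rw [div_lt_iff₀ hε] at hn; linarith
  refine ⟨n + 3, by omega, ?_⟩
  refine ⟨fun i => if i.val = 0 ∨ i.val = n + 2 then 1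
      else Real.sqrt (c * (ε * ρ ^ (i.val - 1)) ^ (1 - 2*β) / d),
    fun i => if i.val = 0 then secIio ε else if i.val = n + 2 then secIoi M
      else secIoo (ε * ρ ^ (i.val - 1) / ρ) (ε * ρ ^ (i.val - 1) * ρ),
    ?_, ?_, ?_, ?_, ?_, ?_, ?_⟩
  · -- positivity of γ
    intro i
    beta_reduce
    by_cases h : i.val = 0 ∨ i.val = n + 2
    · rw [if_pos h]; exact one_pos
    · rw [if_neg h]
      apply Real.sqrt_pos.2
      have h1 : (0:ℝ) < ε * ρ ^ (i.val - 1) := by positivity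
      have h2 : (0:ℝ) < (ε * ρ ^ (i.val - 1)) ^ (1 - 2*β) := Real.rpow_pos_of_pos h1 _
      positivity
  · -- open
    intro i
    beta_reduce
    by_cases h0 : i.val = 0
    · rw [if_pos h0]; exact isOpen_secIio ε
    · rw [if_neg h0]
      by_cases h2 : i.val = n + 2
      · rw [if_pos h2]; exact isOpen_secIoi M
      · rw [if_neg h2]; exact isOpen_secIoo _ _
  · -- convex
    intro i
    beta_reduce
    by_cases h0 : i.val = 0
    · rw [if_pos h0]; exact convex_secIio ε
    · rw [if_neg h0]
      by_cases h2 : i.val = n + 2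
      · rw [if_pos h2]; exact convex_secIoi M
      · rw [if_neg h2]; exact convex_secIoo _ _
  · -- cone
    intro i
    beta_reduce
    by_cases h0 : i.val = 0
    · rw [if_pos h0]; exact cone_secIio ε
    · rw [if_neg h0]
      by_cases h2 : i.val = n + 2
      · rw [if_pos h2]; exact cone_secIoi M
      · rw [if_neg h2]; exact cone_secIoo _ _
  · -- subset of positive quadrant
    intro i
    beta_reduce
    by_cases h0 : i.val = 0
    · rw [if_pos h0]; exact fun x hx => ⟨hx.1, hx.2.1⟩
    · rw [if_neg h0]
      by_cases h2 : i.val = n + 2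
      · rw [if_pos h2]; exact fun x hx => ⟨hx.1, hx.2.1⟩
      · rw [if_neg h2]; exact fun x hx => ⟨hx.1, hx.2.1⟩
  · -- union
    ext x
    simp only [mem_iUnion, mem_setOf_eq]
    constructor
    · rintro ⟨i, hi⟩
      beta_reduce at hi
      by_cases h0 : i.val = 0
      · rw [if_pos h0] at hi; exact ⟨hi.1, hi.2.1⟩
      · rw [if_neg h0] at hi
        by_cases h2 : i.val = n + 2
        · rw [if_pos h2] at hi; exact ⟨hi.1, hi.2.1⟩
        · rw [if_neg h2] at hi; exact ⟨hi.1, hi.2.1⟩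
    · rintro ⟨hx1, hx2⟩
      have hfv : ∀ (v : ℕ) (h : v < n + 3), ((⟨v, h⟩ : Fin (n + 3)) : ℕ) = v :=
        fun v h => rfl
      by_cases hL : x.2 < ε * x.1
      · refine ⟨⟨0, by omega⟩, ?_⟩
        beta_reduce
        simp only [hfv]
        exact ⟨hx1, hx2, hL⟩
      · by_cases hH : M * x.1 < x.2
        · refine ⟨⟨n + 2, by omega⟩, ?_⟩
          beta_reduce
          simp only [hfv, if_true]
          exact ⟨hx1, hx2, hH⟩
        · push_neg at hL hH
          set u : ℝ := x.2 / x.1 with hu_def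
          have hu : 0 < u := by positivity
          have huε : ε ≤ u := by rw [hu_def, le_div_iff₀ hx1]; linarith
          have huM : u ≤ M := by rw [hu_def, div_le_iff₀ hx1]; linarith
          have hwit : u < ε * ρ ^ (n + 1) := by
            have : ε * ρ ^ n ≤ ε * ρ ^ (n+1) := by
              have : ρ ^ n ≤ ρ ^ (n+1) := pow_le_pow_right₀ hρ.le (by omega)
              nlinarith
            linarith
          have hex : ∃ k : ℕ, u < ε * ρ ^ (k + 1) := ⟨n, hwit⟩
          have hk₀spec' : u < ε * ρ ^ (Nat.find hex + 1) := Nat.find_spec hex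
          have hk₀n' : Nat.find hex ≤ n := Nat.find_min' hex hwit
          have hk₀min' : ∀ m, m < Nat.find hex → ¬ (u < ε * ρ ^ (m + 1)) :=
            fun m hm => Nat.find_min hex hm
          obtain ⟨k₀, hk₀⟩ : ∃ k, k = Nat.find hex := ⟨_, rfl⟩
          rw [← hk₀] at hk₀spec' hk₀n' hk₀min'
          have hk₀spec : u < ε * ρ ^ (k₀ + 1) := hk₀spec'
          have hk₀n : k₀ ≤ n := hk₀n'
          have hlow' : ε * ρ ^ k₀ / ρ < u := by
            rcases Nat.eq_zero_or_pos k₀ with h | h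
            · rw [h]
              simp only [pow_zero, mul_one]
              calc ε / ρ < ε := div_lt_self hε hρ
                _ ≤ u := huε
            · obtain ⟨m, rfl⟩ : ∃ m, k₀ = m + 1 := ⟨k₀ - 1, by omega⟩
              have hnot : ¬ (u < ε * ρ ^ (m + 1)) := hk₀min' m (by omega)
              push_neg at hnot
              calc ε * ρ ^ (m+1) / ρ < ε * ρ ^ (m+1) := div_lt_self (by positivity) hρ
                _ ≤ u := hnot
          refine ⟨⟨k₀ + 1, by omega⟩, ?_⟩
          beta_reduce
          simp only [hfv]
          rw [if_neg (by omega), if_neg (by omega), Nat.add_sub_cancel]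
          refine ⟨hx1, hx2, ?_, ?_⟩
          · rw [hu_def] at hlow'
            calc ε * ρ ^ k₀ / ρ * x.1 < x.2 / x.1 * x.1 := by
                  exact mul_lt_mul_of_pos_right hlow' hx1
              _ = x.2 := by field_simp
          · have : u < ε * ρ ^ k₀ * ρ := by
              rw [pow_succ] at hk₀spec; linarith [hk₀spec]
            rw [hu_def, div_lt_iff₀ hx1] at this
            linarith
  · -- the non-expansiveness estimates
    intro i
    beta_reduce
    by_cases h0 : i.val = 0
    · rw [if_pos (Or.inl h0), if_pos h0]
      exact nonexp_low τ₁ τ₂ a b c d β ε ha hb hc hd hτ hβ0 hβ1 hε hlow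
    · by_cases h2 : i.val = n + 2
      · rw [if_pos (Or.inr h2), if_neg h0, if_pos h2]
        exact nonexp_high τ₁ τ₂ a b c d β M ha hb hc hd hτ hβ0 hβ1 hM hhigh
      · rw [if_neg (by tauto), if_neg h0, if_neg h2]
        have hu₀ : (0:ℝ) < ε * ρ ^ (i.val - 1) := by positivity
        exact nonexp_mid τ₁ τ₂ a b c d β ρ (ε * ρ ^ (i.val - 1)) ha hb hc hd hτ hβ0 hβ1
          hρ hu₀ (hmid _ hu₀)
end

section
/- Let a ∈ ℝ and let b_F : (a,∞) → ℝ be locally Lipschitz with b_F(x) < 0 for all x > a. For x₀ > a, let φ(x₀,·) be the maximal solution of x' = b_F(x), x(0) = x₀, staying in (a,∞), defined on [0, T(x₀)). Then x₀ ↦ φ(x₀,t) (where defined) and x₀ ↦ T(x₀) are nondecreasing; set T(∞) = lim_{x₀→∞} T(x₀) and φ(∞,t) = lim_{x₀→∞} φ(x₀,t) for t < T(∞). (i) If the integral ∫^∞ dx/|b_F(x)| converges at +∞, then for every t ∈ (0, T(∞)) one has φ(∞,t) < ∞ and φ(∞,t) = inf{ u > a : ∫_u^∞ dx/|b_F(x)|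 < t } (the flow comes down from infinity instantaneously). (ii) Otherwise T(∞) = ∞ and φ(∞,t) = ∞ for every t ≥ 0, i.e. φ(x₀,t) → ∞ as x₀ → ∞ for every fixed t. -/
open Real Set Filter MeasureTheory ENNReal Topology

/-- Coming down from infinity for the one-dimensional ODE `x' = b_F(x)` on
`(a,∞)` with a negative, locally Lipschitz right-hand side. `T x₀ ∈ (0,∞]`
denotes the maximal existence time in `(a,∞)` of the flow `φ x₀` and
maximality is expressed by the fact that, if `T x₀` is finite, the solution
converges to the boundary point `a` at time `T x₀`. -/
theorem stmt15 (a : ℝ) (bF : ℝ → ℝ)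
    (hLip : ∀ x ∈ Set.Ioi a, ∃ s ∈ nhdsWithin x (Set.Ioi a), ∃ L : NNReal,
      LipschitzOnWith L bF s)
    (hneg : ∀ x ∈ Set.Ioi a, bF x < 0)
    (T : ℝ → ℝ≥0∞) (φ : ℝ → ℝ → ℝ)
    (hTpos : ∀ x₀ ∈ Set.Ioi a, 0 < T x₀)
    (hinit : ∀ x₀ ∈ Set.Ioi a, φ x₀ 0 = x₀)
    (hmem : ∀ x₀ ∈ Set.Ioi a, ∀ t : ℝ, 0 ≤ t → ENNReal.ofReal t < T x₀ →
      φ x₀ t ∈ Set.Ioi a)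
    (hder : ∀ x₀ ∈ Set.Ioi a, ∀ t : ℝ, 0 ≤ t → ENNReal.ofReal t < T x₀ →
      HasDerivAt (φ x₀) (bF (φ x₀ t)) t)
    (hmax : ∀ x₀ ∈ Set.Ioi a, T x₀ ≠ ⊤ →
      Filter.Tendsto (φ x₀) (nhdsWithin (T x₀).toReal (Set.Iio (T x₀).toReal))
        (nhds a)) :
    -- the flow and its lifetime are nondecreasing in the initial condition
    (∀ x₀ ∈ Set.Ioi a, ∀ x₁ : ℝ, x₀ ≤ x₁ → T x₀ ≤ T x₁) ∧
    (∀ x₀ ∈ Set.Ioi a, ∀ x₁ : ℝ, x₀ ≤ x₁ →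
      ∀ t : ℝ, 0 ≤ t → ENNReal.ofReal t < T x₀ → φ x₀ t ≤ φ x₁ t) ∧
    -- (i) if `∫^∞ dx/|b_F(x)|` converges, instantaneous coming down from
    -- infinity, with the explicit formula for `φ(∞,t)`
    ((∃ u ∈ Set.Ioi a, MeasureTheory.IntegrableOn (fun x => 1 / |bF x|) (Set.Ioi u)) →
      ∀ t : ℝ, 0 < t → ENNReal.ofReal t < ⨆ x₀ ∈ Set.Ioi a, T x₀ →
        BddAbove {y : ℝ | ∃ x₀ ∈ Set.Ioi a, ENNReal.ofReal t < T x₀ ∧ y = φ x₀ t} ∧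
        sSup {y : ℝ | ∃ x₀ ∈ Set.Ioi a, ENNReal.ofReal t < T x₀ ∧ y = φ x₀ t} =
          sInf {u : ℝ | a < u ∧ ∫ x in Set.Ioi u, 1 / |bF x| < t}) ∧
    -- (ii) otherwise `T(∞) = ∞` and `φ(∞,t) = ∞` for every `t ≥ 0`
    ((¬ ∃ u ∈ Set.Ioi a, MeasureTheory.IntegrableOn (fun x => 1 / |bF x|) (Set.Ioi u)) →
      (⨆ x₀ ∈ Set.Ioi a, T x₀) = ⊤ ∧
      ∀ t : ℝ, 0 ≤ t → ∀ M : ℝ, ∃ x₁ ∈ Set.Ioi a, ∀ x₀ : ℝ, x₁ ≤ x₀ →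
        ENNReal.ofReal t < T x₀ ∧ M ≤ φ x₀ t) := by
  set f : ℝ → ℝ := fun x => 1 / |bF x| with hf_def
  -- continuity of `bF` and of `f` on `(a, ∞)`
  have hbcont : ∀ x ∈ Set.Ioi a, ContinuousAt bF x := by
    intro x hx
    obtain ⟨s, hs, L, hL⟩ := hLip x hx
    rw [isOpen_Ioi.nhdsWithin_eq hx] at hs
    exact hL.continuousOn.continuousAt hs
  have hfCA : ∀ x ∈ Set.Ioi a, ContinuousAt f x := by
    intro x hx
    have hb0 : |bF x| ≠ 0 := abs_ne_zero.2 (hneg x hx).ne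
    exact continuousAt_const.div ((hbcont x hx).abs) hb0
  have hfcont : ContinuousOn f (Set.Ioi a) := fun x hx => (hfCA x hx).continuousWithinAt
  have hfnn : ∀ x, 0 ≤ f x := by
    intro x; rw [hf_def]; positivity
  have hfpos : ∀ x ∈ Set.Ioi a, 0 < f x := by
    intro x hx
    exact one_div_pos.2 (abs_pos.2 (hneg x hx).ne)
  -- interval integrability
  have hII : ∀ z w : ℝ, a < z → a < w → IntervalIntegrable f volume z w := by
    intro z w hz hw
    refine (hfcont.mono fun x hx => ?_).intervalIntegrable
    exact lt_of_lt_of_le (lt_min hz hw) hx.1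
  have hJnn : ∀ z w : ℝ, z ≤ w → 0 ≤ ∫ x in z..w, f x :=
    fun z w hzw => intervalIntegral.integral_nonneg hzw fun x _ => hfnn x
  have hJpos : ∀ z w : ℝ, a < z → z < w → 0 < ∫ x in z..w, f x :=
    fun z w hz hzw => intervalIntegral.intervalIntegral_pos_of_pos_on
      (hII z w hz (hz.trans hzw)) (fun x hx => hfpos x (hz.trans hx.1)) hzw
  have hJadd : ∀ z w w' : ℝ, a < z → a < w → a < w' →
      (∫ x in z..w', f x) = (∫ x in z..w, f x) + ∫ x in w..w', f x :=
    fun z w w' hz hw hw' =>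
      (intervalIntegral.integral_add_adjacent_intervals (hII z w hz hw) (hII w w' hw hw')).symm
  -- the key identity along the flow
  have hstar : ∀ x₀ ∈ Set.Ioi a, ∀ t : ℝ, 0 ≤ t → ENNReal.ofReal t < T x₀ →
      (∫ x in (φ x₀ t)..x₀, f x) = t ∧ φ x₀ t ≤ x₀ := by
    intro x₀ hx₀ t ht htT
    have hds : ∀ s ∈ Set.Icc (0:ℝ) t,
        HasDerivAt (fun r => (∫ x in (φ x₀ r)..x₀, f x) - r) 0 s := by
      intro s hs
      have hsT : ENNReal.ofReal s < T x₀ :=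
        lt_of_le_of_lt (ENNReal.ofReal_le_ofReal hs.2) htT
      have hφs := hmem x₀ hx₀ s hs.1 hsT
      have h1 : HasDerivAt (fun y => ∫ x in y..x₀, f x) (-f (φ x₀ s)) (φ x₀ s) :=
        intervalIntegral.integral_hasDerivAt_left (hII _ _ hφs hx₀)
          (hfcont.stronglyMeasurableAtFilter isOpen_Ioi _ hφs) (hfCA _ hφs)
      have h2 : HasDerivAt (fun r => ∫ x in (φ x₀ r)..x₀, f x)
          (-f (φ x₀ s) * bF (φ x₀ s)) s := by
        exact h1.comp s (hder x₀ hx₀ s hs.1 hsT)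
      have h3 : -f (φ x₀ s) * bF (φ x₀ s) = 1 := by
        have hb := hneg _ hφs
        rw [hf_def]
        simp only
        rw [abs_of_neg hb]
        field_simp
        exact div_self hb.ne
      have h4 := h2.sub (hasDerivAt_id' (x := s))
      rw [h3, sub_self] at h4
      exact h4
    have hcont : ContinuousOn (fun r => (∫ x in (φ x₀ r)..x₀, f x) - r) (Set.Icc 0 t) :=
      fun s hs => ((hds s hs).continuousAt).continuousWithinAt
    have key := constant_of_has_deriv_right_zero hcont
      (fun s hs => ((hds s (Set.mem_Icc_of_Ico hs)).hasDerivWithinAt)) t ⟨ht, le_rfl⟩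
    rw [hinit x₀ hx₀] at key
    simp only [intervalIntegral.integral_same, sub_zero] at key
    have heq : (∫ x in (φ x₀ t)..x₀, f x) = t := by linarith
    refine ⟨heq, ?_⟩
    by_contra hlt
    push_neg at hlt
    have hp := hJpos x₀ (φ x₀ t) hx₀ hlt
    have hsymm : (∫ x in (φ x₀ t)..x₀, f x) = -∫ x in x₀..(φ x₀ t), f x :=
      intervalIntegral.integral_symm x₀ (φ x₀ t)
    linarith
  -- bound on interval integrals when the lifetime is finite
  have hTbound : ∀ x₀ ∈ Set.Ioi a, T x₀ ≠ ⊤ → ∀ z, a < z → z ≤ x₀ →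
      (∫ x in z..x₀, f x) ≤ (T x₀).toReal := by
    intro x₀ hx₀ hTne z hz hzx₀
    have hT' : 0 < (T x₀).toReal := ENNReal.toReal_pos (hTpos x₀ hx₀).ne' hTne
    have hev1 : ∀ᶠ s in nhdsWithin (T x₀).toReal (Set.Iio (T x₀).toReal), φ x₀ s < z := by
      filter_upwards [hmax x₀ hx₀ hTne (Iio_mem_nhds hz)] with s hs using hs
    have hev2 : ∀ᶠ s in nhdsWithin (T x₀).toReal (Set.Iio (T x₀).toReal), 0 < s :=
      (eventually_gt_nhds hT').filter_mono nhdsWithin_le_nhds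
    obtain ⟨s, hs1, hs2, hs3⟩ := (hev1.and (hev2.and eventually_mem_nhdsWithin)).exists
    have hsT : ENNReal.ofReal s < T x₀ :=
      (ENNReal.ofReal_lt_iff_lt_toReal hs2.le hTne).2 hs3
    obtain ⟨hint, -⟩ := hstar x₀ hx₀ s hs2.le hsT
    have hφs := hmem x₀ hx₀ s hs2.le hsT
    have hsplit := hJadd (φ x₀ s) z x₀ hφs hz (lt_of_lt_of_le hz hzx₀)
    have h0 : 0 ≤ ∫ x in (φ x₀ s)..z, f x := hJnn _ _ hs1.le
    have hs3' : s < (T x₀).toReal := hs3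
    linarith
  -- monotonicity of the lifetime
  have hTmono : ∀ x₀ ∈ Set.Ioi a, ∀ x₁ : ℝ, x₀ ≤ x₁ → T x₀ ≤ T x₁ := by
    intro x₀ hx₀ x₁ hle
    by_contra hcon
    push_neg at hcon
    have hx₁ : x₁ ∈ Set.Ioi a := lt_of_lt_of_le hx₀ hle
    have hTne : T x₁ ≠ ⊤ := hcon.ne_top
    obtain ⟨r, hr0, hr1, hr2⟩ := ENNReal.lt_iff_exists_real_btwn.1 hcon
    obtain ⟨hint, hφle⟩ := hstar x₀ hx₀ r hr0 hr2
    have hφa := hmem x₀ hx₀ r hr0 hr2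
    have hb := hTbound x₁ hx₁ hTne (φ x₀ r) hφa (hφle.trans hle)
    have hrT' : (T x₁).toReal < r := (ENNReal.lt_ofReal_iff_toReal_lt hTne).1 hr1
    have hsplit := hJadd (φ x₀ r) x₀ x₁ hφa hx₀ hx₁
    have hnn := hJnn x₀ x₁ hle
    linarith
  -- monotonicity of the flow
  have hφmono : ∀ x₀ ∈ Set.Ioi a, ∀ x₁ : ℝ, x₀ ≤ x₁ →
      ∀ t : ℝ, 0 ≤ t → ENNReal.ofReal t < T x₀ → φ x₀ t ≤ φ x₁ t := by
    intro x₀ hx₀ x₁ hle t ht htT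
    have hx₁ : x₁ ∈ Set.Ioi a := lt_of_lt_of_le hx₀ hle
    have htT₁ : ENNReal.ofReal t < T x₁ := lt_of_lt_of_le htT (hTmono x₀ hx₀ x₁ hle)
    obtain ⟨h0, h0'⟩ := hstar x₀ hx₀ t ht htT
    obtain ⟨h1, h1'⟩ := hstar x₁ hx₁ t ht htT₁
    have hφ₀ := hmem x₀ hx₀ t ht htT
    have hφ₁ := hmem x₁ hx₁ t ht htT₁
    by_contra hcon
    push_neg at hcon
    have s1 := hJadd (φ x₁ t) (φ x₀ t) x₀ hφ₁ hφ₀ hx₀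
    have s2 := hJadd (φ x₁ t) x₀ x₁ hφ₁ hx₀ hx₁
    have p1 := hJpos (φ x₁ t) (φ x₀ t) hφ₁ hcon
    have p2 := hJnn x₀ x₁ hle
    linarith
  refine ⟨hTmono, hφmono, ?_, ?_⟩
  · -- part (i)
    rintro ⟨u, hu, hintu⟩ t ht0 htsup
    have hu' : a < u := hu
    have hIint : ∀ z, a < z → MeasureTheory.IntegrableOn f (Set.Ioi z) := by
      intro z hz
      rcases le_or_gt u z with h | h
      · exact hintu.mono_set (Set.Ioi_subset_Ioi h)
      · have h1 : MeasureTheory.IntegrableOn f (Set.Ioc z u) := by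
          have hc : ContinuousOn f (Set.Icc z u) :=
            hfcont.mono fun x hx => lt_of_lt_of_le hz hx.1
          exact hc.integrableOn_Icc.mono_set Set.Ioc_subset_Icc_self
        have h2 := h1.union hintu
        rwa [Set.Ioc_union_Ioi_eq_Ioi h.le] at h2
    have hInn : ∀ z : ℝ, 0 ≤ ∫ x in Set.Ioi z, f x :=
      fun z => MeasureTheory.setIntegral_nonneg measurableSet_Ioi fun x _ => hfnn x
    have hIsplit : ∀ z w, a < z → z ≤ w →
        (∫ x in Set.Ioi z, f x) = (∫ x in z..w, f x) + ∫ x in Set.Ioi w, f x := by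
      intro z w hz hzw
      have hw : a < w := lt_of_lt_of_le hz hzw
      rw [intervalIntegral.integral_of_le hzw,
        ← MeasureTheory.setIntegral_union (Set.Ioc_disjoint_Ioi le_rfl) measurableSet_Ioi
          ((hIint z hz).mono_set Set.Ioc_subset_Ioi_self) (hIint w hw),
        Set.Ioc_union_Ioi_eq_Ioi hzw]
    have hIanti : ∀ z w, a < z → z < w →
        (∫ x in Set.Ioi w, f x) < ∫ x in Set.Ioi z, f x := by
      intro z w hz hzw
      have h1 := hIsplit z w hz hzw.le
      have h2 := hJpos z w hz hzw
      linarith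
    have hIinj : ∀ v w, a < v → a < w →
        (∫ x in Set.Ioi v, f x) < (∫ x in Set.Ioi w, f x) → w < v := by
      intro v w hv hw h
      by_contra hc
      push_neg at hc
      rcases eq_or_lt_of_le hc with rfl | hlt
      · exact lt_irrefl _ h
      · exact absurd h (not_lt.2 (hIanti v w hv hlt).le)
    have hItend : Tendsto (fun w => ∫ x in Set.Ioi w, f x) atTop (𝓝 0) := by
      have h1 : Tendsto (fun w : ℝ => ∫ x in u..w, f x) atTop
          (𝓝 (∫ x in Set.Ioi u, f x)) :=
        MeasureTheory.intervalIntegral_tendsto_integral_Ioi u hintu tendsto_id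
      have h2 : Tendsto (fun w : ℝ => (∫ x in Set.Ioi u, f x) - ∫ x in u..w, f x)
          atTop (𝓝 0) := by
        have h3 := (tendsto_const_nhds (x := ∫ x in Set.Ioi u, f x) (f := atTop (α := ℝ))).sub h1
        simpa using h3
      apply h2.congr'
      filter_upwards [eventually_ge_atTop u] with w hw
      have h3 := hIsplit u w hu' hw
      linarith
    obtain ⟨c₀, hc₀, hc₀T⟩ : ∃ x₀ ∈ Set.Ioi a, ENNReal.ofReal t < T x₀ := by
      simpa [lt_iSup_iff] using htsup
    obtain ⟨hstar₀, hle₀⟩ := hstar c₀ hc₀ t ht0.le hc₀T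
    have hz₀ : a < φ c₀ t := hmem c₀ hc₀ t ht0.le hc₀T
    have hlow : ∀ v, a < v → (∫ x in Set.Ioi v, f x) < t → φ c₀ t ≤ v := by
      intro v hv hvt
      by_contra hcon
      push_neg at hcon
      have h1 := hIsplit v c₀ hv (hcon.le.trans hle₀)
      have h2 := hJadd v (φ c₀ t) c₀ hv hz₀ hc₀
      have h3 := hJnn v (φ c₀ t) hcon.le
      have h4 := hInn c₀
      linarith
    have hSune : {v : ℝ | a < v ∧ (∫ x in Set.Ioi v, f x) < t}.Nonempty := by
      obtain ⟨w, hw1, hw2⟩ :=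
        ((hItend.eventually_lt_const ht0).and (eventually_gt_atTop a)).exists
      exact ⟨w, hw2, hw1⟩
    have hSubdd : BddBelow {v : ℝ | a < v ∧ (∫ x in Set.Ioi v, f x) < t} :=
      ⟨φ c₀ t, fun v hv => hlow v hv.1 hv.2⟩
    set S := {v : ℝ | a < v ∧ (∫ x in Set.Ioi v, f x) < t} with hSdef
    have hz₀ustar : φ c₀ t ≤ sInf S := le_csInf hSune fun v hv => hlow v hv.1 hv.2
    have hustara : a < sInf S := lt_of_lt_of_le hz₀ hz₀ustar
    have hIcont : ∀ z, a < z → ContinuousAt (fun v => ∫ x in Set.Ioi v, f x) z := by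
      intro z hz
      have h1 : HasDerivAt (fun v => ∫ x in u..v, f x) (f z) z :=
        intervalIntegral.integral_hasDerivAt_right (hII u z hu' hz)
          (hfcont.stronglyMeasurableAtFilter isOpen_Ioi z hz) (hfCA z hz)
      have h2 : ContinuousAt (fun v => (∫ x in Set.Ioi u, f x) - ∫ x in u..v, f x) z :=
        continuousAt_const.sub h1.continuousAt
      have heq : ∀ v, a < v →
          (∫ x in Set.Ioi v, f x) = (∫ x in Set.Ioi u, f x) - ∫ x in u..v, f x := by
        intro v hv
        rcases le_or_gt u v with h | h
        · have h3 := hIsplit u v hu' h; linarith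
        · have h3 := hIsplit v u hv h.le
          have h4 : (∫ x in u..v, f x) = -∫ x in v..u, f x :=
            intervalIntegral.integral_symm v u
          linarith
      apply h2.congr
      filter_upwards [isOpen_Ioi.mem_nhds hz] with v hv using (heq v hv).symm
    have hIustar : (∫ x in Set.Ioi (sInf S), f x) = t := by
      by_contra hne
      rcases lt_or_gt_of_ne hne with hlt | hgt
      · have hev := (hIcont _ hustara).eventually_lt_const hlt
        have hev2 : ∀ᶠ v in 𝓝 (sInf S), a < v := eventually_gt_nhds hustara
        obtain ⟨v, ⟨hv1, hv2⟩, hv3⟩ :=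
          (((hev.and hev2).filter_mono nhdsWithin_le_nhds).and
            (eventually_mem_nhdsWithin (s := Set.Iio (sInf S)))).exists
        exact absurd (csInf_le hSubdd ⟨hv2, hv1⟩) (not_le.2 hv3)
      · have hev := (hIcont _ hustara).eventually_const_lt hgt
        obtain ⟨ε, hε, hball⟩ := Metric.eventually_nhds_iff.1 hev
        have hltε : sInf S < sInf S + ε := by linarith
        obtain ⟨v, hvS, hvlt⟩ := (csInf_lt_iff hSubdd hSune).1 hltε
        have hvge : sInf S ≤ v := csInf_le hSubdd hvS
        have hd : dist v (sInf S) < ε := by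
          rw [Real.dist_eq, abs_lt]; constructor <;> linarith
        have := hball hd
        have := hvS.2
        linarith
    have hval : ∀ x₀ ∈ Set.Ioi a, ENNReal.ofReal t < T x₀ →
        (∫ x in Set.Ioi (φ x₀ t), f x) = t + ∫ x in Set.Ioi x₀, f x := by
      intro x₀ hx₀' hT'
      obtain ⟨h1, h2⟩ := hstar x₀ hx₀' t ht0.le hT'
      have h3 := hIsplit (φ x₀ t) x₀ (hmem x₀ hx₀' t ht0.le hT') h2
      linarith
    have hub : ∀ y ∈ {y : ℝ | ∃ x₀ ∈ Set.Ioi a, ENNReal.ofReal t < T x₀ ∧ y = φ x₀ t},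
        y ≤ sInf S := by
      rintro y ⟨x₀, hx₀', hT', rfl⟩
      have h1 := hval x₀ hx₀' hT'
      have h2 := hInn x₀
      by_contra hc
      push_neg at hc
      have h3 := hIanti (sInf S) (φ x₀ t) hustara hc
      rw [hIustar] at h3
      linarith
    have hbdd : BddAbove {y : ℝ | ∃ x₀ ∈ Set.Ioi a, ENNReal.ofReal t < T x₀ ∧ y = φ x₀ t} :=
      ⟨sInf S, hub⟩
    have hne : {y : ℝ | ∃ x₀ ∈ Set.Ioi a, ENNReal.ofReal t < T x₀ ∧ y = φ x₀ t}.Nonempty :=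
      ⟨φ c₀ t, c₀, hc₀, hc₀T, rfl⟩
    refine ⟨hbdd, ?_⟩
    refine le_antisymm (csSup_le hne hub) ?_
    by_contra hc
    push_neg at hc
    set c := sSup {y : ℝ | ∃ x₀ ∈ Set.Ioi a, ENNReal.ofReal t < T x₀ ∧ y = φ x₀ t} with hcdef
    have hz₀c : φ c₀ t ≤ c := le_csSup hbdd ⟨c₀, hc₀, hc₀T, rfl⟩
    have hca : a < c := lt_of_lt_of_le hz₀ hz₀c
    have hIc : t < ∫ x in Set.Ioi c, f x := by
      have h1 := hIanti c (sInf S) hca hc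
      rw [hIustar] at h1; exact h1
    have hev := hItend.eventually_lt_const
      (show (0:ℝ) < (∫ x in Set.Ioi c, f x) - t by linarith)
    obtain ⟨x₀, hx₀small, hx₀ge⟩ := (hev.and (eventually_ge_atTop c₀)).exists
    have hx₀a : x₀ ∈ Set.Ioi a := lt_of_lt_of_le hc₀ hx₀ge
    have hTx₀ : ENNReal.ofReal t < T x₀ := lt_of_lt_of_le hc₀T (hTmono c₀ hc₀ x₀ hx₀ge)
    have h1 := hval x₀ hx₀a hTx₀
    have h2 : (∫ x in Set.Ioi (φ x₀ t), f x) < ∫ x in Set.Ioi c, f x := by linarith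
    have h3 := hIinj _ _ (hmem x₀ hx₀a t ht0.le hTx₀) hca h2
    have h4 : φ x₀ t ≤ c := le_csSup hbdd ⟨x₀, hx₀a, hTx₀, rfl⟩
    linarith
  · -- part (ii)
    intro hnot
    have hd : ∀ z, a < z → ∀ C : ℝ, ∃ w, z ≤ w ∧ C < ∫ x in z..w, f x := by
      intro z hz C
      by_contra hc
      push_neg at hc
      apply hnot
      refine ⟨z, hz, ?_⟩
      have hfi : ∀ n : ℕ, MeasureTheory.IntegrableOn f (Set.Ioc z (z + n)) := by
        intro n
        have hcn : ContinuousOn f (Set.Icc z (z + n)) :=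
          hfcont.mono fun x hx => lt_of_lt_of_le hz hx.1
        exact hcn.integrableOn_Icc.mono_set Set.Ioc_subset_Icc_self
      have htd : Tendsto (fun n : ℕ => z + (n : ℝ)) Filter.atTop Filter.atTop :=
        tendsto_atTop_add_const_left _ z tendsto_natCast_atTop_atTop
      refine MeasureTheory.integrableOn_Ioi_of_intervalIntegral_norm_bounded C z hfi htd ?_
      filter_upwards with n
      have hzn : z ≤ z + (n : ℝ) := le_add_of_nonneg_right n.cast_nonneg
      have heq : (∫ x in z..(z + (n : ℝ)), ‖f x‖) = ∫ x in z..(z + (n : ℝ)), f x :=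
        intervalIntegral.integral_congr fun x _ => Real.norm_of_nonneg (hfnn x)
      rw [heq]
      exact hc _ hzn
    have hmain : ∀ t : ℝ, 0 ≤ t → ∀ M : ℝ, ∃ x₁ ∈ Set.Ioi a, ∀ x₀ : ℝ, x₁ ≤ x₀ →
        ENNReal.ofReal t < T x₀ ∧ M ≤ φ x₀ t := by
      intro t ht M
      set M' := max M (a + 1) with hM'
      have hM'a : a < M' := lt_of_lt_of_le (lt_add_one a) (le_max_right _ _)
      obtain ⟨x₁, hx₁M, hJ⟩ := hd M' hM'a t
      have hM'x₁ : M' < x₁ := by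
        rcases eq_or_lt_of_le hx₁M with rfl | h
        · simp at hJ; linarith
        · exact h
      have hx₁a : x₁ ∈ Set.Ioi a := hM'a.trans hM'x₁
      refine ⟨x₁, hx₁a, fun x₀ hx₀ge => ?_⟩
      have hx₀a : x₀ ∈ Set.Ioi a := lt_of_lt_of_le hx₁a hx₀ge
      have hMx₀ : M' ≤ x₀ := hM'x₁.le.trans hx₀ge
      have hJx₀ : t < ∫ x in M'..x₀, f x := by
        have h1 := hJadd M' x₁ x₀ hM'a hx₁a hx₀a
        have h2 := hJnn x₁ x₀ hx₀ge
        linarith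
      have hA : ENNReal.ofReal t < T x₀ := by
        by_contra hcon
        push_neg at hcon
        have hTne : T x₀ ≠ ⊤ := ne_top_of_le_ne_top ENNReal.ofReal_ne_top hcon
        have h1 := hTbound x₀ hx₀a hTne M' hM'a hMx₀
        have h2 : (T x₀).toReal ≤ t := ENNReal.toReal_le_of_le_ofReal ht hcon
        linarith
      refine ⟨hA, ?_⟩
      obtain ⟨h1, h2⟩ := hstar x₀ hx₀a t ht hA
      by_contra hcon
      push_neg at hcon
      have hφM' : φ x₀ t < M' := lt_of_lt_of_le hcon (le_max_left _ _)
      have hφa := hmem x₀ hx₀a t ht hA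
      have hs := hJadd (φ x₀ t) M' x₀ hφa hM'a hx₀a
      have h3 := hJnn (φ x₀ t) M' hφM'.le
      linarith
    refine ⟨?_, hmain⟩
    by_contra hsup
    obtain ⟨x₁, hx₁a, h⟩ := hmain (⨆ x₀ ∈ Set.Ioi a, T x₀).toReal ENNReal.toReal_nonneg 0
    obtain ⟨hlt, -⟩ := h x₁ le_rfl
    rw [ENNReal.ofReal_toReal hsup] at hlt
    have hle : T x₁ ≤ ⨆ x₀ ∈ Set.Ioi a, T x₀ := le_biSup T hx₁a
    exact absurd hle (not_le.2 hlt)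
end

section
/- Let ψ₁, ψ₂ : (0,∞) → ℝ be locally Lipschitz, with ψ₁ negative for all large x and ∫^∞ dx/|ψ₁(x)| < ∞. Assume ψ₁ is (L,α) non-expansive on (0,∞) for some L, α ≥ 0, and that ψ₂ = ψ₁ + h with h bounded. Let φ₁, φ₂ denote the flows of ψ₁ and ψ₂ and φᵢ(∞,t) = lim_{x₀→∞} φᵢ(x₀,t) the monotone limits. Then the flow φ₂ comes down from infinity (there is t* > 0 such that φ₂(∞,t) < ∞ for all t ∈ (0,t*)) and lim_{t→0+} ( φ₂(∞,t) − φ₁(∞,t) ) = 0. -/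
open Real Set Filter MeasureTheory ENNReal

/-- continuity from local Lipschitz -/
lemma cdi_cont {ψ : ℝ → ℝ}
    (hLip : ∀ x ∈ Set.Ioi (0 : ℝ), ∃ s ∈ nhdsWithin x (Set.Ioi (0 : ℝ)),
      ∃ K : NNReal, LipschitzOnWith K ψ s) :
    ∀ x ∈ Set.Ioi (0 : ℝ), ContinuousAt ψ x := by
  intro x hx
  obtain ⟨s, hs, K, hK⟩ := hLip x hx
  rw [nhdsWithin_eq_nhds.2 (isOpen_Ioi.mem_nhds hx)] at hs
  exact hK.continuousOn.continuousAt hs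

/-- nbhd Lipschitz set -/
lemma cdi_lip_nhds {ψ : ℝ → ℝ}
    (hLip : ∀ x ∈ Set.Ioi (0 : ℝ), ∃ s ∈ nhdsWithin x (Set.Ioi (0 : ℝ)),
      ∃ K : NNReal, LipschitzOnWith K ψ s) :
    ∀ x ∈ Set.Ioi (0 : ℝ), ∃ s ∈ nhds x, ∃ K : NNReal, LipschitzOnWith K ψ s := by
  intro x hx
  obtain ⟨s, hs, K, hK⟩ := hLip x hx
  rw [nhdsWithin_eq_nhds.2 (isOpen_Ioi.mem_nhds hx)] at hs
  exact ⟨s, hs, K, hK⟩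

/-- Forward uniqueness of solutions of a locally Lipschitz ODE on `(0,∞)`. -/
lemma cdi_uniq {ψ : ℝ → ℝ}
    (hLip : ∀ x ∈ Set.Ioi (0 : ℝ), ∃ s ∈ nhdsWithin x (Set.Ioi (0 : ℝ)),
      ∃ K : NNReal, LipschitzOnWith K ψ s)
    {f g : ℝ → ℝ} {a b : ℝ} (hab : a ≤ b)
    (hf : ∀ s ∈ Icc a b, HasDerivAt f (ψ (f s)) s)
    (hfpos : ∀ s ∈ Icc a b, 0 < f s)
    (hg : ∀ s ∈ Icc a b, HasDerivAt g (ψ (g s)) s)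
    (hgpos : ∀ s ∈ Icc a b, 0 < g s)
    (heq : f a = g a) : ∀ s ∈ Icc a b, f s = g s := by
  set A : Set ℝ := {s ∈ Icc a b | ∀ r ∈ Icc a s, f r = g r} with hA
  have haA : a ∈ A := ⟨⟨le_rfl, hab⟩, fun r hr => by
    have : r = a := le_antisymm hr.2 hr.1
    rw [this, heq]⟩
  have hbddA : BddAbove A := ⟨b, fun s hs => hs.1.2⟩
  set c := sSup A with hc
  have hcA : a ≤ c := le_csSup hbddA haA
  have hcb : c ≤ b := csSup_le ⟨a, haA⟩ (fun s hs => hs.1.2)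
  have hcIcc : c ∈ Icc a b := ⟨hcA, hcb⟩
  -- f = g on [a, c)
  have hIco : ∀ r ∈ Ico a c, f r = g r := by
    intro r hr
    obtain ⟨s, hsA, hrs⟩ := exists_lt_of_lt_csSup ⟨a, haA⟩ hr.2
    exact hsA.2 r ⟨hr.1, hrs.le⟩
  -- f c = g c
  have hfgc : f c = g c := by
    rcases eq_or_lt_of_le hcA with h | h
    · rw [← h, heq]
    · have hcont : ContinuousAt (fun s => f s - g s) c :=
        ((hf c hcIcc).continuousAt.sub (hg c hcIcc).continuousAt)
      have hne : (nhdsWithin c (Ico a c)).NeBot := by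
        apply mem_closure_iff_nhdsWithin_neBot.1
        rw [closure_Ico h.ne]
        exact ⟨hcA, le_rfl⟩
      have h1 : Tendsto (fun s => f s - g s) (nhdsWithin c (Ico a c)) (nhds (f c - g c)) :=
        hcont.continuousWithinAt.tendsto
      have h2 : Tendsto (fun s => f s - g s) (nhdsWithin c (Ico a c)) (nhds 0) := by
        apply Tendsto.congr' _ tendsto_const_nhds
        filter_upwards [self_mem_nhdsWithin] with r hr
        rw [hIco r hr]; ring
      have := tendsto_nhds_unique h1 h2
      linarith [this]
  have hEqc : ∀ r ∈ Icc a c, f r = g r := by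
    intro r hr
    rcases eq_or_lt_of_le hr.2 with h | h
    · rw [h, hfgc]
    · exact hIco r ⟨hr.1, h⟩
  -- c = b
  rcases eq_or_lt_of_le hcb with hcb' | hcb'
  · intro s hs
    exact hEqc s ⟨hs.1, hs.2.trans_eq hcb'.symm⟩
  · exfalso
    -- local uniqueness past c
    obtain ⟨s, hs, K, hK⟩ := cdi_lip_nhds hLip (f c) (hfpos c hcIcc)
    have hgs : g c ∈ {x | x ∈ s} := by rw [← hfgc]; exact mem_of_mem_nhds hs
    have hev : ∀ᶠ r in nhds c, f r ∈ s ∧ g r ∈ s := by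
      have h1 := (hf c hcIcc).continuousAt.preimage_mem_nhds hs
      have h2 := (hg c hcIcc).continuousAt.preimage_mem_nhds (by rw [← hfgc]; exact hs)
      filter_upwards [h1, h2] with r hr1 hr2 using ⟨hr1, hr2⟩
    obtain ⟨δ, hδ, hball⟩ := Metric.eventually_nhds_iff_ball.1 hev
    set b' := min b (c + δ / 2) with hb'
    have hcb'' : c < b' := lt_min hcb' (by linarith)
    have hb'b : b' ≤ b := min_le_left _ _
    have hsub : Icc c b' ⊆ Icc a b := Icc_subset_Icc hcA hb'b
    have hballs : ∀ r ∈ Icc c b', r ∈ Metric.ball c δ := by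
      intro r hr
      rw [Metric.mem_ball, Real.dist_eq, abs_of_nonneg (by linarith [hr.1])]
      have := hr.2.trans (min_le_right b (c + δ / 2))
      linarith
    have huniq : EqOn f g (Icc c b') := by
      apply ODE_solution_unique_of_mem_Icc_right
        (v := fun _ => ψ) (s := fun _ => s) (fun _ _ => hK)
      · exact fun r hr => ((hf r (hsub hr)).continuousAt).continuousWithinAt
      · exact fun r hr => (hf r (hsub (Ico_subset_Icc_self hr))).hasDerivWithinAt
      · exact fun r hr => (hball r (hballs r (Ico_subset_Icc_self hr))).1
      · exact fun r hr => ((hg r (hsub hr)).continuousAt).continuousWithinAt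
      · exact fun r hr => (hg r (hsub (Ico_subset_Icc_self hr))).hasDerivWithinAt
      · exact fun r hr => (hball r (hballs r (Ico_subset_Icc_self hr))).2
      · exact hfgc
    have hb'A : b' ∈ A := by
      refine ⟨⟨hcA.trans hcb''.le, hb'b⟩, fun r hr => ?_⟩
      rcases le_or_gt r c with h | h
      · exact hEqc r ⟨hr.1, h⟩
      · exact huniq ⟨h.le, hr.2⟩
    exact absurd (le_csSup hbddA hb'A) (not_le.2 hcb'')

/-- Solutions of a locally Lipschitz scalar ODE preserve order. -/
lemma cdi_mono {ψ : ℝ → ℝ}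
    (hLip : ∀ x ∈ Set.Ioi (0 : ℝ), ∃ s ∈ nhdsWithin x (Set.Ioi (0 : ℝ)),
      ∃ K : NNReal, LipschitzOnWith K ψ s)
    {f g : ℝ → ℝ} {t : ℝ} (ht : 0 ≤ t)
    (hf : ∀ s ∈ Icc 0 t, HasDerivAt f (ψ (f s)) s)
    (hfpos : ∀ s ∈ Icc 0 t, 0 < f s)
    (hg : ∀ s ∈ Icc 0 t, HasDerivAt g (ψ (g s)) s)
    (hgpos : ∀ s ∈ Icc 0 t, 0 < g s)
    (h0 : f 0 ≤ g 0) : f t ≤ g t := by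
  by_contra hcon
  push_neg at hcon   -- g t < f t
  set A : Set ℝ := {s ∈ Icc 0 t | f s ≤ g s} with hA
  have h0A : (0:ℝ) ∈ A := ⟨⟨le_rfl, ht⟩, h0⟩
  have hbddA : BddAbove A := ⟨t, fun s hs => hs.1.2⟩
  set c := sSup A with hc
  have hc0 : 0 ≤ c := le_csSup hbddA h0A
  have hct : c ≤ t := csSup_le ⟨0, h0A⟩ (fun s hs => hs.1.2)
  have hcIcc : c ∈ Icc 0 t := ⟨hc0, hct⟩
  have hcontc : ContinuousAt (fun s => f s - g s) c :=
    (hf c hcIcc).continuousAt.sub (hg c hcIcc).continuousAt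
  -- f c ≤ g c
  have hle : f c ≤ g c := by
    have hne : (nhdsWithin c A).NeBot := by
      apply mem_closure_iff_nhdsWithin_neBot.1
      exact csSup_mem_closure ⟨0, h0A⟩ hbddA
    have h1 : Tendsto (fun s => f s - g s) (nhdsWithin c A) (nhds (f c - g c)) :=
      hcontc.continuousWithinAt.tendsto
    have h2 : ∀ᶠ s in nhdsWithin c A, f s - g s ≤ 0 := by
      filter_upwards [self_mem_nhdsWithin] with r hr using sub_nonpos.2 hr.2
    have := le_of_tendsto h1 h2
    linarith
  have hct' : c < t := by
    rcases eq_or_lt_of_le hct with h | h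
    · exfalso; rw [h] at hle; linarith
    · exact h
  -- f > g strictly on (c, t]
  have hgt : ∀ r ∈ Ioc c t, g r < f r := by
    intro r hr
    by_contra hcon2
    push_neg at hcon2
    have : r ∈ A := ⟨⟨hc0.trans hr.1.le, hr.2⟩, hcon2⟩
    exact absurd (le_csSup hbddA this) (not_le.2 hr.1)
  -- f c ≥ g c
  have hge : g c ≤ f c := by
    have hne : (nhdsWithin c (Ioc c t)).NeBot := by
      apply mem_closure_iff_nhdsWithin_neBot.1
      rw [closure_Ioc hct'.ne]
      exact ⟨le_rfl, hct⟩
    have h1 : Tendsto (fun s => f s - g s) (nhdsWithin c (Ioc c t)) (nhds (f c - g c)) :=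
      hcontc.continuousWithinAt.tendsto
    have h2 : ∀ᶠ s in nhdsWithin c (Ioc c t), 0 ≤ f s - g s := by
      filter_upwards [self_mem_nhdsWithin] with r hr using sub_nonneg.2 (hgt r hr).le
    have := ge_of_tendsto h1 h2
    linarith
  have heqc : f c = g c := le_antisymm hle hge
  have hsub : Icc c t ⊆ Icc 0 t := Icc_subset_Icc hc0 le_rfl
  have := cdi_uniq hLip hct'.le (fun s hs => hf s (hsub hs)) (fun s hs => hfpos s (hsub hs))
    (fun s hs => hg s (hsub hs)) (fun s hs => hgpos s (hsub hs)) heqc t ⟨hct'.le, le_rfl⟩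
  linarith

/-- If the field is negative above `X`, solutions stay below `max (f a) X`. -/
lemma cdi_trap {ψ : ℝ → ℝ} {X : ℝ} (hψ : ∀ x : ℝ, X ≤ x → ψ x < 0)
    (hψcont : ∀ x ∈ Set.Ioi (0 : ℝ), ContinuousAt ψ x)
    {f : ℝ → ℝ} {a b : ℝ} (hab : a ≤ b)
    (hf : ∀ s ∈ Icc a b, HasDerivAt f (ψ (f s)) s)
    (hfpos : ∀ s ∈ Icc a b, 0 < f s) :
    f b ≤ max (f a) X := by
  by_contra hcon
  push_neg at hcon
  set B := max (f a) X with hB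
  have hXB : X ≤ B := le_max_right _ _
  set A : Set ℝ := {s ∈ Icc a b | f s ≤ B} with hA
  have h0A : a ∈ A := ⟨⟨le_rfl, hab⟩, le_max_left _ _⟩
  have hbddA : BddAbove A := ⟨b, fun s hs => hs.1.2⟩
  set c := sSup A with hc
  have hca : a ≤ c := le_csSup hbddA h0A
  have hcb : c ≤ b := csSup_le ⟨a, h0A⟩ (fun s hs => hs.1.2)
  have hcIcc : c ∈ Icc a b := ⟨hca, hcb⟩
  have hcontc : ContinuousAt f c := (hf c hcIcc).continuousAt
  have hle : f c ≤ B := by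
    have hne : (nhdsWithin c A).NeBot :=
      mem_closure_iff_nhdsWithin_neBot.1 (csSup_mem_closure ⟨a, h0A⟩ hbddA)
    have h2 : ∀ᶠ s in nhdsWithin c A, f s ≤ B := by
      filter_upwards [self_mem_nhdsWithin] with r hr
      exact hr.2
    exact le_of_tendsto hcontc.continuousWithinAt.tendsto h2
  have hcb' : c < b := by
    rcases eq_or_lt_of_le hcb with h | h
    · exfalso; rw [h] at hle; exact absurd hle (not_le.2 hcon)
    · exact h
  have hgt : ∀ r ∈ Ioc c b, B < f r := by
    intro r hr
    by_contra hcon2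
    push_neg at hcon2
    exact absurd (le_csSup hbddA ⟨⟨hca.trans hr.1.le, hr.2⟩, hcon2⟩) (not_le.2 hr.1)
  have hge : B ≤ f c := by
    have hne : (nhdsWithin c (Ioc c b)).NeBot := by
      apply mem_closure_iff_nhdsWithin_neBot.1
      rw [closure_Ioc hcb'.ne]; exact ⟨le_rfl, hcb⟩
    have h2 : ∀ᶠ s in nhdsWithin c (Ioc c b), B ≤ f s := by
      filter_upwards [self_mem_nhdsWithin] with r hr
      exact (hgt r hr).le
    exact ge_of_tendsto hcontc.continuousWithinAt.tendsto h2
  have heqc : f c = B := le_antisymm hle hge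
  -- f is strictly decreasing on [c, b]
  have hderiv : ∀ r ∈ Icc c b, X ≤ f r := by
    intro r hr
    rcases eq_or_lt_of_le hr.1 with h | h
    · rw [← h, heqc]; exact hXB
    · exact hXB.trans (hgt r ⟨h, hr.2⟩).le
  have hsub : Icc c b ⊆ Icc a b := Icc_subset_Icc hca le_rfl
  have hanti : StrictAntiOn f (Icc c b) := by
    apply strictAntiOn_of_deriv_neg (convex_Icc c b)
      (fun r hr => (hf r (hsub hr)).continuousAt.continuousWithinAt)
    intro r hr
    rw [interior_Icc] at hr
    rw [(hf r (hsub (Ioo_subset_Icc_self hr))).deriv]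
    exact hψ _ (hderiv r (Ioo_subset_Icc_self hr))
  have := hanti (left_mem_Icc.2 hcb'.le) (right_mem_Icc.2 hcb'.le) hcb'
  rw [heqc] at this
  linarith

/-- `ψ₁` tends to `-∞`. -/
lemma cdi_neg_inf {ψ₁ : ℝ → ℝ} {L α u x₁ : ℝ} (hL : 0 ≤ L) (hα : 0 ≤ α)
    (hu : 0 < u)
    (hneg : ∀ x : ℝ, x₁ ≤ x → ψ₁ x < 0)
    (hint : MeasureTheory.IntegrableOn (fun x => 1 / |ψ₁ x|) (Set.Ioi u))
    (hnonexp : ∀ x ∈ Set.Ioi (0 : ℝ), ∀ y ∈ Set.Ioi (0 : ℝ),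
      (ψ₁ x - ψ₁ y) * (x - y) ≤ L * (x - y) ^ 2 + α * |x - y|)
    (M : ℝ) : ∃ X : ℝ, ∀ x : ℝ, X ≤ x → ψ₁ x ≤ -M := by
  by_contra hcon
  push_neg at hcon
  set c := |M| + L + α + 1 with hcdef
  have hc : 0 < c := by positivity
  set w := max x₁ u with hw
  -- a choice function producing large points where ψ₁ > -M
  have hS : ∀ a : ℝ, ∃ x : ℝ, max a (w + 1) ≤ x ∧ -M < ψ₁ x := by
    intro a
    obtain ⟨x, hx1, hx2⟩ := hcon (max a (w + 1))
    exact ⟨x, hx1, hx2⟩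
  choose Z hZ1 hZ2 using hS
  set z : ℕ → ℝ := fun n => Nat.rec (Z 0) (fun _ p => Z (p + 1)) n with hz
  have hz0 : ∀ n, z (n + 1) = Z (z n + 1) := fun n => rfl
  have hzw : ∀ n, w + 1 ≤ z n := by
    intro n
    cases n with
    | zero => exact (le_max_right _ _).trans (hZ1 0)
    | succ k => exact (le_max_right _ _).trans (hZ1 (z k + 1))
  have hzψ : ∀ n, -M < ψ₁ (z n) := by
    intro n
    cases n with
    | zero => exact hZ2 0
    | succ k => exact hZ2 (z k + 1)
  have hzstep : ∀ n, z n + 1 ≤ z (n + 1) := by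
    intro n
    rw [hz0]
    exact (le_max_left _ _).trans (hZ1 (z n + 1))
  have hzgap : ∀ i j : ℕ, i < j → z i + 1 ≤ z j := by
    intro i j hij
    induction j with
    | zero => omega
    | succ k ih =>
      rcases Nat.lt_succ_iff_lt_or_eq.1 hij with h | h
      · have h1 := ih h
        have h2 := hzstep k
        linarith
      · rw [← h]; exact hzstep i
  -- pointwise bound on each interval
  have hpt : ∀ n, ∀ y ∈ Ioc (z n - 1) (z n), 1 / c ≤ 1 / |ψ₁ y| := by
    intro n y hy
    have hyw : w ≤ y := by have := hzw n; linarith [hy.1]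
    have hyx₁ : x₁ ≤ y := (le_max_left _ _).trans hyw
    have hyu : u ≤ y := (le_max_right _ _).trans hyw
    have hyneg : ψ₁ y < 0 := hneg y hyx₁
    have hybound : -c < ψ₁ y := by
      rcases eq_or_lt_of_le hy.2 with h | h
      · rw [h]
        calc -c < -|M| := by linarith
        _ ≤ -M := by have := neg_abs_le M; linarith [le_abs_self M]
        _ < ψ₁ (z n) := hzψ n
      · -- y < z n, use non-expansiveness
        have hy0 : (0:ℝ) < y := hu.trans_le hyu
        have hzn0 : (0:ℝ) < z n := by have := hzw n; have : u ≤ z n := by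
                                        have := (le_max_right x₁ u); linarith [hzw n, le_max_right x₁ u]
                                      linarith
        have hne := hnonexp y hy0 (z n) hzn0
        set d := z n - y with hd
        have hd0 : 0 < d := by simp [hd]; linarith
        have hd1 : d ≤ 1 := by have := hy.1; simp [hd]; linarith
        have habs : |y - z n| = d := by rw [abs_of_nonpos (by linarith)]; ring
        rw [habs] at hne
        have hne' : (ψ₁ y - ψ₁ (z n)) * (-d) ≤ L * d ^ 2 + α * d := by
          have : (y - z n) = -d := by ring
          rw [this] at hne
          calc (ψ₁ y - ψ₁ (z n)) * (-d) ≤ L * (-d) ^ 2 + α * d := hne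
          _ = L * d ^ 2 + α * d := by ring
        have hdiv : -(ψ₁ y - ψ₁ (z n)) ≤ L * d + α := by
          have h2 : -(ψ₁ y - ψ₁ (z n)) * d ≤ (L * d + α) * d := by nlinarith
          exact le_of_mul_le_mul_right (by nlinarith) hd0
        have hLd : L * d ≤ L := by nlinarith
        have := hzψ n
        have hMabs : -|M| ≤ -M := by
          have := le_abs_self M; linarith
        calc -c = -|M| - L - α - 1 := by rw [hcdef]; ring
        _ < ψ₁ (z n) - L * d - α := by nlinarith [hzψ n]
        _ ≤ ψ₁ y := by linarith
    have habs : |ψ₁ y| ≤ c := by rw [abs_of_neg hyneg]; linarith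
    have habs0 : 0 < |ψ₁ y| := abs_pos.2 hyneg.ne
    exact one_div_le_one_div_of_le habs0 habs
  -- each interval is inside Ioi u
  have hsubint : ∀ n, Ioc (z n - 1) (z n) ⊆ Ioi u := by
    intro n y hy
    have h1 := hzw n
    have h2 : u ≤ w := le_max_right _ _
    exact lt_of_le_of_lt (by linarith) hy.1
  -- integral lower bounds
  set I := ∫ x in Ioi u, 1 / |ψ₁ x| with hI
  have hIub : ∀ N : ℕ, (N : ℝ) * (1 / c) ≤ I := by
    intro N
    have hmeas : ∀ i ∈ Finset.range N, MeasurableSet (Ioc (z i - 1) (z i)) :=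
      fun i _ => measurableSet_Ioc
    have hdisj : Set.Pairwise (↑(Finset.range N))
        (Function.onFun Disjoint fun i => Ioc (z i - 1) (z i)) := by
      intro i _ j _ hij
      simp only [Function.onFun]
      rw [Set.Ioc_disjoint_Ioc]
      rcases lt_or_gt_of_ne hij with h | h
      · have := hzgap i j h
        exact le_trans (min_le_left _ _) (le_trans (by linarith) (le_max_right _ _))
      · have := hzgap j i h
        exact le_trans (min_le_right _ _) (le_trans (by linarith) (le_max_left _ _))
    have hintn : ∀ i ∈ Finset.range N,
        IntegrableOn (fun x => 1 / |ψ₁ x|) (Ioc (z i - 1) (z i)) :=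
      fun i _ => hint.mono_set (hsubint i)
    have hsum := MeasureTheory.integral_biUnion_finset (Finset.range N) hmeas hdisj hintn
    have hunion_sub : (⋃ i ∈ Finset.range N, Ioc (z i - 1) (z i)) ⊆ Ioi u := by
      intro y hy
      simp only [mem_iUnion, Finset.mem_range, exists_prop] at hy
      obtain ⟨i, _, h⟩ := hy
      exact hsubint i h
    have hle2 : ∫ x in ⋃ i ∈ Finset.range N, Ioc (z i - 1) (z i), 1 / |ψ₁ x| ≤ I := by
      apply MeasureTheory.setIntegral_mono_set hint
      · filter_upwards with x
        positivity
      · exact HasSubset.Subset.eventuallyLE hunion_sub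
    have hterm : ∀ i ∈ Finset.range N,
        1 / c ≤ ∫ x in Ioc (z i - 1) (z i), 1 / |ψ₁ x| := by
      intro i hi
      have hvol : volume (Ioc (z i - 1) (z i)) = ENNReal.ofReal 1 := by
        rw [Real.volume_Ioc]
        norm_num
      have := MeasureTheory.setIntegral_ge_of_const_le (measurableSet_Ioc)
        (by rw [hvol]; exact ENNReal.ofReal_ne_top) (hpt i) (hintn i hi)
      rwa [measureReal_def, hvol, ENNReal.toReal_ofReal (by norm_num), smul_eq_mul, one_mul] at this
    calc (N : ℝ) * (1 / c) = ∑ _i ∈ Finset.range N, 1 / c := by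
          rw [Finset.sum_const, Finset.card_range, nsmul_eq_mul]
    _ ≤ ∑ i ∈ Finset.range N, ∫ x in Ioc (z i - 1) (z i), 1 / |ψ₁ x| :=
          Finset.sum_le_sum hterm
    _ = ∫ x in ⋃ i ∈ Finset.range N, Ioc (z i - 1) (z i), 1 / |ψ₁ x| := hsum.symm
    _ ≤ I := hle2
  obtain ⟨N, hN⟩ := exists_nat_gt (c * I)
  have h1 := hIub N
  have h2 : (N : ℝ) ≤ c * I := by
    have := mul_le_mul_of_nonneg_left h1 hc.le
    calc (N : ℝ) = c * ((N : ℝ) * (1 / c)) := by field_simp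
    _ ≤ c * I := this
  linarith

/-- properties of the tail integral `F`. -/
lemma cdi_F {ψ₁ : ℝ → ℝ} {u X : ℝ} (hu : 0 < u) (hXu : u + 1 ≤ X)
    (hψ₁cont : ∀ x ∈ Set.Ioi (0 : ℝ), ContinuousAt ψ₁ x)
    (hint : MeasureTheory.IntegrableOn (fun x => 1 / |ψ₁ x|) (Set.Ioi u))
    (hXneg : ∀ x : ℝ, X ≤ x → ψ₁ x ≤ -1) :
    ∃ F : ℝ → ℝ, (∀ x : ℝ, X ≤ x → 0 ≤ F x) ∧
      (∀ x y : ℝ, X ≤ x → x ≤ y → F y ≤ F x) ∧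
      (∀ x : ℝ, X < x → HasDerivAt F (-(1 / |ψ₁ x|)) x) ∧
      Filter.Tendsto F Filter.atTop (nhds 0) := by
  set f : ℝ → ℝ := fun x => 1 / |ψ₁ x| with hf
  set F : ℝ → ℝ := fun x => ∫ y in Ioi x, f y with hF
  have hfnn : ∀ y : ℝ, 0 ≤ f y := fun y => by positivity
  have hXu' : u < X := by linarith
  have hintX : ∀ x : ℝ, X ≤ x → IntegrableOn f (Ioi x) := fun x hx =>
    hint.mono_set (Ioi_subset_Ioi (by linarith))
  have hfcontAt : ∀ x ∈ Ioi X, ContinuousAt f x := by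
    intro x hx
    simp only [mem_Ioi] at hx
    have hx0 : (0:ℝ) < x := by linarith
    have hne : |ψ₁ x| ≠ 0 := abs_ne_zero.2 (by have := hXneg x hx.le; linarith)
    exact continuousAt_const.div ((hψ₁cont x hx0).abs) hne
  have hfcont : ContinuousOn f (Ioi X) := fun x hx => (hfcontAt x hx).continuousWithinAt
  -- the splitting identity
  have hsplit : ∀ x : ℝ, X ≤ x → F x = (∫ y in Ioi X, f y) - ∫ y in X..x, f y := by
    intro x hx
    rw [intervalIntegral.integral_of_le hx]
    have hunion : Ioc X x ∪ Ioi x = Ioi X := Ioc_union_Ioi_eq_Ioi hx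
    have hdisj : Disjoint (Ioc X x) (Ioi x) := by
      rw [Set.disjoint_left]
      intro y hy1 hy2
      exact absurd hy1.2 (not_le.2 hy2)
    have := MeasureTheory.setIntegral_union hdisj measurableSet_Ioi
      (hint.mono_set (fun y hy => by simp only [mem_Ioi]; exact lt_of_lt_of_le hXu' (le_of_lt hy.1) ))
      (hintX x hx)
    rw [hunion] at this
    rw [this]; ring
  refine ⟨F, ?_, ?_, ?_, ?_⟩
  · intro x hx
    exact MeasureTheory.setIntegral_nonneg measurableSet_Ioi (fun y _ => hfnn y)
  · intro x y hx hxy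
    apply MeasureTheory.setIntegral_mono_set (hintX x hx)
    · filter_upwards with z
      exact hfnn z
    · exact HasSubset.Subset.eventuallyLE (Ioi_subset_Ioi hxy)
  · intro x hx
    have hFTC : HasDerivAt (fun y => ∫ z in X..y, f z) (f x) x := by
      apply intervalIntegral.integral_hasDerivAt_right
      · constructor
        · exact (hint.mono_set (fun y hy => lt_of_lt_of_le hXu' (le_of_lt hy.1)))
        · exact (hint.mono_set (fun y hy => by
            simp only [mem_Ioi]
            have := hy.1
            linarith))
      · exact ContinuousOn.stronglyMeasurableAtFilter isOpen_Ioi hfcont x hx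
      · exact hfcontAt x hx
    have hD : HasDerivAt (fun y => (∫ z in Ioi X, f z) - ∫ z in X..y, f z) (-(f x)) x := by
      have := (hasDerivAt_const x (∫ z in Ioi X, f z)).sub hFTC; simp only [zero_sub] at this; exact this
    apply hD.congr_of_eventuallyEq
    filter_upwards [isOpen_Ioi.mem_nhds hx] with y hy
    exact hsplit y (le_of_lt hy)
  · have h1 : Tendsto (fun x => ∫ y in X..x, f y) atTop (nhds (∫ y in Ioi X, f y)) :=
      MeasureTheory.intervalIntegral_tendsto_integral_Ioi X (hintX X le_rfl) tendsto_id
    have h2 : Tendsto (fun x => (∫ y in Ioi X, f y) - ∫ y in X..x, f y) atTop (nhds 0) := by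
      have := (tendsto_const_nhds (x := (∫ y in Ioi X, f y)) (f := atTop)).sub h1
      simpa using this
    apply h2.congr'
    filter_upwards [eventually_ge_atTop X] with x hx
    exact (hsplit x hx).symm

/-- Uniform upper bound for the flow of a field dominated by `ψ₁/2`. -/
lemma cdi_flow_bound {ψ ψ₁ : ℝ → ℝ} {X R t : ℝ} {F : ℝ → ℝ}
    (hψcont : ∀ x ∈ Set.Ioi (0 : ℝ), ContinuousAt ψ x)
    (hFnn : ∀ x : ℝ, X ≤ x → 0 ≤ F x)
    (hFanti : ∀ x y : ℝ, X ≤ x → x ≤ y → F y ≤ F x)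
    (hFderiv : ∀ x : ℝ, X < x → HasDerivAt F (-(1 / |ψ₁ x|)) x)
    (hψ₁neg : ∀ x : ℝ, X ≤ x → ψ₁ x ≤ -1)
    (hψle : ∀ x : ℝ, X ≤ x → ψ x ≤ ψ₁ x / 2)
    (hXR : X ≤ R) (hFR : F R < t / 2) (ht : 0 < t)
    {f : ℝ → ℝ}
    (hf : ∀ s ∈ Icc 0 t, HasDerivAt f (ψ (f s)) s)
    (hfpos : ∀ s ∈ Icc 0 t, 0 < f s) :
    f t ≤ max X R := by
  have hψneg : ∀ x : ℝ, X ≤ x → ψ x < 0 := by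
    intro x hx
    have h1 := hψle x hx
    have h2 := hψ₁neg x hx
    linarith
  by_cases hcase : ∀ s ∈ Icc 0 t, X < f s
  · -- G s := F (f s) - s/2 is monotone
    set G : ℝ → ℝ := fun s => F (f s) - s / 2 with hG
    have hGderiv : ∀ s ∈ Icc 0 t, HasDerivAt G (-(1 / |ψ₁ (f s)|) * ψ (f s) - 1 / 2) s := by
      intro s hs
      have h1 := (hFderiv (f s) (hcase s hs)).comp s (hf s hs)
      have h2 : HasDerivAt (fun r : ℝ => r / 2) (1 / 2 : ℝ) s := by
        simpa using (hasDerivAt_id s).div_const 2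
      exact h1.sub h2
    have hGd_nonneg : ∀ s ∈ Icc 0 t, 0 ≤ -(1 / |ψ₁ (f s)|) * ψ (f s) - 1 / 2 := by
      intro s hs
      set y := f s with hy
      have hXy : X ≤ y := (hcase s hs).le
      have h1 := hψ₁neg y hXy
      have h2 := hψle y hXy
      have habs : |ψ₁ y| = -ψ₁ y := abs_of_neg (by linarith)
      have hna : (0:ℝ) < -ψ₁ y := by linarith
      have hstep : (1 / -ψ₁ y) * (-ψ₁ y / 2) ≤ (1 / -ψ₁ y) * (-ψ y) :=
        mul_le_mul_of_nonneg_left (by linarith) (by positivity)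
      have heq : (1 / -ψ₁ y) * (-ψ₁ y / 2) = 1 / 2 := by field_simp; exact div_self (by linarith : ψ₁ y < 0).ne
      have hrw : -(1 / |ψ₁ y|) * ψ y = (1 / -ψ₁ y) * (-ψ y) := by rw [habs]; ring
      rw [hrw]
      linarith [hstep, heq]
    have hGmono : G 0 ≤ G t := by
      have hcont : ContinuousOn G (Icc 0 t) := fun s hs =>
        (hGderiv s hs).continuousAt.continuousWithinAt
      have hmono := monotoneOn_of_deriv_nonneg (convex_Icc 0 t) hcont
        (fun s hs => by
          rw [interior_Icc] at hs
          exact (hGderiv s (Ioo_subset_Icc_self hs)).differentiableAt.differentiableWithinAt)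
        (fun s hs => by
          rw [interior_Icc] at hs
          rw [(hGderiv s (Ioo_subset_Icc_self hs)).deriv]
          exact hGd_nonneg s (Ioo_subset_Icc_self hs))
      exact hmono (left_mem_Icc.2 ht.le) (right_mem_Icc.2 ht.le) ht.le
    by_contra hcon
    push_neg at hcon
    have hRft : R ≤ f t := (le_max_right X R).trans hcon.le
    have hFle : F (f t) ≤ F R := hFanti R (f t) hXR hRft
    have h0 : 0 ≤ F (f 0) := hFnn _ (hcase 0 (left_mem_Icc.2 ht.le)).le
    have hGm : F (f 0) - 0 / 2 ≤ F (f t) - t / 2 := hGmono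
    simp only [zero_div, sub_zero] at hGm
    linarith
  · push_neg at hcase
    obtain ⟨s, hs, hfsX⟩ := hcase
    have hsub : Icc s t ⊆ Icc 0 t := Icc_subset_Icc hs.1 le_rfl
    have := cdi_trap hψneg hψcont hs.2 (fun r hr => hf r (hsub hr)) (fun r hr => hfpos r (hsub hr))
    calc f t ≤ max (f s) X := this
    _ ≤ max X R := by
        apply max_le
        · exact le_max_left X R |>.trans' (hfsX)
        · exact le_max_left X R

lemma cdi_gb_tendsto (L ε : ℝ) :
    Filter.Tendsto (fun t => gronwallBound 0 L ε t) (nhds 0) (nhds 0) := by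
  have hcont : Continuous (fun t => gronwallBound 0 L ε t) := by
    rcases eq_or_ne L 0 with h | h
    · rw [h]
      simp only [gronwallBound_K0]
      continuity
    · simp only [gronwallBound_of_K_ne_0 h]
      continuity
  have := hcont.tendsto 0
  rwa [gronwallBound_x0] at this

/-- Grönwall estimate between the two flows. -/
lemma cdi_gronwall {ψ₁ ψ₂ : ℝ → ℝ} {L α Ch t : ℝ} (hα : 0 ≤ α) (hCh : 0 ≤ Ch)
    (hnonexp : ∀ x ∈ Set.Ioi (0 : ℝ), ∀ y ∈ Set.Ioi (0 : ℝ),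
      (ψ₁ x - ψ₁ y) * (x - y) ≤ L * (x - y) ^ 2 + α * |x - y|)
    (hbdd : ∀ x ∈ Set.Ioi (0 : ℝ), |ψ₂ x - ψ₁ x| ≤ Ch)
    {f g : ℝ → ℝ} (ht : 0 ≤ t)
    (hf : ∀ s ∈ Icc 0 t, HasDerivAt f (ψ₁ (f s)) s)
    (hfpos : ∀ s ∈ Icc 0 t, 0 < f s)
    (hg : ∀ s ∈ Icc 0 t, HasDerivAt g (ψ₂ (g s)) s)
    (hgpos : ∀ s ∈ Icc 0 t, 0 < g s)
    (h0 : g 0 = f 0) :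
    |g t - f t| ≤ gronwallBound 0 L (α + Ch) t := by
  have key := le_gronwallBound_of_liminf_deriv_right_le
    (f := fun s => |g s - f s|) (f' := fun s => L * |g s - f s| + (α + Ch))
    (δ := 0) (K := L) (ε := α + Ch) (a := 0) (b := t)
    (fun s hs => (((hg s hs).continuousAt.sub (hf s hs).continuousAt).abs).continuousWithinAt)
    ?slope (by show |g 0 - f 0| ≤ 0; rw [h0]; simp) (fun s _ => le_rfl) t (right_mem_Icc.2 ht)
  · rwa [sub_zero] at key
  · intro s hs r hr
    have hs' : s ∈ Icc 0 t := Ico_subset_Icc_self hs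
    have hΔder : HasDerivAt (fun z => g z - f z) (ψ₂ (g s) - ψ₁ (f s)) s :=
      (hg s hs').sub (hf s hs')
    rcases lt_trichotomy (g s - f s) 0 with hsgn | hsgn | hsgn
    · -- |Δ| = -Δ near s
      have hev : ∀ᶠ z in nhds s, g z - f z < 0 :=
        hΔder.continuousAt.eventually_lt_const hsgn
      have habs : (fun z => |g z - f z|) =ᶠ[nhds s] (fun z => -(g z - f z)) := by
        filter_upwards [hev] with z hz
        rw [abs_of_neg hz]
      have hder2 : HasDerivAt (fun z => |g z - f z|) (-(ψ₂ (g s) - ψ₁ (f s))) s :=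
        hΔder.neg.congr_of_eventuallyEq habs
      have hbound : -(ψ₂ (g s) - ψ₁ (f s)) ≤ L * |g s - f s| + (α + Ch) := by
        set d := f s - g s with hd
        have hd0 : 0 < d := by simp only [hd]; linarith
        have habs' : |g s - f s| = d := by rw [abs_of_neg hsgn]; ring
        have h1 : ψ₁ (f s) - ψ₁ (g s) ≤ L * d + α := by
          have hne := hnonexp (f s) (hfpos s hs') (g s) (hgpos s hs')
          rw [show f s - g s = d from rfl, abs_of_pos hd0] at hne
          nlinarith
        have h2 : ψ₁ (g s) - ψ₂ (g s) ≤ Ch := by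
          have := hbdd (g s) (hgpos s hs')
          have := abs_le.1 this
          linarith [this.1]
        rw [habs']
        have : -(ψ₂ (g s) - ψ₁ (f s)) = (ψ₁ (f s) - ψ₁ (g s)) + (ψ₁ (g s) - ψ₂ (g s)) := by ring
        rw [this]
        linarith
      have hfreq := hder2.hasDerivWithinAt.liminf_right_slope_le (lt_of_le_of_lt hbound hr)
      apply hfreq.mono
      intro z hz
      rwa [slope_def_field, div_eq_inv_mul] at hz
    · -- Δ s = 0
      have hnorm : ‖ψ₂ (g s) - ψ₁ (f s)‖ < r := by
        have heq : g s = f s := by linarith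
        rw [Real.norm_eq_abs, heq]
        have := hbdd (f s) (hfpos s hs')
        calc |ψ₂ (f s) - ψ₁ (f s)| ≤ Ch := this
        _ ≤ L * |g s - f s| + (α + Ch) := by
            rw [heq, sub_self, abs_zero, mul_zero]
            linarith
        _ < r := hr
      have := hΔder.hasDerivWithinAt.liminf_right_slope_norm_le hnorm
      apply this.mono
      intro z hz
      simpa [Real.norm_eq_abs] using hz
    · -- Δ s > 0
      have hev : ∀ᶠ z in nhds s, 0 < g z - f z :=
        hΔder.continuousAt.eventually_const_lt hsgn
      have habs : (fun z => |g z - f z|) =ᶠ[nhds s] (fun z => g z - f z) := by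
        filter_upwards [hev] with z hz
        rw [abs_of_pos hz]
      have hder2 : HasDerivAt (fun z => |g z - f z|) (ψ₂ (g s) - ψ₁ (f s)) s :=
        hΔder.congr_of_eventuallyEq habs
      have hbound : ψ₂ (g s) - ψ₁ (f s) ≤ L * |g s - f s| + (α + Ch) := by
        set d := g s - f s with hd
        have hd0 : 0 < d := hsgn
        have habs' : |g s - f s| = d := abs_of_pos hd0
        have h1 : ψ₁ (g s) - ψ₁ (f s) ≤ L * d + α := by
          have hne := hnonexp (g s) (hgpos s hs') (f s) (hfpos s hs')
          rw [show g s - f s = d from rfl, abs_of_pos hd0] at hne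
          nlinarith
        have h2 : ψ₂ (g s) - ψ₁ (g s) ≤ Ch := by
          have := abs_le.1 (hbdd (g s) (hgpos s hs'))
          linarith [this.2]
        rw [habs']
        have : ψ₂ (g s) - ψ₁ (f s) = (ψ₂ (g s) - ψ₁ (g s)) + (ψ₁ (g s) - ψ₁ (f s)) := by ring
        rw [this]
        linarith
      have hfreq := hder2.hasDerivWithinAt.liminf_right_slope_le (lt_of_le_of_lt hbound hr)
      apply hfreq.mono
      intro z hz
      rwa [slope_def_field, div_eq_inv_mul] at hz

/-- The set of values at time `t` of the flow `φ` of lifetime `T` on `(0,∞)`,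
over all admissible initial conditions; its supremum is the monotone limit
`φ(∞,t)`. -/
def flowVals (T : ℝ → ℝ≥0∞) (φ : ℝ → ℝ → ℝ) (t : ℝ) : Set ℝ :=
  {y : ℝ | ∃ x₀ ∈ Set.Ioi (0 : ℝ), ENNReal.ofReal t < T x₀ ∧ y = φ x₀ t}

/-- A bounded perturbation of a non-expansive field coming down from infinity
also comes down from infinity, with the same monotone limit flow as `t → 0+`. -/
theorem stmt16 (ψ₁ ψ₂ : ℝ → ℝ) (L α : ℝ) (hL : 0 ≤ L) (hα : 0 ≤ α)
    (hLip₁ : ∀ x ∈ Set.Ioi (0 : ℝ), ∃ s ∈ nhdsWithin x (Set.Ioi (0 : ℝ)),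
      ∃ K : NNReal, LipschitzOnWith K ψ₁ s)
    (hLip₂ : ∀ x ∈ Set.Ioi (0 : ℝ), ∃ s ∈ nhdsWithin x (Set.Ioi (0 : ℝ)),
      ∃ K : NNReal, LipschitzOnWith K ψ₂ s)
    (hneg : ∃ x₁ : ℝ, ∀ x : ℝ, x₁ ≤ x → ψ₁ x < 0)
    (hint : ∃ u ∈ Set.Ioi (0 : ℝ),
      MeasureTheory.IntegrableOn (fun x => 1 / |ψ₁ x|) (Set.Ioi u))
    (hnonexp : ∀ x ∈ Set.Ioi (0 : ℝ), ∀ y ∈ Set.Ioi (0 : ℝ),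
      (ψ₁ x - ψ₁ y) * (x - y) ≤ L * (x - y) ^ 2 + α * |x - y|)
    (hbdd : ∃ Ch : ℝ, ∀ x ∈ Set.Ioi (0 : ℝ), |ψ₂ x - ψ₁ x| ≤ Ch)
    (T₁ T₂ : ℝ → ℝ≥0∞) (φ₁ φ₂ : ℝ → ℝ → ℝ)
    -- `φ₁` is the (maximal) flow of `ψ₁` on `(0,∞)`
    (hT₁pos : ∀ x₀ ∈ Set.Ioi (0 : ℝ), 0 < T₁ x₀)
    (hinit₁ : ∀ x₀ ∈ Set.Ioi (0 : ℝ), φ₁ x₀ 0 = x₀)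
    (hmem₁ : ∀ x₀ ∈ Set.Ioi (0 : ℝ), ∀ t : ℝ, 0 ≤ t → ENNReal.ofReal t < T₁ x₀ →
      φ₁ x₀ t ∈ Set.Ioi (0 : ℝ))
    (hder₁ : ∀ x₀ ∈ Set.Ioi (0 : ℝ), ∀ t : ℝ, 0 ≤ t → ENNReal.ofReal t < T₁ x₀ →
      HasDerivAt (φ₁ x₀) (ψ₁ (φ₁ x₀ t)) t)
    (hmax₁ : ∀ x₀ ∈ Set.Ioi (0 : ℝ), T₁ x₀ ≠ ⊤ → ∀ K : Set ℝ, IsCompact K →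
      K ⊆ Set.Ioi (0 : ℝ) →
      ∀ᶠ t in nhdsWithin (T₁ x₀).toReal (Set.Iio (T₁ x₀).toReal), φ₁ x₀ t ∉ K)
    -- `φ₂` is the (maximal) flow of `ψ₂` on `(0,∞)`
    (hT₂pos : ∀ x₀ ∈ Set.Ioi (0 : ℝ), 0 < T₂ x₀)
    (hinit₂ : ∀ x₀ ∈ Set.Ioi (0 : ℝ), φ₂ x₀ 0 = x₀)
    (hmem₂ : ∀ x₀ ∈ Set.Ioi (0 : ℝ), ∀ t : ℝ, 0 ≤ t → ENNReal.ofReal t < T₂ x₀ →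
      φ₂ x₀ t ∈ Set.Ioi (0 : ℝ))
    (hder₂ : ∀ x₀ ∈ Set.Ioi (0 : ℝ), ∀ t : ℝ, 0 ≤ t → ENNReal.ofReal t < T₂ x₀ →
      HasDerivAt (φ₂ x₀) (ψ₂ (φ₂ x₀ t)) t)
    (hmax₂ : ∀ x₀ ∈ Set.Ioi (0 : ℝ), T₂ x₀ ≠ ⊤ → ∀ K : Set ℝ, IsCompact K →
      K ⊆ Set.Ioi (0 : ℝ) →
      ∀ᶠ t in nhdsWithin (T₂ x₀).toReal (Set.Iio (T₂ x₀).toReal), φ₂ x₀ t ∉ K) :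
    (∃ tstar > (0 : ℝ), ∀ t ∈ Set.Ioo (0 : ℝ) tstar,
      (∀ M : ℝ, ∃ x₀ ∈ Set.Ioi (0 : ℝ), M ≤ x₀ ∧ ENNReal.ofReal t < T₂ x₀) ∧
      BddAbove (flowVals T₂ φ₂ t)) ∧
    Filter.Tendsto (fun t : ℝ => sSup (flowVals T₂ φ₂ t) - sSup (flowVals T₁ φ₁ t))
      (nhdsWithin 0 (Set.Ioi 0)) (nhds 0) := by
  obtain ⟨x₁, hx₁⟩ := hneg
  obtain ⟨u, hu, hint'⟩ := hint
  obtain ⟨Ch, hCh⟩ := hbdd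
  rw [Set.mem_Ioi] at hu
  have hCh0 : 0 ≤ Ch := le_trans (abs_nonneg _) (hCh 1 (Set.mem_Ioi.2 one_pos))
  have hψ₁cont := cdi_cont hLip₁
  have hψ₂cont := cdi_cont hLip₂
  obtain ⟨X', hX'⟩ := cdi_neg_inf hL hα hu hx₁ hint' hnonexp (2 * Ch + 1)
  set X := max X' (u + 1) with hXdef
  have hXu : u + 1 ≤ X := le_max_right _ _
  have hX0 : 0 < X := by linarith
  have hXneg : ∀ x : ℝ, X ≤ x → ψ₁ x ≤ -(2 * Ch + 1) := fun x hx =>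
    hX' x ((le_max_left _ _).trans hx)
  have hψ₁le1 : ∀ x : ℝ, X ≤ x → ψ₁ x ≤ -1 := fun x hx => by
    have := hXneg x hx; linarith
  have hψ₂le : ∀ x : ℝ, X ≤ x → ψ₂ x ≤ ψ₁ x / 2 := by
    intro x hx
    have h1 := hXneg x hx
    have h2 := abs_le.1 (hCh x (Set.mem_Ioi.2 (by linarith)))
    linarith [h2.2]
  have hψ₁half : ∀ x : ℝ, X ≤ x → ψ₁ x ≤ ψ₁ x / 2 := fun x hx => by
    have := hψ₁le1 x hx; linarith
  have hψ₁neg' : ∀ x : ℝ, X ≤ x → ψ₁ x < 0 := fun x hx => by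
    have := hψ₁le1 x hx; linarith
  have hψ₂neg : ∀ x : ℝ, X ≤ x → ψ₂ x < 0 := fun x hx => by
    have := hψ₂le x hx; have := hψ₁le1 x hx; linarith
  obtain ⟨F, hFnn, hFanti, hFderiv, hFtend⟩ := cdi_F hu hXu hψ₁cont hint' hψ₁le1
  -- aliveness packaging
  have halive₁ : ∀ x₀ ∈ Set.Ioi (0:ℝ), ∀ t : ℝ, 0 ≤ t → ENNReal.ofReal t < T₁ x₀ →
      (∀ s ∈ Set.Icc 0 t, HasDerivAt (φ₁ x₀) (ψ₁ (φ₁ x₀ s)) s) ∧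
      (∀ s ∈ Set.Icc 0 t, 0 < φ₁ x₀ s) := by
    intro x₀ hx₀ t ht hT
    have hmem : ∀ s ∈ Set.Icc (0:ℝ) t, ENNReal.ofReal s < T₁ x₀ := fun s hs =>
      lt_of_le_of_lt (ENNReal.ofReal_le_ofReal hs.2) hT
    exact ⟨fun s hs => hder₁ x₀ hx₀ s hs.1 (hmem s hs),
      fun s hs => hmem₁ x₀ hx₀ s hs.1 (hmem s hs)⟩
  have halive₂ : ∀ x₀ ∈ Set.Ioi (0:ℝ), ∀ t : ℝ, 0 ≤ t → ENNReal.ofReal t < T₂ x₀ →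
      (∀ s ∈ Set.Icc 0 t, HasDerivAt (φ₂ x₀) (ψ₂ (φ₂ x₀ s)) s) ∧
      (∀ s ∈ Set.Icc 0 t, 0 < φ₂ x₀ s) := by
    intro x₀ hx₀ t ht hT
    have hmem : ∀ s ∈ Set.Icc (0:ℝ) t, ENNReal.ofReal s < T₂ x₀ := fun s hs =>
      lt_of_le_of_lt (ENNReal.ofReal_le_ofReal hs.2) hT
    exact ⟨fun s hs => hder₂ x₀ hx₀ s hs.1 (hmem s hs),
      fun s hs => hmem₂ x₀ hx₀ s hs.1 (hmem s hs)⟩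
  -- uniform lifetime lemma, generic over the flow data
  have hlife : ∀ (ψ : ℝ → ℝ) (T : ℝ → ℝ≥0∞) (φ : ℝ → ℝ → ℝ),
      (∀ x ∈ Set.Ioi (0 : ℝ), ContinuousAt ψ x) →
      (∀ x ∈ Set.Ioi (0 : ℝ), ∃ s ∈ nhdsWithin x (Set.Ioi (0 : ℝ)),
        ∃ K : NNReal, LipschitzOnWith K ψ s) →
      (∀ x : ℝ, X ≤ x → ψ x < 0) →
      (∀ x₀ ∈ Set.Ioi (0:ℝ), 0 < T x₀) →
      (∀ x₀ ∈ Set.Ioi (0:ℝ), φ x₀ 0 = x₀) →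
      (∀ x₀ ∈ Set.Ioi (0:ℝ), ∀ t : ℝ, 0 ≤ t → ENNReal.ofReal t < T x₀ →
        (∀ s ∈ Set.Icc 0 t, HasDerivAt (φ x₀) (ψ (φ x₀ s)) s) ∧
        (∀ s ∈ Set.Icc 0 t, 0 < φ x₀ s)) →
      (∀ x₀ ∈ Set.Ioi (0 : ℝ), T x₀ ≠ ⊤ → ∀ K : Set ℝ, IsCompact K →
        K ⊆ Set.Ioi (0 : ℝ) →
        ∀ᶠ s in nhdsWithin (T x₀).toReal (Set.Iio (T x₀).toReal), φ x₀ s ∉ K) →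
      ∀ tt : ℝ, 0 < tt → ENNReal.ofReal tt < T (X + 1) →
      ∀ x₀ : ℝ, X + 1 ≤ x₀ → ENNReal.ofReal tt < T x₀ := by
    intro ψ T φ hψcont hψLip hψneg hTpos hinit halive hmax tt htt hTtt x₀ hx₀
    by_contra hcon
    push_neg at hcon
    have hx₀0 : x₀ ∈ Set.Ioi (0:ℝ) := Set.mem_Ioi.2 (by linarith)
    have hy₀0 : (X + 1 : ℝ) ∈ Set.Ioi (0:ℝ) := Set.mem_Ioi.2 (by linarith)
    have hTne : T x₀ ≠ ⊤ := by
      intro h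
      rw [h] at hcon
      exact absurd hcon (by simp)
    set τ := (T x₀).toReal with hτ
    have hτpos : 0 < τ := ENNReal.toReal_pos (hTpos x₀ hx₀0).ne' hTne
    have hτle : τ ≤ tt := by
      have := ENNReal.toReal_mono ENNReal.ofReal_ne_top hcon
      rwa [ENNReal.toReal_ofReal htt.le] at this
    have href := halive (X + 1) hy₀0 tt htt.le hTtt
    have hrefcont : ContinuousOn (φ (X + 1)) (Set.Icc 0 tt) := fun s hs =>
      (href.1 s hs).continuousAt.continuousWithinAt
    obtain ⟨sm, hsm, hminOn⟩ := isCompact_Icc.exists_isMinOn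
      (Set.nonempty_Icc.2 htt.le) hrefcont
    set m := φ (X + 1) sm with hm
    have hm0 : 0 < m := href.2 sm hsm
    have hmaxK := hmax x₀ hx₀0 hTne (Set.Icc m x₀) isCompact_Icc
      (fun y hy => Set.mem_Ioi.2 (lt_of_lt_of_le hm0 hy.1))
    have hIoo : Set.Ioo 0 τ ∈ nhdsWithin τ (Set.Iio τ) :=
      Ioo_mem_nhdsLT_of_mem ⟨hτpos, le_rfl⟩
    obtain ⟨s, hs1, hs2⟩ := (hmaxK.and (eventually_of_mem hIoo (fun y hy => hy))).exists
    have hsτ : ENNReal.ofReal s < T x₀ := by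
      rw [ENNReal.ofReal_lt_iff_lt_toReal hs2.1.le hTne]
      exact hs2.2
    have halivex := halive x₀ hx₀0 s hs2.1.le hsτ
    have hφ0 : φ x₀ 0 = x₀ := hinit x₀ hx₀0
    -- upper bound
    have hup : φ x₀ s ≤ x₀ := by
      have := cdi_trap hψneg hψcont hs2.1.le halivex.1 halivex.2
      rw [hφ0] at this
      calc φ x₀ s ≤ max x₀ X := this
      _ = x₀ := max_eq_left (by linarith)
    -- lower bound via monotonicity
    have hstt : s ≤ tt := le_trans hs2.2.le hτle
    have hsub : Set.Icc (0:ℝ) s ⊆ Set.Icc 0 tt := Set.Icc_subset_Icc le_rfl hstt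
    have hlow : m ≤ φ x₀ s := by
      have hmono := cdi_mono hψLip hs2.1.le
        (fun r hr => href.1 r (hsub hr)) (fun r hr => href.2 r (hsub hr))
        halivex.1 halivex.2
        (by rw [hφ0, hinit (X + 1) hy₀0]; exact hx₀)
      have hms : m ≤ φ (X + 1) s := hminOn ⟨hs2.1.le, hstt⟩
      linarith
    exact hs1 ⟨hlow, hup⟩
  -- choose tstar
  have hext : ∀ (T : ℝ≥0∞), 0 < T → ∃ t : ℝ, 0 < t ∧ ENNReal.ofReal t < T := by
    intro T hT
    rcases eq_or_ne T ⊤ with h | h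
    · exact ⟨1, one_pos, by rw [h]; exact ENNReal.ofReal_lt_top⟩
    · have h2 : 0 < T.toReal := ENNReal.toReal_pos hT.ne' h
      refine ⟨T.toReal / 2, by linarith, ?_⟩
      rw [ENNReal.ofReal_lt_iff_lt_toReal (by linarith) h]
      linarith
  have hy₀0 : (X + 1 : ℝ) ∈ Set.Ioi (0:ℝ) := Set.mem_Ioi.2 (by linarith)
  obtain ⟨t₁, ht₁, hTt₁⟩ := hext (T₁ (X + 1)) (hT₁pos (X + 1) hy₀0)
  obtain ⟨t₂, ht₂, hTt₂⟩ := hext (T₂ (X + 1)) (hT₂pos (X + 1) hy₀0)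
  set tstar := min t₁ t₂ with htstar
  have htstar0 : 0 < tstar := lt_min ht₁ ht₂
  -- lifetime bounds for both flows
  have hlife₁ : ∀ t : ℝ, 0 < t → t < tstar → ∀ x₀ : ℝ, X + 1 ≤ x₀ →
      ENNReal.ofReal t < T₁ x₀ := by
    intro t ht hts x₀ hx₀
    apply hlife ψ₁ T₁ φ₁ hψ₁cont hLip₁ hψ₁neg' hT₁pos hinit₁ halive₁ hmax₁ t ht _ x₀ hx₀
    calc ENNReal.ofReal t < ENNReal.ofReal t₁ :=
          (ENNReal.ofReal_lt_ofReal_iff ht₁).2 (lt_of_lt_of_le hts (min_le_left _ _))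
    _ < T₁ (X + 1) := hTt₁
  have hlife₂ : ∀ t : ℝ, 0 < t → t < tstar → ∀ x₀ : ℝ, X + 1 ≤ x₀ →
      ENNReal.ofReal t < T₂ x₀ := by
    intro t ht hts x₀ hx₀
    apply hlife ψ₂ T₂ φ₂ hψ₂cont hLip₂ hψ₂neg hT₂pos hinit₂ halive₂ hmax₂ t ht _ x₀ hx₀
    calc ENNReal.ofReal t < ENNReal.ofReal t₂ :=
          (ENNReal.ofReal_lt_ofReal_iff ht₂).2 (lt_of_lt_of_le hts (min_le_right _ _))
    _ < T₂ (X + 1) := hTt₂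
  -- uniform upper bound for flow values
  have hbound : ∀ t : ℝ, 0 < t → ∃ B : ℝ,
      (∀ y ∈ flowVals T₁ φ₁ t, y ≤ B) ∧ (∀ y ∈ flowVals T₂ φ₂ t, y ≤ B) := by
    intro t ht
    obtain ⟨R, hR1, hR2⟩ := ((hFtend.eventually_lt_const (show (0:ℝ) < t / 2 by linarith)).and
      (eventually_ge_atTop X)).exists
    refine ⟨max X R, ?_, ?_⟩
    · rintro y ⟨x₀, hx₀, hT, rfl⟩
      have h := halive₁ x₀ hx₀ t ht.le hT
      exact cdi_flow_bound hψ₁cont hFnn hFanti hFderiv hψ₁le1 hψ₁half hR2 hR1 ht h.1 h.2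
    · rintro y ⟨x₀, hx₀, hT, rfl⟩
      have h := halive₂ x₀ hx₀ t ht.le hT
      exact cdi_flow_bound hψ₂cont hFnn hFanti hFderiv hψ₁le1 hψ₂le hR2 hR1 ht h.1 h.2
  -- the key difference estimate
  have hkey : ∀ t : ℝ, 0 < t → t < tstar →
      |sSup (flowVals T₂ φ₂ t) - sSup (flowVals T₁ φ₁ t)| ≤
        gronwallBound 0 L (α + Ch) t := by
    intro t ht hts
    obtain ⟨B, hB1, hB2⟩ := hbound t ht
    have hbdd₁ : BddAbove (flowVals T₁ φ₁ t) := ⟨B, hB1⟩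
    have hbdd₂ : BddAbove (flowVals T₂ φ₂ t) := ⟨B, hB2⟩
    have hmem₁' : φ₁ (X + 1) t ∈ flowVals T₁ φ₁ t :=
      ⟨X + 1, hy₀0, hlife₁ t ht hts (X + 1) le_rfl, rfl⟩
    have hmem₂' : φ₂ (X + 1) t ∈ flowVals T₂ φ₂ t :=
      ⟨X + 1, hy₀0, hlife₂ t ht hts (X + 1) le_rfl, rfl⟩
    set G := gronwallBound 0 L (α + Ch) t with hG
    -- generic comparison for a large starting point
    have hcomp : ∀ x₀' : ℝ, X + 1 ≤ x₀' →
        |φ₂ x₀' t - φ₁ x₀' t| ≤ G := by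
      intro x₀' hx₀'
      have hx₀'0 : x₀' ∈ Set.Ioi (0:ℝ) := Set.mem_Ioi.2 (by linarith)
      have h1 := halive₁ x₀' hx₀'0 t ht.le (hlife₁ t ht hts x₀' hx₀')
      have h2 := halive₂ x₀' hx₀'0 t ht.le (hlife₂ t ht hts x₀' hx₀')
      exact cdi_gronwall hα hCh0 hnonexp hCh ht.le h1.1 h1.2 h2.1 h2.2
        (by rw [hinit₁ x₀' hx₀'0, hinit₂ x₀' hx₀'0])
    have hG0 : 0 ≤ G := by
      have := hcomp (X + 1) le_rfl
      exact le_trans (abs_nonneg _) this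
    have h21 : sSup (flowVals T₂ φ₂ t) ≤ sSup (flowVals T₁ φ₁ t) + G := by
      apply csSup_le ⟨_, hmem₂'⟩
      rintro y ⟨x₀, hx₀, hT, rfl⟩
      set x₀' := max x₀ (X + 1) with hx₀'
      have hx₀'ge : X + 1 ≤ x₀' := le_max_right _ _
      have hx₀'0 : x₀' ∈ Set.Ioi (0:ℝ) := Set.mem_Ioi.2 (by
        have := le_max_right x₀ (X+1); linarith)
      have hTx₀' := hlife₂ t ht hts x₀' hx₀'ge
      have ha := halive₂ x₀ hx₀ t ht.le hT
      have ha' := halive₂ x₀' hx₀'0 t ht.le hTx₀'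
      have hmono : φ₂ x₀ t ≤ φ₂ x₀' t := by
        apply cdi_mono hLip₂ ht.le ha.1 ha.2 ha'.1 ha'.2
        rw [hinit₂ x₀ hx₀, hinit₂ x₀' hx₀'0]
        exact le_max_left _ _
      have hgron := hcomp x₀' hx₀'ge
      have hsup : φ₁ x₀' t ≤ sSup (flowVals T₁ φ₁ t) :=
        le_csSup hbdd₁ ⟨x₀', hx₀'0, hlife₁ t ht hts x₀' hx₀'ge, rfl⟩
      have := abs_le.1 hgron
      linarith [this.2]
    have h12 : sSup (flowVals T₁ φ₁ t) ≤ sSup (flowVals T₂ φ₂ t) + G := by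
      apply csSup_le ⟨_, hmem₁'⟩
      rintro y ⟨x₀, hx₀, hT, rfl⟩
      set x₀' := max x₀ (X + 1) with hx₀'
      have hx₀'ge : X + 1 ≤ x₀' := le_max_right _ _
      have hx₀'0 : x₀' ∈ Set.Ioi (0:ℝ) := Set.mem_Ioi.2 (by
        have := le_max_right x₀ (X+1); linarith)
      have hTx₀' := hlife₁ t ht hts x₀' hx₀'ge
      have ha := halive₁ x₀ hx₀ t ht.le hT
      have ha' := halive₁ x₀' hx₀'0 t ht.le hTx₀'
      have hmono : φ₁ x₀ t ≤ φ₁ x₀' t := by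
        apply cdi_mono hLip₁ ht.le ha.1 ha.2 ha'.1 ha'.2
        rw [hinit₁ x₀ hx₀, hinit₁ x₀' hx₀'0]
        exact le_max_left _ _
      have hgron := hcomp x₀' hx₀'ge
      have hsup : φ₂ x₀' t ≤ sSup (flowVals T₂ φ₂ t) :=
        le_csSup hbdd₂ ⟨x₀', hx₀'0, hlife₂ t ht hts x₀' hx₀'ge, rfl⟩
      have := abs_le.1 hgron
      linarith [this.1]
    rw [abs_le]
    constructor <;> linarith
  constructor
  · refine ⟨tstar, htstar0, fun t ht => ⟨fun M => ?_, ?_⟩⟩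
    · refine ⟨max M (X + 1), Set.mem_Ioi.2 (by
        have := le_max_right M (X+1); linarith), le_max_left _ _,
        hlife₂ t ht.1 ht.2 _ (le_max_right _ _)⟩
    · obtain ⟨B, _, hB2⟩ := hbound t ht.1
      exact ⟨B, fun y hy => hB2 y hy⟩
  · refine squeeze_zero_norm' ?_ ((cdi_gb_tendsto L (α + Ch)).mono_left nhdsWithin_le_nhds)
    filter_upwards [Ioo_mem_nhdsGT_of_mem (Set.left_mem_Ico.2 htstar0)] with t ht
    rw [Real.norm_eq_abs]
    exact hkey t ht.1 ht.2
end

section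
/- Let ψ₁, ψ₂ : (0,∞) → ℝ be locally Lipschitz with ψ₁(x) < 0 for all large x, ∫^∞ dx/|ψ₁(x)| < ∞, and ψ₂(x)/ψ₁(x) → 1 as x → ∞. Then ∫^∞ dx/|ψ₂(x)| < ∞ and the flow φ₂ of ψ₂ comes down from infinity (φ₂(∞,t) < ∞ for all small t > 0). If moreover there exist α > 0 and c > 0 such that φ₁(∞,t) ∼ c t^{−α} as t → 0+, then also φ₂(∞,t) ∼ c t^{−α} as t → 0+. -/
open Real Set Filter MeasureTheory ENNReal

noncomputable def Gfun (ψ : ℝ → ℝ) (z : ℝ) : ℝ := ∫ x in Set.Ioi z, 1 / |ψ x|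

section Gsec

set_option linter.unusedSectionVars false
variable {ψ : ℝ → ℝ} {A₀ : ℝ} (hA₀ : 1 ≤ A₀)
  (hcont : ContinuousOn ψ (Set.Ioi (0:ℝ)))
  (hneg : ∀ x, A₀ ≤ x → ψ x < 0)
  (hint : MeasureTheory.IntegrableOn (fun x => 1 / |ψ x|) (Set.Ioi A₀))

include hA₀ hcont hneg

lemma f_contAt {x : ℝ} (hx : A₀ ≤ x) : ContinuousAt (fun y => 1 / |ψ y|) x := by
  have hx0 : (0:ℝ) < x := lt_of_lt_of_le (by linarith) hx
  have hψ : ContinuousAt ψ x := hcont.continuousAt (isOpen_Ioi.mem_nhds hx0)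
  have hne : |ψ x| ≠ 0 := by
    have h := hneg x hx
    simp [abs_eq_zero]
    exact ne_of_lt h
  exact continuousAt_const.div (hψ.abs) hne

include hint

lemma Gint {z : ℝ} (hz : A₀ ≤ z) :
    MeasureTheory.IntegrableOn (fun x => 1 / |ψ x|) (Set.Ioi z) :=
  hint.mono_set (Set.Ioi_subset_Ioi hz)

lemma Gsplit {a b : ℝ} (ha : A₀ ≤ a) (hab : a ≤ b) :
    Gfun ψ a = (∫ x in Set.Ioc a b, 1 / |ψ x|) + Gfun ψ b := by
  have h1 : MeasureTheory.IntegrableOn (fun x => 1 / |ψ x|) (Set.Ioc a b) :=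
    (Gint hA₀ hcont hneg hint ha).mono_set Set.Ioc_subset_Ioi_self
  have h2 := Gint hA₀ hcont hneg hint (ha.trans hab)
  have hdisj : Disjoint (Set.Ioc a b) (Set.Ioi b) := by
    apply Set.disjoint_left.2
    rintro x ⟨_, hx2⟩ hx3
    exact absurd hx3 (not_lt.2 hx2)
  have := MeasureTheory.setIntegral_union hdisj measurableSet_Ioi h1 h2
    (f := fun x => 1 / |ψ x|) (μ := volume)
  rw [Gfun, Gfun, ← Set.Ioc_union_Ioi_eq_Ioi hab, this]

lemma Gnonneg (z : ℝ) : 0 ≤ Gfun ψ z :=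
  MeasureTheory.setIntegral_nonneg measurableSet_Ioi (fun x _ => by positivity)

lemma GstrictAnti : StrictAntiOn (Gfun ψ) (Set.Ici A₀) := by
  intro a ha b hb hab
  have hsplit := Gsplit hA₀ hcont hneg hint ha hab.le
  have hpos : 0 < ∫ x in Set.Ioc a b, 1 / |ψ x| := by
    have hii : IntervalIntegrable (fun x => 1 / |ψ x|) volume a b :=
      (intervalIntegrable_iff_integrableOn_Ioc_of_le hab.le).2
        ((Gint hA₀ hcont hneg hint ha).mono_set Set.Ioc_subset_Ioi_self)
    have := intervalIntegral.intervalIntegral_pos_of_pos_on hii (fun x hx => by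
      have h1 : ψ x < 0 := hneg x (ha.trans hx.1.le)
      have h0 : 0 < |ψ x| := abs_pos.2 (ne_of_lt h1)
      positivity) hab
    rwa [intervalIntegral.integral_of_le hab.le] at this
  linarith

lemma Gpos {z : ℝ} (hz : A₀ ≤ z) : 0 < Gfun ψ z := by
  have h := GstrictAnti hA₀ hcont hneg hint hz
    (show z + 1 ∈ Set.Ici A₀ by simp only [Set.mem_Ici]; linarith) (by linarith)
  have h2 := Gnonneg hA₀ hcont hneg hint (z + 1)
  linarith

lemma Gtendsto : Filter.Tendsto (Gfun ψ) Filter.atTop (nhds 0) := by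
  have h := MeasureTheory.intervalIntegral_tendsto_integral_Ioi A₀ hint tendsto_id
  have heq : ∀ᶠ b in Filter.atTop, Gfun ψ A₀ - ∫ x in A₀..b, 1 / |ψ x| = Gfun ψ b := by
    filter_upwards [Filter.eventually_ge_atTop A₀] with b hb
    rw [intervalIntegral.integral_of_le hb, Gsplit hA₀ hcont hneg hint le_rfl hb]
    ring
  have : Filter.Tendsto (fun b => Gfun ψ A₀ - ∫ x in A₀..b, 1 / |ψ x|)
      Filter.atTop (nhds (Gfun ψ A₀ - ∫ x in Set.Ioi A₀, 1 / |ψ x|)) :=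
    tendsto_const_nhds.sub h
  rw [show Gfun ψ A₀ - ∫ x in Set.Ioi A₀, 1 / |ψ x| = 0 by rw [Gfun]; ring] at this
  exact Filter.Tendsto.congr' heq this

lemma Gderiv {z : ℝ} (hz : A₀ < z) : HasDerivAt (Gfun ψ) (-(1 / |ψ z|)) z := by
  have hii : IntervalIntegrable (fun x => 1 / |ψ x|) volume A₀ z :=
    (intervalIntegrable_iff_integrableOn_Ioc_of_le hz.le).2
      (hint.mono_set Set.Ioc_subset_Ioi_self)
  have hfc : ContinuousOn (fun x => 1 / |ψ x|) (Set.Ioi A₀) := fun x hx =>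
    (f_contAt hA₀ hcont hneg (le_of_lt hx)).continuousWithinAt
  have hmeas : StronglyMeasurableAtFilter (fun x => 1 / |ψ x|) (nhds z) volume :=
    hfc.stronglyMeasurableAtFilter isOpen_Ioi _ hz
  have hd := intervalIntegral.integral_hasDerivAt_right hii hmeas
    (f_contAt hA₀ hcont hneg hz.le)
  have hd2 : HasDerivAt (fun u => Gfun ψ A₀ - ∫ x in A₀..u, 1 / |ψ x|)
      (-(1 / |ψ z|)) z := by
    simpa using (hasDerivAt_const z (Gfun ψ A₀)).fun_sub hd
  apply hd2.congr_of_eventuallyEq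
  filter_upwards [isOpen_Ioi.mem_nhds hz] with u (hu : A₀ < u)
  rw [Gsplit hA₀ hcont hneg hint le_rfl hu.le, intervalIntegral.integral_of_le hu.le]
  ring

end Gsec

section Flow

variable {ψ : ℝ → ℝ} {A₀ : ℝ} (hA₀ : 1 ≤ A₀)
  (hcont : ContinuousOn ψ (Set.Ioi (0:ℝ)))
  (hneg : ∀ x, A₀ ≤ x → ψ x < 0)
  (hint : MeasureTheory.IntegrableOn (fun x => 1 / |ψ x|) (Set.Ioi A₀))
  {T : ℝ → ℝ≥0∞} {φ : ℝ → ℝ → ℝ}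
  (hTpos : ∀ x₀ ∈ Set.Ioi (0 : ℝ), 0 < T x₀)
  (hinit : ∀ x₀ ∈ Set.Ioi (0 : ℝ), φ x₀ 0 = x₀)
  (hder : ∀ x₀ ∈ Set.Ioi (0 : ℝ), ∀ t : ℝ, 0 ≤ t → ENNReal.ofReal t < T x₀ →
      HasDerivAt (φ x₀) (ψ (φ x₀ t)) t)
  (hmax : ∀ x₀ ∈ Set.Ioi (0 : ℝ), T x₀ ≠ ⊤ → ∀ K : Set ℝ, IsCompact K →
      K ⊆ Set.Ioi (0 : ℝ) →
      ∀ᶠ t in nhdsWithin (T x₀).toReal (Set.Iio (T x₀).toReal), φ x₀ t ∉ K)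

include hA₀ hcont hneg hint hTpos hinit hder hmax

lemma L_identity {x₀ : ℝ} (hx₀ : x₀ ∈ Set.Ioi (0 : ℝ)) {u v : ℝ}
    (hu : 0 ≤ u) (huv : u ≤ v)
    (hall : ∀ s ∈ Set.Icc u v, ENNReal.ofReal s < T x₀ ∧ A₀ < φ x₀ s) :
    Gfun ψ (φ x₀ v) = Gfun ψ (φ x₀ u) + (v - u) := by
  have key : ∀ s ∈ Set.Icc u v, HasDerivAt (fun r => Gfun ψ (φ x₀ r) - r) 0 s := by
    intro s hs
    have hs0 : 0 ≤ s := hu.trans hs.1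
    obtain ⟨hsT, hsA⟩ := hall s hs
    have hd := hder x₀ hx₀ s hs0 hsT
    have hG := Gderiv hA₀ hcont hneg hint hsA
    have hcomp : HasDerivAt (fun r => Gfun ψ (φ x₀ r))
        (-(1 / |ψ (φ x₀ s)|) * ψ (φ x₀ s)) s := hG.comp s hd
    have hψ : ψ (φ x₀ s) < 0 := hneg _ hsA.le
    have hψne : ψ (φ x₀ s) ≠ 0 := ne_of_lt hψ
    have hval : -(1 / |ψ (φ x₀ s)|) * ψ (φ x₀ s) = 1 := by
      rw [abs_of_neg hψ]; field_simp
    rw [hval] at hcomp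
    have := hcomp.fun_sub (hasDerivAt_id s)
    simpa using this
  have hconst := constant_of_has_deriv_right_zero
    (fun s hs => (key s hs).continuousAt.continuousWithinAt)
    (fun s hs => (key s (Set.Ico_subset_Icc_self hs)).hasDerivWithinAt)
  have hv := hconst v (Set.right_mem_Icc.2 huv)
  have : Gfun ψ (φ x₀ v) - v = Gfun ψ (φ x₀ u) - u := hv
  linarith

lemma L_stay {A : ℝ} (hA : A₀ < A) {x₀ t : ℝ} (hx₀A : A ≤ x₀) (ht : 0 ≤ t)
    (hbudget : Gfun ψ x₀ + t < Gfun ψ A) :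
    (∀ s ∈ Set.Icc 0 t, ENNReal.ofReal s < T x₀ ∧ A ≤ φ x₀ s) ∧
    Gfun ψ (φ x₀ t) = Gfun ψ x₀ + t := by
  have hx₀pos : x₀ ∈ Set.Ioi (0 : ℝ) := by
    simp only [Set.mem_Ioi]; linarith
  set P : Set ℝ :=
    {s | s ∈ Set.Icc 0 t ∧ ∀ u ∈ Set.Icc 0 s, ENNReal.ofReal u < T x₀ ∧ A ≤ φ x₀ u}
    with hPdef
  have h0P : (0:ℝ) ∈ P := by
    refine ⟨⟨le_rfl, ht⟩, fun u hu => ?_⟩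
    have hu0 : u = 0 := le_antisymm hu.2 hu.1
    subst hu0
    constructor
    · simpa using hTpos x₀ hx₀pos
    · rw [hinit x₀ hx₀pos]; exact hx₀A
  have hPbdd : BddAbove P := ⟨t, fun s hs => hs.1.2⟩
  have hPne : P.Nonempty := ⟨0, h0P⟩
  set τ := sSup P with hτdef
  have hτmem : τ ∈ Set.Icc 0 t := ⟨le_csSup hPbdd h0P, csSup_le hPne (fun s hs => hs.1.2)⟩
  have hbefore : ∀ u, 0 ≤ u → u < τ → ENNReal.ofReal u < T x₀ ∧ A ≤ φ x₀ u := by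
    intro u hu0 huτ
    obtain ⟨s, hsP, hus⟩ := exists_lt_of_lt_csSup hPne huτ
    exact hsP.2 u ⟨hu0, hus.le⟩
  have hident : ∀ u, 0 ≤ u →
      (∀ s ∈ Set.Icc 0 u, ENNReal.ofReal s < T x₀ ∧ A ≤ φ x₀ s) →
      Gfun ψ (φ x₀ u) = Gfun ψ x₀ + u := by
    intro u hu0 hall
    have := L_identity hA₀ hcont hneg hint hTpos hinit hder hmax hx₀pos le_rfl hu0
      (fun s hs => ⟨(hall s hs).1, lt_of_lt_of_le hA (hall s hs).2⟩)
    rw [hinit x₀ hx₀pos] at this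
    linarith
  have hupper : ∀ u, 0 ≤ u →
      (∀ s ∈ Set.Icc 0 u, ENNReal.ofReal s < T x₀ ∧ A ≤ φ x₀ s) → φ x₀ u ≤ x₀ := by
    intro u hu0 hall
    have hid := hident u hu0 hall
    by_contra hgt
    push_neg at hgt
    have h1 := GstrictAnti hA₀ hcont hneg hint
      (show x₀ ∈ Set.Ici A₀ from hA.le.trans hx₀A)
      (show φ x₀ u ∈ Set.Ici A₀ from hA.le.trans (hall u ⟨hu0, le_rfl⟩).2) hgt
    linarith
  have hτT : ENNReal.ofReal τ < T x₀ := by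
    by_contra hc
    push_neg at hc
    have hTne : T x₀ ≠ ⊤ := by
      intro h
      rw [h] at hc
      exact absurd (le_antisymm hc le_top) (by simp)
    have h1 : (T x₀).toReal ≤ τ := ENNReal.toReal_le_of_le_ofReal hτmem.1 hc
    have h2 : τ ≤ (T x₀).toReal := by
      by_contra h2
      push_neg at h2
      obtain ⟨u, hu1, hu2⟩ := exists_between h2
      have hu0 : 0 ≤ u := le_trans ENNReal.toReal_nonneg hu1.le
      have := (hbefore u hu0 hu2).1
      rw [ENNReal.ofReal_lt_iff_lt_toReal hu0 hTne] at this
      linarith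
    have hteq : (T x₀).toReal = τ := le_antisymm h1 h2
    have hτpos : 0 < τ := by
      rw [← hteq]
      exact ENNReal.toReal_pos (ne_of_gt (hTpos x₀ hx₀pos)) hTne
    have hev := hmax x₀ hx₀pos hTne (Set.Icc A x₀) isCompact_Icc
      (fun y hy => by simp only [Set.mem_Ioi]; linarith [hy.1])
    rw [hteq] at hev
    have hev2 : ∀ᶠ u in nhdsWithin τ (Set.Iio τ), φ x₀ u ∈ Set.Icc A x₀ := by
      filter_upwards [Ioo_mem_nhdsLT_of_mem
        (show τ ∈ Set.Ioc 0 τ from ⟨hτpos, le_rfl⟩)] with u hu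
      have h3 := hbefore u hu.1.le hu.2
      exact ⟨h3.2, hupper u hu.1.le
        (fun s hs => hbefore s hs.1 (lt_of_le_of_lt hs.2 hu.2))⟩
    obtain ⟨u, hu1, hu2⟩ := (hev.and hev2).exists
    exact hu1 hu2
  have hτA : A ≤ φ x₀ τ := by
    rcases eq_or_lt_of_le hτmem.1 with h | hτpos
    · rw [← h, hinit x₀ hx₀pos]; exact hx₀A
    · have hcont' : ContinuousAt (φ x₀) τ := (hder x₀ hx₀pos τ hτmem.1 hτT).continuousAt
      have htd : Filter.Tendsto (φ x₀) (nhdsWithin τ (Set.Iio τ)) (nhds (φ x₀ τ)) :=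
        hcont'.continuousWithinAt.tendsto
      apply ge_of_tendsto htd
      filter_upwards [Ioo_mem_nhdsLT_of_mem
        (show τ ∈ Set.Ioc 0 τ from ⟨hτpos, le_rfl⟩)] with u hu
      exact (hbefore u hu.1.le hu.2).2
  have hτP : τ ∈ P := by
    refine ⟨hτmem, fun u hu => ?_⟩
    rcases lt_or_eq_of_le hu.2 with h | h
    · exact hbefore u hu.1 h
    · rw [h]; exact ⟨hτT, hτA⟩
  have hτt : τ = t := by
    by_contra hnet
    have hτlt : τ < t := lt_of_le_of_ne hτmem.2 hnet
    have hidτ := hident τ hτmem.1 hτP.2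
    have hφτA : A < φ x₀ τ := by
      rcases lt_or_eq_of_le hτA with h | h
      · exact h
      · exfalso
        rw [← h] at hidτ
        linarith [hτmem.2]
    obtain ⟨δ₁, hδ₁pos, hδ₁⟩ : ∃ δ₁ > 0, ∀ u, 0 ≤ u → u ≤ τ + δ₁ →
        ENNReal.ofReal u < T x₀ := by
      by_cases hTtop : T x₀ = ⊤
      · exact ⟨1, one_pos, fun u _ _ => by rw [hTtop]; exact ENNReal.ofReal_lt_top⟩
      · have hτlt' : τ < (T x₀).toReal := by
          rw [← ENNReal.ofReal_lt_iff_lt_toReal hτmem.1 hTtop]; exact hτT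
        refine ⟨((T x₀).toReal - τ) / 2, by linarith, fun u hu0 huδ => ?_⟩
        rw [ENNReal.ofReal_lt_iff_lt_toReal hu0 hTtop]
        linarith
    have hcontτ : ContinuousAt (φ x₀) τ := (hder x₀ hx₀pos τ hτmem.1 hτT).continuousAt
    have hev : ∀ᶠ u in nhds τ, A < φ x₀ u :=
      hcontτ.eventually_mem (Ioi_mem_nhds hφτA)
    obtain ⟨δ₂, hδ₂pos, hδ₂⟩ := Metric.eventually_nhds_iff.1 hev
    set s' := min (τ + min δ₁ (δ₂ / 2)) t with hs'def
    have hmpos : 0 < min δ₁ (δ₂ / 2) := lt_min hδ₁pos (by linarith)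
    have hs'τ : τ < s' := lt_min (by linarith) hτlt
    have hs'P : s' ∈ P := by
      refine ⟨⟨le_trans hτmem.1 hs'τ.le, min_le_right _ _⟩, fun u hu => ?_⟩
      rcases le_or_gt u τ with h | h
      · exact hτP.2 u ⟨hu.1, h⟩
      · have hub : u ≤ τ + min δ₁ (δ₂ / 2) := le_trans hu.2 (min_le_left _ _)
        constructor
        · exact hδ₁ u hu.1 (le_trans hub (by linarith [min_le_left δ₁ (δ₂ / 2)]))
        · refine le_of_lt (hδ₂ ?_)
          rw [Real.dist_eq, abs_of_pos (by linarith : 0 < u - τ)]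
          have := min_le_right δ₁ (δ₂ / 2)
          linarith
    exact absurd (le_csSup hPbdd hs'P) (not_le.2 hs'τ)
  rw [hτt] at hτP
  exact ⟨hτP.2, hident t ht hτP.2⟩

lemma L_upper {t : ℝ} (ht : 0 < t) {B : ℝ} (hB : A₀ + 1 ≤ B) (hGB : Gfun ψ B < t)
    {x₀ : ℝ} (hx₀ : x₀ ∈ Set.Ioi (0:ℝ)) (hT : ENNReal.ofReal t < T x₀) :
    φ x₀ t ≤ max (A₀ + 1) B := by
  have hlife : ∀ s ∈ Set.Icc 0 t, ENNReal.ofReal s < T x₀ :=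
    fun s hs => lt_of_le_of_lt (ENNReal.ofReal_le_ofReal hs.2) hT
  have hφcont : ContinuousOn (φ x₀) (Set.Icc 0 t) := fun s hs =>
    ((hder x₀ hx₀ s hs.1 (hlife s hs)).continuousAt).continuousWithinAt
  by_cases hcase : ∀ s ∈ Set.Icc 0 t, A₀ + 1 ≤ φ x₀ s
  · have hx₀A : A₀ + 1 ≤ x₀ := by
      have := hcase 0 ⟨le_rfl, ht.le⟩; rwa [hinit x₀ hx₀] at this
    have hid := L_identity hA₀ hcont hneg hint hTpos hinit hder hmax hx₀ le_rfl ht.le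
      (fun s hs => ⟨hlife s hs, lt_of_lt_of_le (by linarith) (hcase s hs)⟩)
    rw [hinit x₀ hx₀] at hid
    have hGx₀ : 0 ≤ Gfun ψ x₀ := Gnonneg hA₀ hcont hneg hint x₀
    have hGφ : Gfun ψ B < Gfun ψ (φ x₀ t) := by linarith
    have hφB : φ x₀ t ≤ B := by
      by_contra hgt; push_neg at hgt
      have := GstrictAnti hA₀ hcont hneg hint
        (show B ∈ Set.Ici A₀ by simp only [Set.mem_Ici]; linarith)
        (show φ x₀ t ∈ Set.Ici A₀ by
          simp only [Set.mem_Ici]; linarith [hcase t ⟨ht.le, le_rfl⟩]) hgt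
      linarith
    exact le_max_of_le_right hφB
  · push_neg at hcase
    obtain ⟨s₁, hs₁mem, hs₁⟩ := hcase
    set Q := {s ∈ Set.Icc 0 t | φ x₀ s ≤ A₀ + 1} with hQdef
    have hQne : Q.Nonempty := ⟨s₁, hs₁mem, hs₁.le⟩
    have hQbdd : BddAbove Q := ⟨t, fun s hs => hs.1.2⟩
    have hQclosed : IsClosed Q := by
      have hQ2 : Q = Set.Icc 0 t ∩ φ x₀ ⁻¹' (Set.Iic (A₀ + 1)) := rfl
      rw [hQ2]
      exact hφcont.preimage_isClosed_of_isClosed isClosed_Icc isClosed_Iic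
    have hsQ : sSup Q ∈ Q := hQclosed.csSup_mem hQne hQbdd
    set s₀ := sSup Q with hs₀def
    rcases eq_or_lt_of_le hsQ.1.2 with h | h
    · rw [← h]; exact le_max_of_le_left hsQ.2
    · exfalso
      have hgtA : ∀ u, s₀ < u → u ≤ t → A₀ + 1 < φ x₀ u := by
        intro u hu1 hu2
        by_contra hle; push_neg at hle
        have hmem : u ∈ Q := ⟨⟨le_trans hsQ.1.1 hu1.le, hu2⟩, hle⟩
        exact absurd (le_csSup hQbdd hmem) (not_le.2 hu1)
      have hφs₀ : A₀ + 1 ≤ φ x₀ s₀ := by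
        have htd : Filter.Tendsto (φ x₀) (nhdsWithin s₀ (Set.Ioc s₀ t)) (nhds (φ x₀ s₀)) := by
          apply ((hφcont s₀ hsQ.1).mono ?_).tendsto
          intro u hu; exact ⟨le_trans hsQ.1.1 hu.1.le, hu.2⟩
        rw [nhdsWithin_Ioc_eq_nhdsGT h] at htd
        apply ge_of_tendsto htd
        filter_upwards [Ioc_mem_nhdsGT_of_mem (Set.mem_Ico.2 ⟨le_rfl, h⟩)] with u hu
        exact (hgtA u hu.1 hu.2).le
      have hs₀eq : φ x₀ s₀ = A₀ + 1 := le_antisymm hsQ.2 hφs₀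
      have hid := L_identity hA₀ hcont hneg hint hTpos hinit hder hmax hx₀ hsQ.1.1 h.le
        (fun u hu => by
          refine ⟨hlife u ⟨le_trans hsQ.1.1 hu.1, hu.2⟩, ?_⟩
          rcases lt_or_eq_of_le hu.1 with h' | h'
          · linarith [hgtA u h' hu.2]
          · rw [← h', hs₀eq]; linarith)
      have hφt : A₀ + 1 < φ x₀ t := hgtA t h le_rfl
      have hstrict := GstrictAnti hA₀ hcont hneg hint
        (show A₀ + 1 ∈ Set.Ici A₀ by simp only [Set.mem_Ici]; linarith)
        (show φ x₀ t ∈ Set.Ici A₀ by simp only [Set.mem_Ici]; linarith) hφt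
      rw [hs₀eq] at hid
      linarith

lemma L_sup {A : ℝ} (hA : A₀ + 1 ≤ A) {t : ℝ} (ht : 0 < t) (htG : t < Gfun ψ A) :
    Gfun ψ (sSup (flowVals T φ t)) = t ∧ A < sSup (flowVals T φ t) := by
  have hA₀A : A₀ < A := by linarith
  obtain ⟨C, hC2, hC1⟩ : ∃ C, Gfun ψ C < t ∧ A ≤ C := by
    have htd := Gtendsto hA₀ hcont hneg hint
    exact ((htd.eventually_lt_const ht).and (Filter.eventually_ge_atTop A)).exists
  have hGcont : ContinuousOn (Gfun ψ) (Set.Icc A C) := fun z hz =>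
    ((Gderiv hA₀ hcont hneg hint (lt_of_lt_of_le hA₀A hz.1)).continuousAt).continuousWithinAt
  obtain ⟨z, hzmem, hzG⟩ := intermediate_value_Icc' hC1 hGcont ⟨hC2.le, htG.le⟩
  have hzA : A < z := by
    rcases lt_or_eq_of_le hzmem.1 with h | h
    · exact h
    · exfalso; rw [← h] at hzG; linarith
  have hzA₀ : A₀ ≤ z := by linarith
  have hlower : ∀ δ, 0 < δ → ∃ y ∈ flowVals T φ t, z - δ ≤ y := by
    intro δ hδ
    set w := max (z - δ) A with hwdef
    have hwA₀ : A₀ < w := lt_of_lt_of_le hA₀A (le_max_right _ _)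
    have hwz : w < z := max_lt (by linarith) hzA
    have hGw : t < Gfun ψ w := by
      have h2 := GstrictAnti hA₀ hcont hneg hint
        (show w ∈ Set.Ici A₀ from hwA₀.le) (show z ∈ Set.Ici A₀ from hzA₀) hwz
      rw [hzG] at h2; exact h2
    have htd := Gtendsto hA₀ hcont hneg hint
    obtain ⟨x₀, hx₀1, hx₀2⟩ :=
      ((htd.eventually_lt_const (show (0:ℝ) < Gfun ψ w - t by linarith)).and
        (Filter.eventually_ge_atTop w)).exists
    have hstay := L_stay hA₀ hcont hneg hint hTpos hinit hder hmax hwA₀ hx₀2 ht.le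
      (by linarith)
    have hx₀pos : x₀ ∈ Set.Ioi (0:ℝ) := by simp only [Set.mem_Ioi]; linarith
    refine ⟨φ x₀ t, ⟨x₀, hx₀pos, (hstay.1 t ⟨ht.le, le_rfl⟩).1, rfl⟩, ?_⟩
    calc z - δ ≤ w := le_max_left _ _
    _ ≤ φ x₀ t := (hstay.1 t ⟨ht.le, le_rfl⟩).2
  have hub : ∀ y ∈ flowVals T φ t, y ≤ z := by
    rintro y ⟨x₀, hx₀pos, hx₀T, rfl⟩
    have hkey : ∀ ε, 0 < ε → φ x₀ t ≤ z + ε := by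
      intro ε hε
      have hB : A₀ + 1 ≤ z + ε := by linarith
      have hGB : Gfun ψ (z + ε) < t := by
        have h2 := GstrictAnti hA₀ hcont hneg hint
          (show z ∈ Set.Ici A₀ from hzA₀)
          (show z + ε ∈ Set.Ici A₀ by simp only [Set.mem_Ici]; linarith)
          (by linarith)
        rw [hzG] at h2; exact h2
      have h3 := L_upper hA₀ hcont hneg hint hTpos hinit hder hmax ht hB hGB hx₀pos hx₀T
      rwa [max_eq_right (by linarith : A₀ + 1 ≤ z + ε)] at h3
    by_contra hgt; push_neg at hgt
    have := hkey ((φ x₀ t - z) / 2) (by linarith)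
    linarith
  have hne : (flowVals T φ t).Nonempty := by
    obtain ⟨y, hy, _⟩ := hlower 1 one_pos; exact ⟨y, hy⟩
  have hsup_le : sSup (flowVals T φ t) ≤ z := csSup_le hne hub
  have hsup_ge : z ≤ sSup (flowVals T φ t) := by
    apply le_of_forall_sub_le
    intro ε hε
    obtain ⟨y, hy, hzy⟩ := hlower ε hε
    exact le_trans hzy (le_csSup ⟨z, hub⟩ hy)
  have hsup : sSup (flowVals T φ t) = z := le_antisymm hsup_le hsup_ge
  rw [hsup]; exact ⟨hzG, hzA⟩

end Flow

lemma contOn_of_locLip {ψ : ℝ → ℝ}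
    (h : ∀ x ∈ Set.Ioi (0:ℝ), ∃ s ∈ nhdsWithin x (Set.Ioi (0 : ℝ)),
      ∃ K : NNReal, LipschitzOnWith K ψ s) :
    ContinuousOn ψ (Set.Ioi (0:ℝ)) := by
  intro x hx
  obtain ⟨s, hs, K, hK⟩ := h x hx
  have hxs : x ∈ s := mem_of_mem_nhdsWithin hx hs
  exact (hK.continuousOn x hxs).mono_of_mem_nhdsWithin hs

lemma ratio_facts {ψ₁ ψ₂ : ℝ → ℝ} {x ε : ℝ} (hψ1 : ψ₁ x < 0) (hε : 0 < ε) (hε2 : ε < 1)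
    (hr : |ψ₂ x / ψ₁ x - 1| < ε) :
    ψ₂ x < 0 ∧ (1 - ε) * |ψ₁ x| ≤ |ψ₂ x| ∧ |ψ₂ x| ≤ (1 + ε) * |ψ₁ x| := by
  have hne : ψ₁ x ≠ 0 := ne_of_lt hψ1
  obtain ⟨hr1, hr2⟩ := abs_sub_lt_iff.1 hr
  have hrpos : 0 < ψ₂ x / ψ₁ x := by linarith
  have hval : ψ₂ x = ψ₂ x / ψ₁ x * ψ₁ x := (div_mul_cancel₀ _ hne).symm
  have habs : |ψ₂ x| = ψ₂ x / ψ₁ x * |ψ₁ x| := by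
    conv_lhs => rw [hval]
    rw [abs_mul, abs_of_pos hrpos]
  have habs1 : 0 < |ψ₁ x| := abs_pos.2 hne
  refine ⟨?_, ?_, ?_⟩
  · rw [hval]; exact mul_neg_of_pos_of_neg hrpos hψ1
  · rw [habs]; nlinarith
  · rw [habs]; nlinarith


set_option maxHeartbeats 1600000 in
/-- If `ψ₂ ∼ ψ₁` at infinity and the flow of `ψ₁` comes down from infinity,
then so does the flow of `ψ₂`, with the same polynomial small-time speed
whenever `φ₁(∞,t) ∼ c t^{−α}`. -/
theorem stmt17 (ψ₁ ψ₂ : ℝ → ℝ)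
    (hLip₁ : ∀ x ∈ Set.Ioi (0 : ℝ), ∃ s ∈ nhdsWithin x (Set.Ioi (0 : ℝ)),
      ∃ K : NNReal, LipschitzOnWith K ψ₁ s)
    (hLip₂ : ∀ x ∈ Set.Ioi (0 : ℝ), ∃ s ∈ nhdsWithin x (Set.Ioi (0 : ℝ)),
      ∃ K : NNReal, LipschitzOnWith K ψ₂ s)
    (hneg : ∃ x₁ : ℝ, ∀ x : ℝ, x₁ ≤ x → ψ₁ x < 0)
    (hint : ∃ u ∈ Set.Ioi (0 : ℝ),
      MeasureTheory.IntegrableOn (fun x => 1 / |ψ₁ x|) (Set.Ioi u))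
    (hequiv : Filter.Tendsto (fun x => ψ₂ x / ψ₁ x) Filter.atTop (nhds 1))
    (T₁ T₂ : ℝ → ℝ≥0∞) (φ₁ φ₂ : ℝ → ℝ → ℝ)
    -- `φ₁` is the (maximal) flow of `ψ₁` on `(0,∞)`
    (hT₁pos : ∀ x₀ ∈ Set.Ioi (0 : ℝ), 0 < T₁ x₀)
    (hinit₁ : ∀ x₀ ∈ Set.Ioi (0 : ℝ), φ₁ x₀ 0 = x₀)
    (hmem₁ : ∀ x₀ ∈ Set.Ioi (0 : ℝ), ∀ t : ℝ, 0 ≤ t → ENNReal.ofReal t < T₁ x₀ →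
      φ₁ x₀ t ∈ Set.Ioi (0 : ℝ))
    (hder₁ : ∀ x₀ ∈ Set.Ioi (0 : ℝ), ∀ t : ℝ, 0 ≤ t → ENNReal.ofReal t < T₁ x₀ →
      HasDerivAt (φ₁ x₀) (ψ₁ (φ₁ x₀ t)) t)
    (hmax₁ : ∀ x₀ ∈ Set.Ioi (0 : ℝ), T₁ x₀ ≠ ⊤ → ∀ K : Set ℝ, IsCompact K →
      K ⊆ Set.Ioi (0 : ℝ) →
      ∀ᶠ t in nhdsWithin (T₁ x₀).toReal (Set.Iio (T₁ x₀).toReal), φ₁ x₀ t ∉ K)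
    -- `φ₂` is the (maximal) flow of `ψ₂` on `(0,∞)`
    (hT₂pos : ∀ x₀ ∈ Set.Ioi (0 : ℝ), 0 < T₂ x₀)
    (hinit₂ : ∀ x₀ ∈ Set.Ioi (0 : ℝ), φ₂ x₀ 0 = x₀)
    (hmem₂ : ∀ x₀ ∈ Set.Ioi (0 : ℝ), ∀ t : ℝ, 0 ≤ t → ENNReal.ofReal t < T₂ x₀ →
      φ₂ x₀ t ∈ Set.Ioi (0 : ℝ))
    (hder₂ : ∀ x₀ ∈ Set.Ioi (0 : ℝ), ∀ t : ℝ, 0 ≤ t → ENNReal.ofReal t < T₂ x₀ →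
      HasDerivAt (φ₂ x₀) (ψ₂ (φ₂ x₀ t)) t)
    (hmax₂ : ∀ x₀ ∈ Set.Ioi (0 : ℝ), T₂ x₀ ≠ ⊤ → ∀ K : Set ℝ, IsCompact K →
      K ⊆ Set.Ioi (0 : ℝ) →
      ∀ᶠ t in nhdsWithin (T₂ x₀).toReal (Set.Iio (T₂ x₀).toReal), φ₂ x₀ t ∉ K) :
    (∃ u ∈ Set.Ioi (0 : ℝ),
      MeasureTheory.IntegrableOn (fun x => 1 / |ψ₂ x|) (Set.Ioi u)) ∧
    (∃ tstar > (0 : ℝ), ∀ t ∈ Set.Ioo (0 : ℝ) tstar,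
      (∀ M : ℝ, ∃ x₀ ∈ Set.Ioi (0 : ℝ), M ≤ x₀ ∧ ENNReal.ofReal t < T₂ x₀) ∧
      BddAbove (flowVals T₂ φ₂ t)) ∧
    (∀ α : ℝ, 0 < α → ∀ c : ℝ, 0 < c →
      Filter.Tendsto (fun t : ℝ => sSup (flowVals T₁ φ₁ t) / (c * t ^ (-α)))
        (nhdsWithin 0 (Set.Ioi 0)) (nhds 1) →
      Filter.Tendsto (fun t : ℝ => sSup (flowVals T₂ φ₂ t) / (c * t ^ (-α)))
        (nhdsWithin 0 (Set.Ioi 0)) (nhds 1)) := by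
  obtain ⟨x₁, hx₁⟩ := hneg
  obtain ⟨u, hu_pos, hu_int⟩ := hint
  have hcont₁ : ContinuousOn ψ₁ (Set.Ioi (0:ℝ)) := contOn_of_locLip hLip₁
  have hcont₂ : ContinuousOn ψ₂ (Set.Ioi (0:ℝ)) := contOn_of_locLip hLip₂
  obtain ⟨X, hX⟩ : ∃ X : ℝ, ∀ x ≥ X, |ψ₂ x / ψ₁ x - 1| < 1/2 := by
    have := Metric.tendsto_nhds.1 hequiv (1/2) (by norm_num)
    simpa only [Real.dist_eq, Filter.eventually_atTop] using this
  set A₀ : ℝ := max (max x₁ u) (max X 1) with hA₀def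
  have hA₀1 : 1 ≤ A₀ := le_trans (le_max_right X 1) (le_max_right _ _)
  have hA₀x₁ : x₁ ≤ A₀ := le_trans (le_max_left x₁ u) (le_max_left _ _)
  have hA₀u : u ≤ A₀ := le_trans (le_max_right x₁ u) (le_max_left _ _)
  have hA₀X : X ≤ A₀ := le_trans (le_max_left X 1) (le_max_right _ _)
  have hneg₁ : ∀ x, A₀ ≤ x → ψ₁ x < 0 := fun x hx => hx₁ x (hA₀x₁.trans hx)
  have hfacts : ∀ x, A₀ ≤ x →
      ψ₂ x < 0 ∧ (1 - 1/2) * |ψ₁ x| ≤ |ψ₂ x| ∧ |ψ₂ x| ≤ (1 + 1/2) * |ψ₁ x| :=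
    fun x hx => ratio_facts (hneg₁ x hx) (by norm_num) (by norm_num)
      (hX x (hA₀X.trans hx))
  have hneg₂ : ∀ x, A₀ ≤ x → ψ₂ x < 0 := fun x hx => (hfacts x hx).1
  have hint₁' : MeasureTheory.IntegrableOn (fun x => 1 / |ψ₁ x|) (Set.Ioi A₀) :=
    hu_int.mono_set (Set.Ioi_subset_Ioi hA₀u)
  have hint₂' : MeasureTheory.IntegrableOn (fun x => 1 / |ψ₂ x|) (Set.Ioi A₀) := by
    apply MeasureTheory.Integrable.mono' (hint₁'.const_mul 2)
    · have hco : ContinuousOn (fun x => 1 / |ψ₂ x|) (Set.Ioi A₀) :=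
        fun x hx => (f_contAt hA₀1 hcont₂ hneg₂ (le_of_lt hx)).continuousWithinAt
      exact hco.aestronglyMeasurable measurableSet_Ioi
    · rw [MeasureTheory.ae_restrict_iff' measurableSet_Ioi]
      refine Filter.Eventually.of_forall (fun x hx => ?_)
      obtain ⟨h1, h2, h3⟩ := hfacts x (le_of_lt hx)
      have hp1 : 0 < |ψ₁ x| := abs_pos.2 (ne_of_lt (hneg₁ x (le_of_lt hx)))
      have hp2 : 0 < |ψ₂ x| := abs_pos.2 (ne_of_lt h1)
      rw [Real.norm_eq_abs, abs_of_nonneg (by positivity : (0:ℝ) ≤ 1 / |ψ₂ x|)]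
      rw [show (2:ℝ) * (1 / |ψ₁ x|) = 2 / |ψ₁ x| by ring,
        div_le_div_iff₀ hp2 hp1]
      nlinarith
  refine ⟨⟨A₀, by simp only [Set.mem_Ioi]; linarith, hint₂'⟩, ?_, ?_⟩
  · -- Part 2
    refine ⟨Gfun ψ₂ (A₀ + 1),
      Gpos hA₀1 hcont₂ hneg₂ hint₂' (by linarith : A₀ ≤ A₀ + 1), ?_⟩
    rintro t ⟨ht0, htstar⟩
    constructor
    · intro M
      obtain ⟨x₀, hx₀1, hx₀2⟩ :=
        (((Gtendsto hA₀1 hcont₂ hneg₂ hint₂').eventually_lt_const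
          (show (0:ℝ) < Gfun ψ₂ (A₀ + 1) - t by linarith)).and
          (Filter.eventually_ge_atTop (max M (A₀ + 1)))).exists
      have hstay := L_stay hA₀1 hcont₂ hneg₂ hint₂' hT₂pos hinit₂ hder₂ hmax₂
        (show A₀ < A₀ + 1 by linarith) (le_trans (le_max_right _ _) hx₀2) ht0.le
        (by linarith)
      exact ⟨x₀, by simp only [Set.mem_Ioi]; linarith [le_trans (le_max_right M (A₀+1)) hx₀2],
        le_trans (le_max_left _ _) hx₀2, (hstay.1 t ⟨ht0.le, le_rfl⟩).1⟩
    · obtain ⟨B, hB1, hB2⟩ :=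
        (((Gtendsto hA₀1 hcont₂ hneg₂ hint₂').eventually_lt_const ht0).and
          (Filter.eventually_ge_atTop (A₀ + 1))).exists
      refine ⟨max (A₀ + 1) B, ?_⟩
      rintro y ⟨x₀, hx₀pos, hx₀T, rfl⟩
      exact L_upper hA₀1 hcont₂ hneg₂ hint₂' hT₂pos hinit₂ hder₂ hmax₂ ht0 hB2 hB1
        hx₀pos hx₀T
  · -- Part 3
    intro α hα c hc h₁
    rw [Metric.tendsto_nhds]
    intro η₀ hη₀
    have hηpos : 0 < min η₀ 1 := lt_min hη₀ one_pos
    set η := min η₀ 1 with hηdef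
    have hηle : η ≤ 1 := min_le_right _ _
    -- choose ε
    have htdP : Filter.Tendsto (fun e : ℝ => (1 + e) ^ (-α)) (nhds 0) (nhds 1) := by
      have h1 : ContinuousAt (fun x : ℝ => x ^ (-α)) 1 :=
        Real.continuousAt_rpow_const 1 (-α) (Or.inl one_ne_zero)
      have h2 : Filter.Tendsto (fun e : ℝ => 1 + e) (nhds 0) (nhds 1) := by
        simpa using ((continuous_const.fun_add continuous_id).tendsto (0:ℝ))
      have h3 := (h1.tendsto).comp h2
      simpa [Real.one_rpow, Function.comp_def] using h3
    have htdM : Filter.Tendsto (fun e : ℝ => (1 - e) ^ (-α)) (nhds 0) (nhds 1) := by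
      have h1 : ContinuousAt (fun x : ℝ => x ^ (-α)) 1 :=
        Real.continuousAt_rpow_const 1 (-α) (Or.inl one_ne_zero)
      have h2 : Filter.Tendsto (fun e : ℝ => 1 - e) (nhds 0) (nhds 1) := by
        simpa using ((continuous_const.fun_sub continuous_id).tendsto (0:ℝ))
      have h3 := (h1.tendsto).comp h2
      simpa [Real.one_rpow, Function.comp_def] using h3
    obtain ⟨ε, ⟨hεkP, hεkM⟩, hε0, hε12⟩ :
        ∃ ε : ℝ, (|(1 + ε) ^ (-α) - 1| < η / 4 ∧ |(1 - ε) ^ (-α) - 1| < η / 4) ∧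
          0 < ε ∧ ε < 1/2 := by
      have h1 := Metric.tendsto_nhds.1 htdP (η / 4) (by linarith)
      have h2 := Metric.tendsto_nhds.1 htdM (η / 4) (by linarith)
      have h3 : ∀ᶠ e : ℝ in nhdsWithin 0 (Set.Ioi 0), e ∈ Set.Ioo (0:ℝ) (1/2) :=
        Ioo_mem_nhdsGT (by norm_num)
      have h4 := (((h1.and h2).filter_mono nhdsWithin_le_nhds).and h3).exists
      obtain ⟨e, ⟨he1, he2⟩, he3, he4⟩ := h4
      exact ⟨e, ⟨by rwa [Real.dist_eq] at he1, by rwa [Real.dist_eq] at he2⟩, he3, he4⟩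
    -- threshold for ε-comparison
    obtain ⟨X', hX'⟩ : ∃ X' : ℝ, ∀ x ≥ X', |ψ₂ x / ψ₁ x - 1| < ε := by
      have := Metric.tendsto_nhds.1 hequiv ε hε0
      simpa only [Real.dist_eq, Filter.eventually_atTop] using this
    set A' : ℝ := max (A₀ + 1) X' with hA'def
    have hA'1 : A₀ + 1 ≤ A' := le_max_left _ _
    have hcmp : ∀ x, A' ≤ x →
        (1 - ε) * |ψ₁ x| ≤ |ψ₂ x| ∧ |ψ₂ x| ≤ (1 + ε) * |ψ₁ x| := by
      intro x hx
      have hx0 : A₀ ≤ x := by linarith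
      exact (ratio_facts (hneg₁ x hx0) hε0 (by linarith)
        (hX' x (le_trans (le_max_right _ _) hx))).2
    have hGcmp : ∀ z, A' ≤ z →
        Gfun ψ₁ z ≤ (1 + ε) * Gfun ψ₂ z ∧ (1 - ε) * Gfun ψ₂ z ≤ Gfun ψ₁ z := by
      intro z hz
      have hz0 : A₀ ≤ z := by linarith
      have hi1 : MeasureTheory.IntegrableOn (fun x => 1 / |ψ₁ x|) (Set.Ioi z) :=
        hint₁'.mono_set (Set.Ioi_subset_Ioi hz0)
      have hi2 : MeasureTheory.IntegrableOn (fun x => 1 / |ψ₂ x|) (Set.Ioi z) :=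
        hint₂'.mono_set (Set.Ioi_subset_Ioi hz0)
      have hpt : ∀ x ∈ Set.Ioi z,
          1 / |ψ₁ x| ≤ (1 + ε) * (1 / |ψ₂ x|) ∧
          (1 - ε) * (1 / |ψ₂ x|) ≤ 1 / |ψ₁ x| := by
        intro x hx
        have hxA' : A' ≤ x := le_trans hz (le_of_lt hx)
        have hxA₀ : A₀ ≤ x := by linarith
        obtain ⟨h1, h2⟩ := hcmp x hxA'
        have hp1 : 0 < |ψ₁ x| := abs_pos.2 (ne_of_lt (hneg₁ x hxA₀))
        have hp2 : 0 < |ψ₂ x| := abs_pos.2 (ne_of_lt (hneg₂ x hxA₀))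
        constructor
        · rw [show (1 + ε) * (1 / |ψ₂ x|) = (1 + ε) / |ψ₂ x| by ring,
            div_le_div_iff₀ hp1 hp2]
          nlinarith only [h1, h2, hp1, hp2, hε0]
        · rw [show (1 - ε) * (1 / |ψ₂ x|) = (1 - ε) / |ψ₂ x| by ring,
            div_le_div_iff₀ hp2 hp1]
          nlinarith only [h1, h2, hp1, hp2, hε0]
      constructor
      · have := MeasureTheory.setIntegral_mono_on hi1 (hi2.const_mul (1 + ε))
          measurableSet_Ioi (fun x hx => (hpt x hx).1)
        rwa [MeasureTheory.integral_const_mul] at this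
      · have := MeasureTheory.setIntegral_mono_on (hi2.const_mul (1 - ε)) hi1
          measurableSet_Ioi (fun x hx => (hpt x hx).2)
        rwa [MeasureTheory.integral_const_mul] at this
    -- comparison of the two limiting functions
    have hG₂A'pos : 0 < Gfun ψ₂ A' :=
      Gpos hA₀1 hcont₂ hneg₂ hint₂' (by linarith : A₀ ≤ A')
    have hG₁A'pos : 0 < Gfun ψ₁ A' :=
      Gpos hA₀1 hcont₁ hneg₁ hint₁' (by linarith : A₀ ≤ A')
    -- composed limits
    have hmulP : Filter.Tendsto (fun t : ℝ => (1 + ε) * t)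
        (nhdsWithin 0 (Set.Ioi 0)) (nhdsWithin 0 (Set.Ioi 0)) := by
      rw [tendsto_nhdsWithin_iff]
      constructor
      · have : Filter.Tendsto (fun t : ℝ => (1 + ε) * t) (nhds 0) (nhds ((1 + ε) * 0)) :=
          (continuous_const.mul continuous_id).tendsto 0
        rw [mul_zero] at this
        exact this.mono_left nhdsWithin_le_nhds
      · filter_upwards [self_mem_nhdsWithin] with t (ht : (0:ℝ) < t)
        exact mul_pos (by linarith) ht
    have hmulM : Filter.Tendsto (fun t : ℝ => (1 - ε) * t)
        (nhdsWithin 0 (Set.Ioi 0)) (nhdsWithin 0 (Set.Ioi 0)) := by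
      rw [tendsto_nhdsWithin_iff]
      constructor
      · have : Filter.Tendsto (fun t : ℝ => (1 - ε) * t) (nhds 0) (nhds ((1 - ε) * 0)) :=
          (continuous_const.mul continuous_id).tendsto 0
        rw [mul_zero] at this
        exact this.mono_left nhdsWithin_le_nhds
      · filter_upwards [self_mem_nhdsWithin] with t (ht : (0:ℝ) < t)
        exact mul_pos (by linarith) ht
    have hevP := Metric.tendsto_nhds.1 (h₁.comp hmulP) (η / 4) (by linarith)
    have hevM := Metric.tendsto_nhds.1 (h₁.comp hmulM) (η / 4) (by linarith)
    set tb : ℝ := min (Gfun ψ₂ A') (Gfun ψ₁ A' / 2) with htbdef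
    have htbpos : 0 < tb := lt_min hG₂A'pos (by linarith)
    filter_upwards [hevP, hevM, Ioo_mem_nhdsGT
      (show (0:ℝ) < tb from htbpos)] with t hrP hrM htmem
    simp only [Function.comp] at hrP hrM
    obtain ⟨ht0, httb⟩ := htmem
    have ht₂ : t < Gfun ψ₂ A' := lt_of_lt_of_le httb (min_le_left _ _)
    have ht₁ : t < Gfun ψ₁ A' / 2 := lt_of_lt_of_le httb (min_le_right _ _)
    have hS₂ := L_sup hA₀1 hcont₂ hneg₂ hint₂' hT₂pos hinit₂ hder₂ hmax₂ hA'1 ht0 ht₂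
    have hS₁P := L_sup hA₀1 hcont₁ hneg₁ hint₁' hT₁pos hinit₁ hder₁ hmax₁ hA'1
      (show 0 < (1 + ε) * t from mul_pos (by linarith) ht0)
      (show (1 + ε) * t < Gfun ψ₁ A' by nlinarith only [ht₁, ht0, hε12])
    have hS₁M := L_sup hA₀1 hcont₁ hneg₁ hint₁' hT₁pos hinit₁ hder₁ hmax₁ hA'1
      (show 0 < (1 - ε) * t from mul_pos (by linarith) ht0)
      (show (1 - ε) * t < Gfun ψ₁ A' by nlinarith only [ht₁, ht0, hε0, hG₁A'pos])
    set z₂ := sSup (flowVals T₂ φ₂ t) with hz₂def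
    set a := sSup (flowVals T₁ φ₁ ((1 + ε) * t)) with hadef
    set b := sSup (flowVals T₁ φ₁ ((1 - ε) * t)) with hbdef
    have hz₂A₀ : z₂ ∈ Set.Ici A₀ := by
      simp only [Set.mem_Ici]; linarith [hS₂.2]
    have haA₀ : a ∈ Set.Ici A₀ := by
      simp only [Set.mem_Ici]; linarith [hS₁P.2]
    have hbA₀ : b ∈ Set.Ici A₀ := by
      simp only [Set.mem_Ici]; linarith [hS₁M.2]
    have haz : a ≤ z₂ := by
      have h1 : Gfun ψ₁ z₂ ≤ (1 + ε) * t := by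
        have := (hGcmp z₂ hS₂.2.le).1
        rw [hS₂.1] at this
        exact this
      have hle : Gfun ψ₁ z₂ ≤ Gfun ψ₁ a := by rw [hS₁P.1]; exact h1
      exact ((GstrictAnti hA₀1 hcont₁ hneg₁ hint₁').le_iff_ge hz₂A₀ haA₀).1 hle
    have hzb : z₂ ≤ b := by
      have h1 : (1 - ε) * t ≤ Gfun ψ₁ z₂ := by
        have := (hGcmp z₂ hS₂.2.le).2
        rw [hS₂.1] at this
        exact this
      have hle : Gfun ψ₁ b ≤ Gfun ψ₁ z₂ := by rw [hS₁M.1]; exact h1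
      exact ((GstrictAnti hA₀1 hcont₁ hneg₁ hint₁').le_iff_ge hbA₀ hz₂A₀).1 hle
    -- ratio arithmetic
    have htrpow : 0 < t ^ (-α) := Real.rpow_pos_of_pos ht0 _
    have hden : 0 < c * t ^ (-α) := mul_pos hc htrpow
    set kP : ℝ := (1 + ε) ^ (-α) with hkPdef
    set kM : ℝ := (1 - ε) ^ (-α) with hkMdef
    have hkPpos : 0 < kP := Real.rpow_pos_of_pos (by linarith) _
    have hkMpos : 0 < kM := Real.rpow_pos_of_pos (by linarith) _
    have hsplitP : c * ((1 + ε) * t) ^ (-α) = kP * (c * t ^ (-α)) := by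
      rw [hkPdef, Real.mul_rpow (by linarith) ht0.le]; ring
    have hsplitM : c * ((1 - ε) * t) ^ (-α) = kM * (c * t ^ (-α)) := by
      rw [hkMdef, Real.mul_rpow (by linarith) ht0.le]; ring
    rw [Real.dist_eq] at hrP hrM
    set rP : ℝ := a / (c * ((1 + ε) * t) ^ (-α)) with hrPdef
    set rM : ℝ := b / (c * ((1 - ε) * t) ^ (-α)) with hrMdef
    have hexpP : a / (c * t ^ (-α)) = rP * kP := by
      rw [hrPdef, hsplitP]
      field_simp
    have hexpM : b / (c * t ^ (-α)) = rM * kM := by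
      rw [hrMdef, hsplitM]
      field_simp
    have hX1 : rP * kP ≤ z₂ / (c * t ^ (-α)) := by
      rw [← hexpP]
      gcongr
    have hX2 : z₂ / (c * t ^ (-α)) ≤ rM * kM := by
      rw [← hexpM]
      gcongr
    obtain ⟨hbP1, hbP2⟩ := abs_lt.1 hrP
    obtain ⟨hbM1, hbM2⟩ := abs_lt.1 hrM
    obtain ⟨hkP1, hkP2⟩ := abs_lt.1 hεkP
    obtain ⟨hkM1, hkM2⟩ := abs_lt.1 hεkM
    rw [Real.dist_eq]
    have hfin : |z₂ / (c * t ^ (-α)) - 1| < η := by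
      rw [abs_lt]
      have hq : (0:ℝ) < 1 - η / 4 := by linarith only [hηle, hηpos]
      have hsq : η * η ≤ η := by nlinarith only [hηpos, hηle]
      constructor
      · have h1 : 1 - η / 4 < rP := by linarith only [hbP1]
        have h2 : 1 - η / 4 < kP := by linarith only [hkP1]
        have h3 : (1 - η / 4) * (1 - η / 4) < rP * kP :=
          mul_lt_mul'' h1 h2 hq.le hq.le
        have h4 : 1 - η ≤ (1 - η / 4) * (1 - η / 4) := by
          nlinarith only [hηpos, hηle, hsq]
        linarith only [h3, h4, hX1]
      · have h1 : rP * kP ≤ z₂ / (c * t ^ (-α)) := hX1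
        have h5 : rM < 1 + η / 4 := by linarith only [hbM2]
        have h6 : kM < 1 + η / 4 := by linarith only [hkM2]
        have h7 : rM * kM < (1 + η / 4) * (1 + η / 4) := by
          have hrMpos : 0 < rM := by linarith only [hbM1, hq]
          exact mul_lt_mul'' h5 h6 hrMpos.le hkMpos.le
        have h8 : (1 + η / 4) * (1 + η / 4) ≤ 1 + η := by
          nlinarith only [hηpos, hηle, hsq]
        linarith only [h7, h8, hX2]
    exact lt_of_lt_of_le hfin (min_le_left _ _)
end
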